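/- arXiv:2408.07863 — 7 statements merged into one kernel-verified Lean document; each statement's English description precedes it below -/
import Mathlib

section
/- For every n ≥ 1 and every 1/2/3-puzzle P on Δ_n, the array 𝒯(P) is an interlacing triangular array of rank 3 and height n. -/
/-- Twice the horizontal coordinate `h(i,j,k) = i*n + j - (n+k)/2` of an entry
`T^(i)_(j,k)` of a triangular array of height `n` (doubled to stay in `ℤ`). -/
def Hc (n i j k : ℕ) : ℤ :=
  2 * ((i : ℤ) * (n : ℤ) + (j : ℤ)) - ((n : ℤ) + (k : ℤ))

/-- `T` is an interlacing triangular array of rank `m` and height `n`: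
entries `T i j k ∈ {1,…,m}` for `1 ≤ i ≤ m`, `1 ≤ j ≤ k ≤ n`;
(a) each value `a ∈ {1,…,m}` occurs exactly `k` times in row `k`;
(b) any two equal entries of row `k` have an interlacing equal entry in row `k-1`
strictly between them in horizontal coordinate. -/
def IsITA (m n : ℕ) (T : ℕ → ℕ → ℕ → ℕ) : Prop :=
  (∀ i j k, 1 ≤ i → i ≤ m → 1 ≤ j → j ≤ k → k ≤ n → T i j k ∈ Finset.Icc 1 m) ∧
  (∀ k, 1 ≤ k → k ≤ n → ∀ a ∈ Finset.Icc 1 m,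
      ((Finset.Icc 1 m ×ˢ Finset.Icc 1 k).filter (fun p => T p.1 p.2 k = a)).card = k) ∧
  (∀ k, 1 ≤ k → k ≤ n → ∀ i j i' j',
      1 ≤ i → i ≤ m → 1 ≤ j → j ≤ k → 1 ≤ i' → i' ≤ m → 1 ≤ j' → j' ≤ k →
      T i j k = T i' j' k → Hc n i j k < Hc n i' j' k →
      ∃ i'' j'', 1 ≤ i'' ∧ i'' ≤ m ∧ 1 ≤ j'' ∧ j'' ≤ k - 1 ∧
        T i'' j'' (k - 1) = T i j k ∧
        Hc n i j k < Hc n i'' j'' (k - 1) ∧ Hc n i'' j'' (k - 1) < Hc n i' j' k)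

/-- Edges of the triangular grid `Δ_n`: an edge is encoded as `(d, x, y)` with
`x + y < n`, where `d = 0` is the horizontal edge `{(x,y),(x+1,y)}`,
`d = 1` is the vertical edge `{(x,y),(x,y+1)}` (parallel to the left side), and
`d = 2` is the diagonal edge `{(x+1,y),(x,y+1)}` (parallel to the right side).
A `1/2/3`-puzzle is an edge labeling by `{1,2,3}` such that the three edges of
each upward face (`P 1 x y`, `P 2 x y`, `P 0 x y`) and of each downward face
(`P 2 x y`, `P 0 x (y+1)`, `P 1 (x+1) y`) get pairwise distinct labels. -/
def IsPuzzle123 (n : ℕ) (P : ℕ → ℕ → ℕ → ℕ) : Prop :=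
  (∀ d x y, d < 3 → x + y < n → P d x y ∈ Finset.Icc 1 3) ∧
  (∀ x y, x + y < n →
      P 1 x y ≠ P 2 x y ∧ P 1 x y ≠ P 0 x y ∧ P 2 x y ≠ P 0 x y) ∧
  (∀ x y, x + y + 1 < n →
      P 2 x y ≠ P 0 x (y + 1) ∧ P 2 x y ≠ P 1 (x + 1) y ∧ P 0 x (y + 1) ≠ P 1 (x + 1) y)

/-- The map `𝒯` from `1/2/3`-puzzles on `Δ_n` to triangular arrays: the `k`-th row
reads the boundary of the copy of `Δ_k` inside `Δ_n` clockwise from the base point: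
the left side bottom to top (`T^(1)`), the right side top to bottom (`T^(2)`),
the bottom side right to left (`T^(3)`). -/
def TofP (n : ℕ) (P : ℕ → ℕ → ℕ → ℕ) : ℕ → ℕ → ℕ → ℕ :=
  fun i j k =>
    if 1 ≤ j ∧ j ≤ k ∧ k ≤ n then
      if i = 1 then P 1 0 (j - 1)
      else if i = 2 then P 2 (j - 1) (k - j)
      else if i = 3 then P 0 (k - j) 0
      else 0
    else 0

namespace ITAProof

variable {n : ℕ} {P : ℕ → ℕ → ℕ → ℕ}

/-- Count of label `a` among the diagonal edges `P 2 y (m - y)` for `y < x`. -/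
def cnt (P : ℕ → ℕ → ℕ → ℕ) (m a x : ℕ) : ℕ :=
  ∑ y ∈ Finset.range x, (if P 2 y (m - y) = a then 1 else 0)

lemma cnt_mono (m a : ℕ) {s t : ℕ} (h : s ≤ t) : cnt P m a s ≤ cnt P m a t :=
  Finset.sum_le_sum_of_subset (Finset.range_subset_range.2 h)

lemma cnt_succ (m a x : ℕ) :
    cnt P m a (x + 1) = cnt P m a x + (if P 2 x (m - x) = a then 1 else 0) :=
  Finset.sum_range_succ _ _

lemma cnt_exists {m a s t : ℕ} (h : cnt P m a s < cnt P m a t) :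
    ∃ x, s ≤ x ∧ x < t ∧ P 2 x (m - x) = a := by
  by_contra hc
  push_neg at hc
  rcases le_or_gt t s with h' | h'
  · exact absurd (cnt_mono (P := P) m a h') (by omega)
  · have he : cnt P m a t = cnt P m a s + ∑ y ∈ Finset.Ico s t,
        (if P 2 y (m - y) = a then 1 else 0) := by
      unfold cnt
      rw [Finset.range_eq_Ico, Finset.range_eq_Ico, Finset.sum_Ico_consecutive _ (Nat.zero_le s) h'.le]
    have h0 : ∑ y ∈ Finset.Ico s t, (if P 2 y (m - y) = a then (1:ℕ) else 0) = 0 := by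
      apply Finset.sum_eq_zero
      intro y hy
      rw [Finset.mem_Ico] at hy
      simp [hc y hy.1 hy.2]
    omega

lemma exactlyOne {u v w a : ℕ} (hu1 : 1 ≤ u) (hu3 : u ≤ 3) (hv1 : 1 ≤ v) (hv3 : v ≤ 3)
    (hw1 : 1 ≤ w) (hw3 : w ≤ 3) (ha1 : 1 ≤ a) (ha3 : a ≤ 3)
    (huv : u ≠ v) (huw : u ≠ w) (hvw : v ≠ w) :
    (if u = a then 1 else 0) + (if v = a then 1 else 0) + (if w = a then 1 else 0) = 1 := by
  split_ifs <;> omega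

lemma Pmem (hP : IsPuzzle123 n P) {d x y : ℕ} (hd : d < 3) (hxy : x + y < n) :
    1 ≤ P d x y ∧ P d x y ≤ 3 := by
  have := hP.1 d x y hd hxy
  rwa [Finset.mem_Icc] at this

lemma up (hP : IsPuzzle123 n P) {m : ℕ} (hm : m < n) (a : ℕ) (ha1 : 1 ≤ a) (ha3 : a ≤ 3)
    {x : ℕ} (hx : x ≤ m) :
    (if P 1 x (m - x) = a then 1 else 0) + (if P 0 x (m - x) = a then 1 else 0)
      + (if P 2 x (m - x) = a then 1 else 0) = 1 := by
  have hxy : x + (m - x) < n := by omega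
  obtain ⟨h12, h10, h20⟩ := hP.2.1 x (m - x) hxy
  have m1 := Pmem hP (by norm_num : (1:ℕ) < 3) hxy
  have m0 := Pmem hP (by norm_num : (0:ℕ) < 3) hxy
  have m2 := Pmem hP (by norm_num : (2:ℕ) < 3) hxy
  exact exactlyOne m1.1 m1.2 m0.1 m0.2 m2.1 m2.2 ha1 ha3 h10 h12 (Ne.symm h20)

lemma down (hP : IsPuzzle123 n P) {m : ℕ} (hm : m < n) (a : ℕ) (ha1 : 1 ≤ a) (ha3 : a ≤ 3)
    {x : ℕ} (hx : x < m) :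
    (if P 2 x (m - 1 - x) = a then 1 else 0) + (if P 0 x (m - x) = a then 1 else 0)
      + (if P 1 (x + 1) (m - 1 - x) = a then 1 else 0) = 1 := by
  have hxy : x + (m - 1 - x) + 1 < n := by omega
  obtain ⟨h1, h2, h3⟩ := hP.2.2 x (m - 1 - x) hxy
  have e : m - 1 - x + 1 = m - x := by omega
  rw [e] at h1 h3
  have m2 := Pmem hP (by norm_num : (2:ℕ) < 3) (show x + (m - 1 - x) < n by omega)
  have m0 := Pmem hP (by norm_num : (0:ℕ) < 3) (show x + (m - x) < n by omega)
  have m1 := Pmem hP (by norm_num : (1:ℕ) < 3) (show (x + 1) + (m - 1 - x) < n by omega)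
  exact exactlyOne m2.1 m2.2 m0.1 m0.2 m1.1 m1.2 ha1 ha3 h1 h2 h3

/-- The key invariant along the strip of triangles between the boundaries of
`Δ_m` and `Δ_{m+1}`. -/
lemma inv (hP : IsPuzzle123 n P) {m : ℕ} (hm : m < n) (a : ℕ) (ha1 : 1 ≤ a) (ha3 : a ≤ 3) :
    ∀ x, x ≤ m →
      (if P 1 x (m - x) = a then 1 else 0) + cnt P (m - 1) a x
        = (if P 1 0 m = a then 1 else 0) + cnt P m a x := by
  intro x
  induction x with
  | zero => intro _; simp [cnt]
  | succ x ih =>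
    intro hx
    have ihx := ih (by omega)
    have hU := up hP hm a ha1 ha3 (show x ≤ m by omega)
    have hD := down hP hm a ha1 ha3 (show x < m by omega)
    have e : m - (x + 1) = m - 1 - x := by omega
    rw [e, cnt_succ, cnt_succ]
    omega

lemma stripCount (hP : IsPuzzle123 n P) {m : ℕ} (hm : m < n) (a : ℕ) (ha1 : 1 ≤ a) (ha3 : a ≤ 3) :
    (if P 1 0 m = a then 1 else 0) + cnt P m a (m + 1) + (if P 0 m 0 = a then 1 else 0)
      = cnt P (m - 1) a m + 1 := by
  have h1 := inv hP hm a ha1 ha3 m le_rfl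
  have h2 := up hP hm a ha1 ha3 (le_refl m)
  rw [Nat.sub_self] at h1 h2
  rw [cnt_succ, Nat.sub_self]
  omega

lemma dA (hP : IsPuzzle123 n P) {m : ℕ} (hm : m < n) (a : ℕ) (ha1 : 1 ≤ a) (ha3 : a ≤ 3)
    {t : ℕ} (ht : t ≤ m) (hd : P 2 t (m - t) = a) :
    cnt P (m - 1) a t = (if P 1 0 m = a then 1 else 0) + cnt P m a t := by
  have h1 := inv hP hm a ha1 ha3 t ht
  have h2 := up hP hm a ha1 ha3 ht
  rw [if_pos hd] at h2
  omega

lemma between_dd (hP : IsPuzzle123 n P) {m : ℕ} (hm : m < n) {a : ℕ} (ha1 : 1 ≤ a) (ha3 : a ≤ 3)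
    {s t : ℕ} (hst : s < t) (ht : t ≤ m)
    (hs' : P 2 s (m - s) = a) (ht' : P 2 t (m - t) = a) :
    ∃ x, s ≤ x ∧ x < t ∧ P 2 x (m - 1 - x) = a := by
  have h1 := dA hP hm a ha1 ha3 (le_trans hst.le ht) hs'
  have h2 := dA hP hm a ha1 ha3 ht ht'
  have h3 := cnt_succ (P := P) m a s
  rw [if_pos hs'] at h3
  have h4 := cnt_mono (P := P) m a (show s + 1 ≤ t by omega)
  exact cnt_exists (show cnt P (m - 1) a s < cnt P (m - 1) a t by omega)

lemma between_Ld (hP : IsPuzzle123 n P) {m : ℕ} (hm : m < n) {a : ℕ} (ha1 : 1 ≤ a) (ha3 : a ≤ 3)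
    {t : ℕ} (ht : t ≤ m) (hL : P 1 0 m = a) (ht' : P 2 t (m - t) = a) :
    ∃ x, x < t ∧ P 2 x (m - 1 - x) = a := by
  have h2 := dA hP hm a ha1 ha3 ht ht'
  rw [if_pos hL] at h2
  have h0 : cnt P (m - 1) a 0 = 0 := by simp [cnt]
  obtain ⟨x, _, hx2, hx3⟩ := cnt_exists (show cnt P (m - 1) a 0 < cnt P (m - 1) a t by omega)
  exact ⟨x, hx2, hx3⟩

lemma between_dB (hP : IsPuzzle123 n P) {m : ℕ} (hm : m < n) {a : ℕ} (ha1 : 1 ≤ a) (ha3 : a ≤ 3)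
    {s : ℕ} (hs : s ≤ m) (hs' : P 2 s (m - s) = a) (hB : P 0 m 0 = a) :
    ∃ x, s ≤ x ∧ x < m ∧ P 2 x (m - 1 - x) = a := by
  have h2 := up hP hm a ha1 ha3 (le_refl m)
  rw [Nat.sub_self, if_pos hB] at h2
  have h1 := inv hP hm a ha1 ha3 m le_rfl
  rw [Nat.sub_self] at h1
  have hsm : s < m := by
    rcases Nat.lt_or_ge s m with h | h
    · exact h
    · exfalso
      have hsem : s = m := le_antisymm hs h
      subst hsem
      rw [Nat.sub_self] at hs'
      rw [if_pos hs'] at h2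
      omega
  have hA := dA hP hm a ha1 ha3 hs hs'
  have h3 := cnt_succ (P := P) m a s
  rw [if_pos hs'] at h3
  have h4 := cnt_mono (P := P) m a (show s + 1 ≤ m by omega)
  exact cnt_exists (show cnt P (m - 1) a s < cnt P (m - 1) a m by omega)

lemma between_LB (hP : IsPuzzle123 n P) {m : ℕ} (hm : m < n) {a : ℕ} (ha1 : 1 ≤ a) (ha3 : a ≤ 3)
    (hL : P 1 0 m = a) (hB : P 0 m 0 = a) :
    ∃ x, x < m ∧ P 2 x (m - 1 - x) = a := by
  have h2 := up hP hm a ha1 ha3 (le_refl m)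
  rw [Nat.sub_self, if_pos hB] at h2
  have h1 := inv hP hm a ha1 ha3 m le_rfl
  rw [Nat.sub_self, if_pos hL] at h1
  have h0 : cnt P (m - 1) a 0 = 0 := by simp [cnt]
  obtain ⟨x, _, hx2, hx3⟩ := cnt_exists (show cnt P (m - 1) a 0 < cnt P (m - 1) a m by omega)
  exact ⟨x, hx2, hx3⟩

lemma TofP_one {j k : ℕ} (hj1 : 1 ≤ j) (hjk : j ≤ k) (hkn : k ≤ n) :
    TofP n P 1 j k = P 1 0 (j - 1) := by simp [TofP, hj1, hjk, hkn]

lemma TofP_two {j k : ℕ} (hj1 : 1 ≤ j) (hjk : j ≤ k) (hkn : k ≤ n) :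
    TofP n P 2 j k = P 2 (j - 1) (k - j) := by simp [TofP, hj1, hjk, hkn]

lemma TofP_three {j k : ℕ} (hj1 : 1 ≤ j) (hjk : j ≤ k) (hkn : k ≤ n) :
    TofP n P 3 j k = P 0 (k - j) 0 := by simp [TofP, hj1, hjk, hkn]

lemma TofP_range (hP : IsPuzzle123 n P) {i j k : ℕ} (hi1 : 1 ≤ i) (hi3 : i ≤ 3)
    (hj1 : 1 ≤ j) (hjk : j ≤ k) (hkn : k ≤ n) :
    1 ≤ TofP n P i j k ∧ TofP n P i j k ≤ 3 := by
  interval_cases i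
  · rw [TofP_one hj1 hjk hkn]
    exact Pmem hP (by norm_num) (by omega)
  · rw [TofP_two hj1 hjk hkn]
    exact Pmem hP (by norm_num) (by omega)
  · rw [TofP_three hj1 hjk hkn]
    exact Pmem hP (by norm_num) (by omega)

lemma rowCard {k a : ℕ} (hk1 : 1 ≤ k) (hkn : k ≤ n) :
    ((Finset.Icc 1 3 ×ˢ Finset.Icc 1 k).filter (fun p => TofP n P p.1 p.2 k = a)).card
      = (∑ x ∈ Finset.range k, if P 1 0 x = a then 1 else 0)
        + cnt P (k - 1) a k
        + (∑ x ∈ Finset.range k, if P 0 x 0 = a then 1 else 0) := by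
  rw [Finset.card_filter]
  rw [Finset.sum_product]
  have h3 : (Finset.Icc 1 3 : Finset ℕ) = {1, 2, 3} := by decide
  rw [h3, Finset.sum_insert (by decide), Finset.sum_insert (by decide), Finset.sum_singleton]
  have e1 : ∑ j ∈ Finset.Icc 1 k, (if TofP n P 1 j k = a then (1:ℕ) else 0)
      = ∑ x ∈ Finset.range k, (if P 1 0 x = a then 1 else 0) := by
    rw [← Finset.Ico_add_one_right_eq_Icc, Finset.sum_Ico_eq_sum_range]
    try simp only [Nat.add_sub_cancel]
    apply Finset.sum_congr rfl
    intro x hx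
    rw [Finset.mem_range] at hx
    rw [TofP_one (by omega) (by omega) hkn, show 1 + x - 1 = x from by omega]
  have e2 : ∑ j ∈ Finset.Icc 1 k, (if TofP n P 2 j k = a then (1:ℕ) else 0)
      = cnt P (k - 1) a k := by
    rw [← Finset.Ico_add_one_right_eq_Icc, Finset.sum_Ico_eq_sum_range]
    try simp only [Nat.add_sub_cancel]
    unfold cnt
    apply Finset.sum_congr rfl
    intro x hx
    rw [Finset.mem_range] at hx
    rw [TofP_two (by omega) (by omega) hkn, show 1 + x - 1 = x from by omega,
      show k - (1 + x) = k - 1 - x from by omega]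
  have e3 : ∑ j ∈ Finset.Icc 1 k, (if TofP n P 3 j k = a then (1:ℕ) else 0)
      = ∑ x ∈ Finset.range k, (if P 0 x 0 = a then 1 else 0) := by
    rw [← Finset.Ico_add_one_right_eq_Icc, Finset.sum_Ico_eq_sum_range]
    try simp only [Nat.add_sub_cancel]
    rw [← Finset.sum_range_reflect (fun x => if P 0 x 0 = a then (1:ℕ) else 0) k]
    apply Finset.sum_congr rfl
    intro x hx
    rw [Finset.mem_range] at hx
    rw [TofP_three (by omega) (by omega) hkn, show k - (1 + x) = k - 1 - x from by omega]
  rw [e1, e2, e3]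
  omega

lemma rowTotal (hP : IsPuzzle123 n P) (a : ℕ) (ha1 : 1 ≤ a) (ha3 : a ≤ 3) :
    ∀ k, 1 ≤ k → k ≤ n →
      (∑ x ∈ Finset.range k, if P 1 0 x = a then 1 else 0)
        + cnt P (k - 1) a k
        + (∑ x ∈ Finset.range k, if P 0 x 0 = a then 1 else 0) = k := by
  intro k
  induction k with
  | zero => intro h; exact absurd h (by omega)
  | succ p ih =>
    intro _ hn'
    rcases Nat.eq_zero_or_pos p with rfl | hp
    · have h := up hP (show 0 < n by omega) a ha1 ha3 (le_refl 0)
      rw [Nat.sub_self] at h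
      simp only [cnt, Finset.sum_range_one, Nat.zero_add, Nat.sub_self, Nat.zero_sub]
      omega
    · have ihp := ih (by omega) (by omega)
      have hs := stripCount hP (show p < n by omega) a ha1 ha3
      rw [Finset.sum_range_succ, Finset.sum_range_succ (fun x => if P 0 x 0 = a then (1:ℕ) else 0)]
      simp only [Nat.add_sub_cancel]
      omega

end ITAProof

lemma hc2' (A B C : ℤ) (h : 2 * A - C < 2 * B - C) : 2 * A - C + 2 ≤ 2 * B - C := by omega

/-- For every `n ≥ 1` and every `1/2/3`-puzzle `P` on `Δ_n`, the array `𝒯(P)` is an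
interlacing triangular array of rank `3` and height `n`. -/
theorem TofP_isITA (n : ℕ) (hn : 1 ≤ n) (P : ℕ → ℕ → ℕ → ℕ)
    (hP : IsPuzzle123 n P) : IsITA 3 n (TofP n P) := by
  refine ⟨?_, ?_, ?_⟩
  · intro i j k hi1 hi3 hj1 hjk hkn
    rw [Finset.mem_Icc]
    exact ITAProof.TofP_range hP hi1 hi3 hj1 hjk hkn
  · intro k hk1 hkn a ha
    rw [Finset.mem_Icc] at ha
    rw [ITAProof.rowCard hk1 hkn]
    exact ITAProof.rowTotal hP a ha.1 ha.2 k hk1 hkn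
  · intro k hk1 hkn i j i' j' hi1 hi3 hj1 hjk hi'1 hi'3 hj'1 hj'k hT hH
    obtain ⟨m, rfl⟩ : ∃ m, k = m + 1 := ⟨k - 1, by omega⟩
    have hmn : m < n := by omega
    have ha := ITAProof.TofP_range hP hi1 hi3 hj1 hjk hkn
    have hpar : Hc n i j (m + 1) + 2 ≤ Hc n i' j' (m + 1) := by
      unfold Hc at hH ⊢
      exact hc2' _ _ _ hH
    simp only [Nat.add_sub_cancel]
    by_cases hA : i = 1 ∧ j ≤ m
    · obtain ⟨rfl, hjm⟩ := hA
      refine ⟨1, j, le_refl 1, by norm_num, hj1, hjm, ?_, ?_, ?_⟩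
      · rw [ITAProof.TofP_one hj1 hjm (by omega), ITAProof.TofP_one hj1 hjk hkn]
      · unfold Hc; push_cast; omega
      · have h3 : Hc n 1 j m = Hc n 1 j (m + 1) + 1 := by unfold Hc; push_cast; omega
        omega
    by_cases hB : i' = 3 ∧ 2 ≤ j'
    · obtain ⟨rfl, hj'2⟩ := hB
      refine ⟨3, j' - 1, by norm_num, le_refl 3, by omega, by omega, ?_, ?_, ?_⟩
      · rw [hT, ITAProof.TofP_three (by omega) (by omega) (by omega),
          ITAProof.TofP_three hj'1 hj'k hkn, show m - (j' - 1) = m + 1 - j' from by omega]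
      · have h3 : Hc n 3 (j' - 1) m = Hc n 3 j' (m + 1) - 1 := by
          unfold Hc
          have : ((j' - 1 : ℕ) : ℤ) = (j' : ℤ) - 1 := by omega
          rw [this]; push_cast; ring_nf
        omega
      · have h3 : Hc n 3 (j' - 1) m = Hc n 3 j' (m + 1) - 1 := by
          unfold Hc
          have : ((j' - 1 : ℕ) : ℤ) = (j' : ℤ) - 1 := by omega
          rw [this]; push_cast; ring_nf
        have h4 : Hc n 3 j' (m + 1) - 1 < Hc n 3 j' (m + 1) := by omega
        omega
    push_neg at hA hB
    interval_cases i <;> interval_cases i'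
    · -- i = 1, i' = 1
      exfalso
      have := hA rfl
      unfold Hc at hH; push_cast at hH; omega
    · -- i = 1, i' = 2
      have hj : j = m + 1 := by have := hA rfl; omega
      subst hj
      have hL : P 1 0 m = TofP n P 1 (m + 1) (m + 1) := by
        rw [ITAProof.TofP_one (by omega) le_rfl hkn]
        norm_num
      have hd : P 2 (j' - 1) (m - (j' - 1)) = TofP n P 1 (m + 1) (m + 1) := by
        rw [hT, ITAProof.TofP_two hj'1 hj'k hkn,
          show m - (j' - 1) = m + 1 - j' from by omega]
      obtain ⟨x, hx, hc⟩ := ITAProof.between_Ld hP hmn ha.1 ha.2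
        (show j' - 1 ≤ m by omega) hL hd
      refine ⟨2, x + 1, by norm_num, by norm_num, by omega, by omega, ?_, ?_, ?_⟩
      · rw [ITAProof.TofP_two (by omega) (by omega) (by omega)]
        simp only [Nat.add_sub_cancel]
        rw [show m - (x + 1) = m - 1 - x from by omega]
        exact hc
      · unfold Hc; push_cast; omega
      · unfold Hc; push_cast; omega
    · -- i = 1, i' = 3
      have hj : j = m + 1 := by have := hA rfl; omega
      subst hj
      have hj' : j' = 1 := by have := hB rfl; omega
      subst hj'
      have hL : P 1 0 m = TofP n P 1 (m + 1) (m + 1) := by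
        rw [ITAProof.TofP_one (by omega) le_rfl hkn]
        norm_num
      have hBv : P 0 m 0 = TofP n P 1 (m + 1) (m + 1) := by
        rw [hT, ITAProof.TofP_three (le_refl 1) (by omega) hkn]
        norm_num
      obtain ⟨x, hx, hc⟩ := ITAProof.between_LB hP hmn ha.1 ha.2 hL hBv
      refine ⟨2, x + 1, by norm_num, by norm_num, by omega, by omega, ?_, ?_, ?_⟩
      · rw [ITAProof.TofP_two (by omega) (by omega) (by omega)]
        simp only [Nat.add_sub_cancel]
        rw [show m - (x + 1) = m - 1 - x from by omega]
        exact hc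
      · unfold Hc; push_cast; omega
      · unfold Hc; push_cast; omega
    · -- i = 2, i' = 1
      exfalso; unfold Hc at hH; push_cast at hH; omega
    · -- i = 2, i' = 2
      have hjj' : j < j' := by unfold Hc at hH; push_cast at hH; omega
      have hd1 : P 2 (j - 1) (m - (j - 1)) = TofP n P 2 j (m + 1) := by
        rw [ITAProof.TofP_two hj1 hjk hkn, show m - (j - 1) = m + 1 - j from by omega]
      have hd2 : P 2 (j' - 1) (m - (j' - 1)) = TofP n P 2 j (m + 1) := by
        rw [hT, ITAProof.TofP_two hj'1 hj'k hkn,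
          show m - (j' - 1) = m + 1 - j' from by omega]
      obtain ⟨x, hx1, hx2, hc⟩ := ITAProof.between_dd hP hmn ha.1 ha.2
        (show j - 1 < j' - 1 by omega) (show j' - 1 ≤ m by omega) hd1 hd2
      refine ⟨2, x + 1, by norm_num, by norm_num, by omega, by omega, ?_, ?_, ?_⟩
      · rw [ITAProof.TofP_two (by omega) (by omega) (by omega)]
        simp only [Nat.add_sub_cancel]
        rw [show m - (x + 1) = m - 1 - x from by omega]
        exact hc
      · unfold Hc; push_cast; omega
      · unfold Hc; push_cast; omega
    · -- i = 2, i' = 3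
      have hj' : j' = 1 := by have := hB rfl; omega
      subst hj'
      have hd1 : P 2 (j - 1) (m - (j - 1)) = TofP n P 2 j (m + 1) := by
        rw [ITAProof.TofP_two hj1 hjk hkn, show m - (j - 1) = m + 1 - j from by omega]
      have hBv : P 0 m 0 = TofP n P 2 j (m + 1) := by
        rw [hT, ITAProof.TofP_three (le_refl 1) (by omega) hkn]
        norm_num
      obtain ⟨x, hx1, hx2, hc⟩ := ITAProof.between_dB hP hmn ha.1 ha.2
        (show j - 1 ≤ m by omega) hd1 hBv
      refine ⟨2, x + 1, by norm_num, by norm_num, by omega, by omega, ?_, ?_, ?_⟩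
      · rw [ITAProof.TofP_two (by omega) (by omega) (by omega)]
        simp only [Nat.add_sub_cancel]
        rw [show m - (x + 1) = m - 1 - x from by omega]
        exact hc
      · unfold Hc; push_cast; omega
      · unfold Hc; push_cast; omega
    · -- i = 3, i' = 1
      exfalso; unfold Hc at hH; push_cast at hH; omega
    · -- i = 3, i' = 2
      exfalso; unfold Hc at hH; push_cast at hH; omega
    · -- i = 3, i' = 3
      exfalso
      have := hB rfl
      unfold Hc at hH; push_cast at hH; omega
end

section
/- Let k ≥ 1 and suppose the tuples a = (a_0,a_1,…,a_{k+1}) ∈ {1,2,3}^{k+2} and b = (b_1,…,b_{k−1}) ∈ {1,2,3}^{k−1} are interlacing. Then there exists a unique labeling of the 2k−2 internal slanted edges of the one-row triangular strip of length k by {1,2,3}, where the boundary is labeled so that the upper edges carry a_1,…,a_k, the left and right outer slanted edges carry a_0 and a_{k+1}, and the lower edges carry b_1,…,b_{k−1}, such that the three edges of every one of the 2k−1 triangular faces receive three pairwise distinct labels. -/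
/-- The tuples `(a 0, …, a (k+1))` and `(b 1, …, b (k-1))`, with entries in `{1,2,3}`,
are interlacing: for each value `i ∈ {1,2,3}`, `a` contains exactly one more
occurrence of `i` than `b`, and between any two consecutive occurrences of `i` in `a`,
at positions `p < q`, there is an occurrence `b r = i` with `p ≤ r < q`.
(Equivalently, the occurrence positions `j_0 < ⋯ < j_m` of `i` in `a` and
`k_1 < ⋯ < k_m` in `b` satisfy `j_0 ≤ k_1 < j_1 ≤ k_2 < ⋯ ≤ k_m < j_m`.) -/
def InterlacingAB (k : ℕ) (a b : ℕ → ℕ) : Prop :=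
  ∀ i ∈ Finset.Icc 1 3,
    (((Finset.range (k + 2)).filter (fun p => a p = i)).card
        = ((Finset.Icc 1 (k - 1)).filter (fun p => b p = i)).card + 1) ∧
    (∀ p q, p < q → q ≤ k + 1 → a p = i → a q = i →
        (∀ r, p < r → r < q → a r ≠ i) →
        ∃ r, 1 ≤ r ∧ r ≤ k - 1 ∧ p ≤ r ∧ r < q ∧ b r = i)



/-- position sequence of slanted even edges -/
def gSeq (a b : ℕ → ℕ) : ℕ → ℕ
  | 0 => a 0
  | t + 1 => 6 - b (t + 1) - (6 - a (t + 1) - gSeq a b t)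

def Acnt (a : ℕ → ℕ) (i t : ℕ) : ℕ := ((Finset.Icc 0 t).filter (fun p => a p = i)).card
def Bcnt (b : ℕ → ℕ) (i t : ℕ) : ℕ := ((Finset.Icc 1 t).filter (fun r => b r = i)).card

lemma Acnt_zero (a : ℕ → ℕ) (i : ℕ) : Acnt a i 0 = if a 0 = i then 1 else 0 := by
  unfold Acnt
  rw [show Finset.Icc 0 0 = {0} from rfl, Finset.filter_singleton]
  split <;> simp

lemma Bcnt_zero (b : ℕ → ℕ) (i : ℕ) : Bcnt b i 0 = 0 := by
  unfold Bcnt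
  simp

lemma Acnt_succ (a : ℕ → ℕ) (i t : ℕ) :
    Acnt a i (t + 1) = Acnt a i t + if a (t + 1) = i then 1 else 0 := by
  unfold Acnt
  rw [show Finset.Icc 0 (t + 1) = insert (t + 1) (Finset.Icc 0 t) by
      ext x; simp [Finset.mem_Icc]; omega, Finset.filter_insert]
  split
  · rw [Finset.card_insert_of_notMem]
    intro hm
    simp only [Finset.mem_filter, Finset.mem_Icc] at hm
    omega
  · omega

lemma Bcnt_succ (b : ℕ → ℕ) (i t : ℕ) :
    Bcnt b i (t + 1) = Bcnt b i t + if b (t + 1) = i then 1 else 0 := by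
  unfold Bcnt
  rw [show Finset.Icc 1 (t + 1) = insert (t + 1) (Finset.Icc 1 t) by
      ext x; simp [Finset.mem_Icc]; omega, Finset.filter_insert]
  split
  · rw [Finset.card_insert_of_notMem]
    intro hm
    simp only [Finset.mem_filter, Finset.mem_Icc] at hm
    omega
  · omega

lemma card_filter_split (P : ℕ → Prop) [DecidablePred P] (u s t : ℕ) (h1 : u ≤ s + 1) (h2 : s ≤ t) :
    ((Finset.Icc u t).filter P).card
      = ((Finset.Icc u s).filter P).card + ((Finset.Icc (s + 1) t).filter P).card := by
  have hu : Finset.Icc u t = Finset.Icc u s ∪ Finset.Icc (s + 1) t := by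
    ext x; simp [Finset.mem_Icc, Finset.mem_union]; omega
  rw [hu, Finset.filter_union, Finset.card_union_of_disjoint]
  refine Finset.disjoint_left.2 ?_
  intro x hx hx'
  simp only [Finset.mem_filter, Finset.mem_Icc] at hx hx'
  omega

lemma key_window (k : ℕ) (a b : ℕ → ℕ) (hab : InterlacingAB k a b)
    (i : ℕ) (hi : i ∈ Finset.Icc 1 3) (s t : ℕ) (ht : t ≤ k + 1) :
    ((Finset.Icc s t).filter (fun p => a p = i)).card ≤
      ((Finset.Icc 1 (k - 1)).filter (fun r => b r = i ∧ s ≤ r ∧ r < t)).card + 1 := by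
  classical
  set S := (Finset.Icc s t).filter (fun p => a p = i) with hSdef
  set T := (Finset.Icc 1 (k - 1)).filter (fun r => b r = i ∧ s ≤ r ∧ r < t) with hTdef
  rcases S.eq_empty_or_nonempty with h | hne
  · simp [h]
  have hp0S : S.min' hne ∈ S := S.min'_mem hne
  set p0 := S.min' hne with hp0def
  have hp0min : ∀ q ∈ S, p0 ≤ q := fun q hq => S.min'_le q hq
  have hprev : ∀ q, ∃ r, q ∈ S.erase p0 →
      r ∈ T ∧ (∀ p ∈ S, p < q → p ≤ r) ∧ r < q := by
    intro q
    by_cases hq : q ∈ S.erase p0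
    swap
    · exact ⟨0, fun h => absurd h hq⟩
    have hqS : q ∈ S := Finset.mem_of_mem_erase hq
    have hqne : q ≠ p0 := Finset.ne_of_mem_erase hq
    have hp0lt : p0 < q := lt_of_le_of_ne (hp0min q hqS) (Ne.symm hqne)
    have hNE : (S.filter (· < q)).Nonempty := ⟨p0, Finset.mem_filter.2 ⟨hp0S, hp0lt⟩⟩
    set p := (S.filter (· < q)).max' hNE with hpdef
    have hpmem := (S.filter (· < q)).max'_mem hNE
    rw [Finset.mem_filter] at hpmem
    obtain ⟨hpS, hplt⟩ := hpmem
    have hap : a p = i := (Finset.mem_filter.1 hpS).2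
    have haq : a q = i := (Finset.mem_filter.1 hqS).2
    have hqt : q ≤ t := (Finset.mem_Icc.1 (Finset.mem_filter.1 hqS).1).2
    have hps : s ≤ p := (Finset.mem_Icc.1 (Finset.mem_filter.1 hpS).1).1
    have hgap : ∀ r, p < r → r < q → a r ≠ i := by
      intro r h1 h2 har
      have hrS : r ∈ S := Finset.mem_filter.2
        ⟨Finset.mem_Icc.2 ⟨le_trans hps (le_of_lt h1), le_trans (le_of_lt h2) hqt⟩, har⟩
      have : r ≤ (S.filter (· < q)).max' hNE :=
        Finset.le_max' (S.filter (· < q)) r (Finset.mem_filter.2 ⟨hrS, h2⟩)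
      omega
    obtain ⟨r, hr1, hr2, hr3, hr4, hr5⟩ :=
      (hab i hi).2 p q hplt (le_trans hqt ht) hap haq hgap
    refine ⟨r, fun _ => ⟨?_, ?_, hr4⟩⟩
    · exact Finset.mem_filter.2 ⟨Finset.mem_Icc.2 ⟨hr1, hr2⟩, hr5, le_trans hps hr3,
        lt_of_lt_of_le hr4 hqt⟩
    · intro p' hp'S hp'q
      have : p' ≤ (S.filter (· < q)).max' hNE :=
        Finset.le_max' (S.filter (· < q)) p' (Finset.mem_filter.2 ⟨hp'S, hp'q⟩)
      omega
  choose f hf using hprev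
  have hcard : (S.erase p0).card ≤ T.card := by
    apply Finset.card_le_card_of_injOn f (fun q hq => (hf q hq).1)
    intro q hq q' hq' heq
    simp only [Finset.coe_erase, Set.mem_diff, Finset.mem_coe] at hq hq'
    have hq2 : q ∈ S.erase p0 := Finset.mem_erase.2 ⟨by simpa using hq.2, hq.1⟩
    have hq'2 : q' ∈ S.erase p0 := Finset.mem_erase.2 ⟨by simpa using hq'.2, hq'.1⟩
    by_contra hne'
    rcases lt_or_gt_of_ne hne' with h | h
    · have h1 : f q < q := (hf q hq2).2.2
      have h2 : q ≤ f q' := (hf q' hq'2).2.1 q (Finset.mem_of_mem_erase hq2) h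
      omega
    · have h1 : f q' < q' := (hf q' hq'2).2.2
      have h2 : q' ≤ f q := (hf q hq2).2.1 q' (Finset.mem_of_mem_erase hq'2) h
      omega
  have h1 : (S.erase p0).card = S.card - 1 := Finset.card_erase_of_mem hp0S
  have h2 : 1 ≤ S.card := Finset.card_pos.2 hne
  omega

lemma factF3 (k : ℕ) (a b : ℕ → ℕ) (hab : InterlacingAB k a b)
    (i : ℕ) (hi : i ∈ Finset.Icc 1 3) : Acnt a i (k + 1) = Bcnt b i (k - 1) + 1 := by
  have h := (hab i hi).1
  have hr : Finset.range (k + 2) = Finset.Icc 0 (k + 1) := by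
    ext x; simp [Finset.mem_range, Finset.mem_Icc]; omega
  rw [hr] at h
  exact h

lemma factF1 (k : ℕ) (a b : ℕ → ℕ) (hab : InterlacingAB k a b)
    (i : ℕ) (hi : i ∈ Finset.Icc 1 3) (t : ℕ) (h1 : 1 ≤ t) (h2 : t ≤ k) :
    Acnt a i t ≤ Bcnt b i (t - 1) + 1 := by
  have hkey := key_window k a b hab i hi 0 t (by omega)
  have hT : (Finset.Icc 1 (k - 1)).filter (fun r => b r = i ∧ 0 ≤ r ∧ r < t)
      = (Finset.Icc 1 (t - 1)).filter (fun r => b r = i) := by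
    ext r
    simp only [Finset.mem_filter, Finset.mem_Icc]
    constructor
    · rintro ⟨⟨hr1, hr2⟩, hbi, _, hrt⟩; exact ⟨⟨hr1, by omega⟩, hbi⟩
    · rintro ⟨⟨hr1, hr2⟩, hbi⟩; exact ⟨⟨hr1, by omega⟩, hbi, by omega, by omega⟩
  rw [hT] at hkey
  exact hkey

lemma factF2 (k : ℕ) (a b : ℕ → ℕ) (hk : 1 ≤ k) (hab : InterlacingAB k a b)
    (i : ℕ) (hi : i ∈ Finset.Icc 1 3) (t : ℕ) (h2 : t ≤ k - 1) :
    Bcnt b i t ≤ Acnt a i t := by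
  have hkey := key_window k a b hab i hi (t + 1) (k + 1) le_rfl
  have hsplitA := card_filter_split (fun p => a p = i) 0 t (k + 1) (by omega) (by omega)
  have hsplitB := card_filter_split (fun r => b r = i) 1 t (k - 1) (by omega) (by omega)
  have hT : (Finset.Icc 1 (k - 1)).filter (fun r => b r = i ∧ t + 1 ≤ r ∧ r < k + 1)
      = (Finset.Icc (t + 1) (k - 1)).filter (fun r => b r = i) := by
    ext r
    simp only [Finset.mem_filter, Finset.mem_Icc]
    constructor
    · rintro ⟨⟨hr1, hr2⟩, hbi, hr3, _⟩; exact ⟨⟨hr3, hr2⟩, hbi⟩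
    · rintro ⟨⟨hr1, hr2⟩, hbi⟩; exact ⟨⟨by omega, hr2⟩, hbi, hr1, by omega⟩
  rw [hT] at hkey
  have hcnt := factF3 k a b hab i hi
  unfold Acnt Bcnt at *
  omega

lemma gSeq_succ (a b : ℕ → ℕ) (t : ℕ) (h : 1 ≤ t) :
    gSeq a b t = 6 - b t - (6 - a t - gSeq a b (t - 1)) := by
  obtain ⟨u, rfl⟩ : ∃ u, t = u + 1 := ⟨t - 1, by omega⟩
  simp [gSeq]

lemma invariant (k : ℕ) (hk : 1 ≤ k) (a b : ℕ → ℕ)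
    (ha : ∀ p, p ≤ k + 1 → a p ∈ Finset.Icc 1 3)
    (hb : ∀ p, 1 ≤ p → p ≤ k - 1 → b p ∈ Finset.Icc 1 3)
    (hab : InterlacingAB k a b) :
    ∀ t, t ≤ k - 1 →
      gSeq a b t ∈ Finset.Icc 1 3 ∧
      ∀ i ∈ Finset.Icc 1 3, Acnt a i t = Bcnt b i t + (if gSeq a b t = i then 1 else 0) := by
  intro t
  induction t with
  | zero =>
    intro _
    refine ⟨by simpa [gSeq] using ha 0 (by omega), ?_⟩
    intro i hi
    rw [Acnt_zero, Bcnt_zero]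
    simp [gSeq]
    rfl
  | succ t ih =>
    intro ht1
    obtain ⟨hg3, hinv⟩ := ih (by omega)
    have hgt := Finset.mem_Icc.1 hg3
    have hat := Finset.mem_Icc.1 (ha (t + 1) (by omega))
    have hbt := Finset.mem_Icc.1 (hb (t + 1) (by omega) (by omega))
    have hane : a (t + 1) ≠ gSeq a b t := by
      intro heq
      have h1 := factF1 k a b hab (a (t + 1)) (Finset.mem_Icc.2 hat) (t + 1) (by omega) (by omega)
      have h2 := Acnt_succ a (a (t + 1)) t
      rw [if_pos rfl] at h2
      have h3 := hinv (a (t + 1)) (Finset.mem_Icc.2 hat)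
      rw [if_pos heq.symm] at h3
      rw [show t + 1 - 1 = t from rfl] at h1
      omega
    have hgnext : gSeq a b (t + 1) = 6 - b (t + 1) - (6 - a (t + 1) - gSeq a b t) := by
      simp [gSeq]
    have hbne : b (t + 1) ≠ 6 - a (t + 1) - gSeq a b t := by
      intro heq
      have h1 := factF2 k a b hk hab (b (t + 1)) (Finset.mem_Icc.2 hbt) (t + 1) ht1
      have h2 := Bcnt_succ b (b (t + 1)) t
      rw [if_pos rfl] at h2
      have h3 := Acnt_succ a (b (t + 1)) t
      have h4 := hinv (b (t + 1)) (Finset.mem_Icc.2 hbt)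
      split_ifs at h3 h4 <;> omega
    constructor
    · rw [hgnext]
      refine Finset.mem_Icc.2 ?_
      omega
    · intro i hi
      have hii := Finset.mem_Icc.1 hi
      have h3 := hinv i hi
      have h2 := Acnt_succ a i t
      have h4 := Bcnt_succ b i t
      rw [hgnext]
      split_ifs at h2 h3 h4 ⊢ <;> omega

lemma up_ne (k : ℕ) (hk : 1 ≤ k) (a b : ℕ → ℕ)
    (ha : ∀ p, p ≤ k + 1 → a p ∈ Finset.Icc 1 3)
    (hb : ∀ p, 1 ≤ p → p ≤ k - 1 → b p ∈ Finset.Icc 1 3)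
    (hab : InterlacingAB k a b) :
    ∀ t, 1 ≤ t → t ≤ k → a t ≠ gSeq a b (t - 1) := by
  intro t h1 h2 heq
  obtain ⟨hg3, hinv⟩ := invariant k hk a b ha hb hab (t - 1) (by omega)
  have hF := factF1 k a b hab (a t) (ha t (by omega)) t h1 h2
  have h2' := Acnt_succ a (a t) (t - 1)
  rw [show t - 1 + 1 = t by omega] at h2'
  rw [if_pos rfl] at h2'
  have h3 := hinv (a t) (ha t (by omega))
  rw [if_pos heq.symm] at h3
  omega

lemma down_ne (k : ℕ) (hk : 1 ≤ k) (a b : ℕ → ℕ)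
    (ha : ∀ p, p ≤ k + 1 → a p ∈ Finset.Icc 1 3)
    (hb : ∀ p, 1 ≤ p → p ≤ k - 1 → b p ∈ Finset.Icc 1 3)
    (hab : InterlacingAB k a b) :
    ∀ t, 1 ≤ t → t ≤ k - 1 → b t ≠ 6 - a t - gSeq a b (t - 1) := by
  intro t h1 h2 heq
  obtain ⟨hg3, hinv⟩ := invariant k hk a b ha hb hab (t - 1) (by omega)
  have hgt := Finset.mem_Icc.1 hg3
  have hat := Finset.mem_Icc.1 (ha t (by omega))
  have hbt := Finset.mem_Icc.1 (hb t h1 h2)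
  have hane := up_ne k hk a b ha hb hab t h1 (by omega)
  have hF := factF2 k a b hk hab (b t) (hb t h1 h2) t h2
  have hBs := Bcnt_succ b (b t) (t - 1)
  rw [show t - 1 + 1 = t by omega, if_pos rfl] at hBs
  have hAs := Acnt_succ a (b t) (t - 1)
  rw [show t - 1 + 1 = t by omega] at hAs
  have h4 := hinv (b t) (hb t h1 h2)
  split_ifs at hAs h4 <;> omega

lemma final_eq (k : ℕ) (hk : 1 ≤ k) (a b : ℕ → ℕ)
    (ha : ∀ p, p ≤ k + 1 → a p ∈ Finset.Icc 1 3)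
    (hb : ∀ p, 1 ≤ p → p ≤ k - 1 → b p ∈ Finset.Icc 1 3)
    (hab : InterlacingAB k a b) :
    a (k + 1) = 6 - a k - gSeq a b (k - 1) := by
  obtain ⟨hg3, hinv⟩ := invariant k hk a b ha hb hab (k - 1) le_rfl
  have hgt := Finset.mem_Icc.1 hg3
  have hak := Finset.mem_Icc.1 (ha k (by omega))
  have hak1 := Finset.mem_Icc.1 (ha (k + 1) (by omega))
  have hane := up_ne k hk a b ha hb hab k hk le_rfl
  have hF := factF3 k a b hab (a (k + 1)) (ha (k + 1) (by omega))
  have hs1 := Acnt_succ a (a (k + 1)) k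
  rw [if_pos rfl] at hs1
  have hs2 := Acnt_succ a (a (k + 1)) (k - 1)
  rw [show k - 1 + 1 = k by omega] at hs2
  have h4 := hinv (a (k + 1)) (ha (k + 1) (by omega))
  split_ifs at hs2 h4 <;> omega

def eDef (k : ℕ) (a b : ℕ → ℕ) : ℕ → ℕ := fun n =>
  if n % 2 = 0 then (if n / 2 ≤ k - 1 then gSeq a b (n / 2) else 0)
  else (if (n + 1) / 2 ≤ k then 6 - a ((n + 1) / 2) - gSeq a b ((n + 1) / 2 - 1) else 0)

lemma eDef_even (k : ℕ) (a b : ℕ → ℕ) (t : ℕ) (h : t ≤ k - 1) :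
    eDef k a b (2 * t) = gSeq a b t := by
  have h1 : (2 * t) % 2 = 0 := by omega
  have h2 : 2 * t / 2 = t := by omega
  simp [eDef, h1, h2, h]

lemma eDef_odd (k : ℕ) (a b : ℕ → ℕ) (t : ℕ) (h1 : 1 ≤ t) (h2 : t ≤ k) :
    eDef k a b (2 * t - 1) = 6 - a t - gSeq a b (t - 1) := by
  have h3 : ¬ ((2 * t - 1) % 2 = 0) := by omega
  have h4 : (2 * t - 1 + 1) / 2 = t := by omega
  simp [eDef, h3, h4, h2]

lemma eDef_zero (k : ℕ) (hk : 1 ≤ k) (a b : ℕ → ℕ) (n : ℕ) (h : 2 * k - 1 < n) :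
    eDef k a b n = 0 := by
  unfold eDef
  by_cases hp : n % 2 = 0
  · rw [if_pos hp, if_neg (by omega)]
  · rw [if_neg hp, if_neg (by omega)]


/-- If `(a_0,…,a_(k+1))` and `(b_1,…,b_(k-1))` are interlacing tuples with entries in
`{1,2,3}`, there is a unique proper labeling of the `2k-2` internal slanted edges of the
one-row triangular strip of length `k`.  The slanted edges are `e 0, …, e (2k-1)` from
left to right: the `t`-th upward triangle (`1 ≤ t ≤ k`) has slanted edges `e (2t-2)`,
`e (2t-1)` and upper edge `a t`; the `t`-th downward triangle (`1 ≤ t ≤ k-1`) has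
slanted edges `e (2t-1)`, `e (2t)` and lower edge `b t`; the outer slanted edges are
fixed: `e 0 = a 0` and `e (2k-1) = a (k+1)`; every face must have three pairwise
distinct labels.  (Labelings are normalized to `0` outside `{0,…,2k-1}`.) -/
theorem one_row_unique_labeling (k : ℕ) (hk : 1 ≤ k) (a b : ℕ → ℕ)
    (ha : ∀ p, p ≤ k + 1 → a p ∈ Finset.Icc 1 3)
    (hb : ∀ p, 1 ≤ p → p ≤ k - 1 → b p ∈ Finset.Icc 1 3)
    (hab : InterlacingAB k a b) :
    ∃! e : ℕ → ℕ,
      e 0 = a 0 ∧ e (2 * k - 1) = a (k + 1) ∧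
      (∀ t, 1 ≤ t → t ≤ 2 * k - 2 → e t ∈ Finset.Icc 1 3) ∧
      (∀ t, 2 * k - 1 < t → e t = 0) ∧
      (∀ t, 1 ≤ t → t ≤ k →
          e (2 * t - 2) ≠ a t ∧ a t ≠ e (2 * t - 1) ∧ e (2 * t - 2) ≠ e (2 * t - 1)) ∧
      (∀ t, 1 ≤ t → t ≤ k - 1 →
          e (2 * t - 1) ≠ b t ∧ b t ≠ e (2 * t) ∧ e (2 * t - 1) ≠ e (2 * t)) := by
  have hfin := final_eq k hk a b ha hb hab
  have hup := up_ne k hk a b ha hb hab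
  have hdown := down_ne k hk a b ha hb hab
  have hinv := invariant k hk a b ha hb hab
  refine ⟨eDef k a b, ⟨?_, ?_, ?_, ?_, ?_, ?_⟩, ?_⟩
  · -- e 0 = a 0
    have := eDef_even k a b 0 (by omega)
    simpa [gSeq] using this
  · -- e (2k-1) = a (k+1)
    rw [eDef_odd k a b k hk le_rfl, hfin]
  · -- membership
    intro t h1 h2
    by_cases hp : t % 2 = 0
    · obtain ⟨u, rfl⟩ : ∃ u, t = 2 * u := ⟨t / 2, by omega⟩
      rw [eDef_even k a b u (by omega)]
      exact (hinv u (by omega)).1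
    · obtain ⟨u, rfl, hu⟩ : ∃ u, t = 2 * u - 1 ∧ 1 ≤ u := ⟨(t + 1) / 2, by omega, by omega⟩
      have hu2 : u ≤ k := by omega
      rw [eDef_odd k a b u hu hu2]
      have hg := Finset.mem_Icc.1 (hinv (u - 1) (by omega)).1
      have hat := Finset.mem_Icc.1 (ha u (by omega))
      have hne := hup u hu hu2
      exact Finset.mem_Icc.2 (by omega)
  · -- zero outside
    intro t ht
    exact eDef_zero k hk a b t ht
  · -- up triangles
    intro t h1 h2
    rw [show 2 * t - 2 = 2 * (t - 1) by omega, eDef_even k a b (t - 1) (by omega),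
      eDef_odd k a b t h1 h2]
    have hg := Finset.mem_Icc.1 (hinv (t - 1) (by omega)).1
    have hat := Finset.mem_Icc.1 (ha t (by omega))
    have hne := hup t h1 h2
    refine ⟨by omega, by omega, by omega⟩
  · -- down triangles
    intro t h1 h2
    rw [eDef_odd k a b t h1 (by omega), eDef_even k a b t h2,
      gSeq_succ a b t h1]
    have hg := Finset.mem_Icc.1 (hinv (t - 1) (by omega)).1
    have hat := Finset.mem_Icc.1 (ha t (by omega))
    have hbt := Finset.mem_Icc.1 (hb t h1 h2)
    have hneU := hup t h1 (by omega)
    have hneD := hdown t h1 h2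
    refine ⟨by omega, by omega, by omega⟩
  · -- uniqueness
    intro e' ⟨h0, hlast, hmem, hzero, hupT, hdownT⟩
    have claim : ∀ t, t ≤ k - 1 → e' (2 * t) = gSeq a b t := by
      intro t
      induction t with
      | zero =>
        intro _
        simpa [gSeq] using h0
      | succ t ih =>
        intro ht
        have hprev := ih (by omega)
        have hu := hupT (t + 1) (by omega) (by omega)
        rw [show 2 * (t + 1) - 2 = 2 * t by omega,
          show 2 * (t + 1) - 1 = 2 * t + 1 by omega, hprev] at hu
        have hd := hdownT (t + 1) (by omega) (by omega)
        rw [show 2 * (t + 1) - 1 = 2 * t + 1 by omega,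
          show 2 * (t + 1) = 2 * t + 2 by omega] at hd
        have hm1 := Finset.mem_Icc.1 (hmem (2 * t + 1) (by omega) (by omega))
        have hm2 := Finset.mem_Icc.1 (hmem (2 * t + 2) (by omega) (by omega))
        have hg := Finset.mem_Icc.1 (hinv t (by omega)).1
        have hat := Finset.mem_Icc.1 (ha (t + 1) (by omega))
        have hbt := Finset.mem_Icc.1 (hb (t + 1) (by omega) (by omega))
        have hgnext : gSeq a b (t + 1) = 6 - b (t + 1) - (6 - a (t + 1) - gSeq a b t) := by
          simp [gSeq]
        have hstep1 : e' (2 * t + 1) = 6 - a (t + 1) - gSeq a b t := by omega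
        rw [show 2 * (t + 1) = 2 * t + 2 by omega, hgnext]
        omega
    have claimOdd : ∀ t, 1 ≤ t → t ≤ k → e' (2 * t - 1) = 6 - a t - gSeq a b (t - 1) := by
      intro t h1 h2
      by_cases hc : t ≤ k - 1
      · have hprev := claim (t - 1) (by omega)
        have hu := hupT t h1 h2
        rw [show 2 * t - 2 = 2 * (t - 1) by omega, hprev] at hu
        have hm1 := Finset.mem_Icc.1 (hmem (2 * t - 1) (by omega) (by omega))
        have hg := Finset.mem_Icc.1 (hinv (t - 1) (by omega)).1
        have hat := Finset.mem_Icc.1 (ha t (by omega))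
        omega
      · have hc' : t = k := by omega
        subst hc'
        rw [hlast, hfin]
    funext n
    by_cases hp : n % 2 = 0
    · obtain ⟨u, rfl⟩ : ∃ u, n = 2 * u := ⟨n / 2, by omega⟩
      by_cases hu : u ≤ k - 1
      · rw [claim u hu, eDef_even k a b u hu]
      · rw [hzero (2 * u) (by omega), eDef_zero k hk a b (2 * u) (by omega)]
    · obtain ⟨u, rfl, hu1⟩ : ∃ u, n = 2 * u - 1 ∧ 1 ≤ u := ⟨(n + 1) / 2, by omega, by omega⟩
      by_cases hu : u ≤ k
      · rw [claimOdd u hu1 hu, eDef_odd k a b u hu1 hu]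
      · rw [hzero (2 * u - 1) (by omega), eDef_zero k hk a b (2 * u - 1) (by omega)]
end

section
/- Let k ≥ 2 and suppose a = (a_0,a_1,…,a_{k+1}) ∈ {1,2,3}^{k+2} and b = (b_1,…,b_{k−1}) ∈ {1,2,3}^{k−1} are interlacing. Then a_0 ≠ a_1 and a_k ≠ a_{k+1}; moreover, letting b_0 be the unique element of {1,2,3} ∖ {a_0,a_1} and b_k the unique element of {1,2,3} ∖ {a_k,a_{k+1}}, the tuples b' = (b_0,b_1,…,b_k) ∈ {1,2,3}^{k+1} and a' = (a_2,…,a_{k−1}) ∈ {1,2,3}^{k−2} are interlacing. -/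
namespace InterlacingAux

open Finset

/-- the gap condition of `InterlacingAB` for a single value `i` -/
def GapCond (k : ℕ) (a b : ℕ → ℕ) (i : ℕ) : Prop :=
  ∀ p q, p < q → q ≤ k + 1 → a p = i → a q = i →
      (∀ r, p < r → r < q → a r ≠ i) →
      ∃ r, 1 ≤ r ∧ r ≤ k - 1 ∧ p ≤ r ∧ r < q ∧ b r = i

def S (k : ℕ) (a : ℕ → ℕ) (i : ℕ) : Finset ℕ :=
  (Finset.range (k + 2)).filter (fun p => a p = i)

def T (k : ℕ) (b : ℕ → ℕ) (i : ℕ) : Finset ℕ :=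
  (Finset.Icc 1 (k - 1)).filter (fun p => b p = i)

variable {k : ℕ} {a b : ℕ → ℕ} {i : ℕ}

lemma mem_S {p : ℕ} : p ∈ S k a i ↔ p < k + 2 ∧ a p = i := by
  simp [S]

lemma mem_T {p : ℕ} : p ∈ T k b i ↔ (1 ≤ p ∧ p ≤ k - 1) ∧ b p = i := by
  simp [T]

lemma card_succ_le {u v : Finset ℕ} (h : u ⊆ v) {x : ℕ} (hxv : x ∈ v) (hxu : x ∉ u) :
    u.card + 1 ≤ v.card :=
  Finset.card_lt_card ⟨h, fun h' => hxu (h' hxv)⟩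

lemma lt_mono {u : Finset ℕ} {x y : ℕ} (h : x ≤ y) :
    u.filter (fun s => s < x) ⊆ u.filter (fun s => s < y) :=
  Finset.monotone_filter_right _ (fun s _ hs => lt_of_lt_of_le hs h)

lemma le_mono {u : Finset ℕ} {x y : ℕ} (h : x ≤ y) :
    u.filter (fun s => y ≤ s) ⊆ u.filter (fun s => x ≤ s) :=
  Finset.monotone_filter_right _ (fun s _ hs => le_trans h hs)

/-- split a filtered set at its maximum -/
lemma eq_insert_max {u : Finset ℕ} {x j : ℕ} (hx : x ∈ u) (hxj : x < j)
    (hmax : ∀ s ∈ u, s < j → s ≤ x) :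
    u.filter (fun s => s < j) = insert x (u.filter (fun s => s < x)) := by
  ext s
  simp only [mem_filter, mem_insert]
  constructor
  · rintro ⟨hs, hsj⟩
    rcases lt_or_eq_of_le (hmax s hs hsj) with h | h
    · exact Or.inr ⟨hs, h⟩
    · exact Or.inl h
  · rintro (rfl | ⟨hs, hsx⟩)
    · exact ⟨hx, hxj⟩
    · exact ⟨hs, hsx.trans hxj⟩

/-- split a filtered set at its minimum -/
lemma eq_insert_min {u : Finset ℕ} {x j : ℕ} (hx : x ∈ u) (hxj : j ≤ x)
    (hmin : ∀ s ∈ u, j ≤ s → x ≤ s) :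
    u.filter (fun s => j ≤ s) = insert x (u.filter (fun s => x < s)) := by
  ext s
  simp only [mem_filter, mem_insert]
  constructor
  · rintro ⟨hs, hsj⟩
    rcases lt_or_eq_of_le (hmin s hs hsj) with h | h
    · exact Or.inr ⟨hs, h⟩
    · exact Or.inl h.symm
  · rintro (rfl | ⟨hs, hsx⟩)
    · exact ⟨hx, hxj⟩
    · exact ⟨hs, le_trans hxj (le_of_lt hsx)⟩

/-- before an occurrence of `i` in `a`, #occurrences in `a` ≤ #occurrences in `b` -/
lemma stairA (HG : GapCond k a b i) :
    ∀ j, j ≤ k + 1 → a j = i →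
      ((S k a i).filter (fun s => s < j)).card ≤ ((T k b i).filter (fun s => s < j)).card := by
  intro j
  induction j using Nat.strong_induction_on with
  | _ j IH =>
    intro hj haj
    by_cases hne : ((S k a i).filter (fun s => s < j)).Nonempty
    · set u := (S k a i).filter (fun s => s < j) with hu
      have hj'mem := u.max'_mem hne
      set j' := u.max' hne with hj'
      have hmax : ∀ s ∈ u, s ≤ j' := fun s hs => u.le_max' s hs
      rw [hu, mem_filter, mem_S] at hj'mem
      obtain ⟨⟨hj'k, haj'⟩, hj'j⟩ := hj'mem
      -- no occurrence of i strictly between j' and j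
      have hhole : ∀ r, j' < r → r < j → a r ≠ i := by
        intro r h1 h2 har
        have : r ∈ u := by
          rw [hu, mem_filter, mem_S]
          exact ⟨⟨lt_of_lt_of_le h2 (by omega), har⟩, h2⟩
        exact absurd (hmax r this) (by omega)
      obtain ⟨r0, hr01, hr0k, hr0ge, hr0lt, hbr0⟩ :=
        HG j' j hj'j hj haj' haj hhole
      have hr0T : r0 ∈ T k b i := mem_T.2 ⟨⟨hr01, hr0k⟩, hbr0⟩
      have hsplit : u = insert j' ((S k a i).filter (fun s => s < j')) := by
        rw [hu]
        exact eq_insert_max (mem_S.2 ⟨hj'k, haj'⟩) hj'j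
          (fun s hs hsj => hmax s (by rw [hu, mem_filter]; exact ⟨hs, hsj⟩))
      have hcard : u.card = ((S k a i).filter (fun s => s < j')).card + 1 := by
        rw [hsplit, Finset.card_insert_of_notMem (by simp)]
      have hIH := IH j' hj'j (by omega) haj'
      have hstep : ((T k b i).filter (fun s => s < j')).card + 1
          ≤ ((T k b i).filter (fun s => s < j)).card :=
        card_succ_le (lt_mono (le_of_lt hj'j))
          (by rw [mem_filter]; exact ⟨hr0T, hr0lt⟩)
          (by rw [mem_filter]; push_neg; intro _; omega)
      omega
    · simp [Finset.not_nonempty_iff_eq_empty.1 hne]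

/-- after an occurrence of `i` in `a`, #occurrences in `a` after it ≤ #occurrences in `b` from it on -/
lemma stairA' (HG : GapCond k a b i) :
    ∀ n j, k + 1 ≤ j + n → j ≤ k + 1 → a j = i →
      ((S k a i).filter (fun s => j < s)).card ≤ ((T k b i).filter (fun s => j ≤ s)).card := by
  intro n
  induction n with
  | zero =>
    intro j hjn hj haj
    have : (S k a i).filter (fun s => j < s) = ∅ := by
      rw [Finset.filter_eq_empty_iff]
      intro s hs
      rw [mem_S] at hs
      omega
    simp [this]
  | succ n IH =>
    intro j hjn hj haj
    by_cases hne : ((S k a i).filter (fun s => j < s)).Nonempty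
    · set u := (S k a i).filter (fun s => j < s) with hu
      have hj''mem := u.min'_mem hne
      set j'' := u.min' hne with hj''
      have hmin : ∀ s ∈ u, j'' ≤ s := fun s hs => u.min'_le s hs
      rw [hu, mem_filter, mem_S] at hj''mem
      obtain ⟨⟨hj''k, haj''⟩, hjj''⟩ := hj''mem
      have hhole : ∀ r, j < r → r < j'' → a r ≠ i := by
        intro r h1 h2 har
        have : r ∈ u := by
          rw [hu, mem_filter, mem_S]
          exact ⟨⟨by omega, har⟩, h1⟩
        exact absurd (hmin r this) (by omega)
      obtain ⟨r0, hr01, hr0k, hr0ge, hr0lt, hbr0⟩ :=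
        HG j j'' hjj'' (by omega) haj haj'' hhole
      have hr0T : r0 ∈ T k b i := mem_T.2 ⟨⟨hr01, hr0k⟩, hbr0⟩
      have hsplit : u = insert j'' ((S k a i).filter (fun s => j'' < s)) := by
        rw [hu]
        have := eq_insert_min (u := S k a i) (x := j'') (j := j + 1)
          (mem_S.2 ⟨by omega, haj''⟩) (by omega)
          (fun s hs hsj => hmin s (by rw [hu, mem_filter]; exact ⟨hs, by omega⟩))
        rw [show ((S k a i).filter (fun s => j < s))
            = ((S k a i).filter (fun s => j + 1 ≤ s)) from by
          apply Finset.filter_congr; intro s _; constructor <;> (intro; omega)]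
        exact this
      have hcard : u.card = ((S k a i).filter (fun s => j'' < s)).card + 1 := by
        rw [hsplit, Finset.card_insert_of_notMem (by simp)]
      have hIH := IH j'' (by omega) (by omega) haj''
      have hstep : ((T k b i).filter (fun s => j'' ≤ s)).card + 1
          ≤ ((T k b i).filter (fun s => j ≤ s)).card :=
        card_succ_le (le_mono (by omega))
          (by rw [mem_filter]; exact ⟨hr0T, hr0ge⟩)
          (by rw [mem_filter]; push_neg; intro _; omega)
      omega
    · simp [Finset.not_nonempty_iff_eq_empty.1 hne]

/-- prefix staircase: #a-occurrences below x ≤ #b-occurrences below x + 1 -/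
lemma prefix_le (HG : GapCond k a b i) (x : ℕ) :
    ((S k a i).filter (fun s => s < x)).card ≤ ((T k b i).filter (fun s => s < x)).card + 1 := by
  by_cases hne : ((S k a i).filter (fun s => s < x)).Nonempty
  · set u := (S k a i).filter (fun s => s < x) with hu
    have hjmem := u.max'_mem hne
    set j := u.max' hne with hj
    have hmax : ∀ s ∈ u, s ≤ j := fun s hs => u.le_max' s hs
    rw [hu, mem_filter, mem_S] at hjmem
    obtain ⟨⟨hjk, haj⟩, hjx⟩ := hjmem
    have hsplit : u = insert j ((S k a i).filter (fun s => s < j)) := by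
      rw [hu]
      exact eq_insert_max (mem_S.2 ⟨hjk, haj⟩) hjx
        (fun s hs hsj => hmax s (by rw [hu, mem_filter]; exact ⟨hs, hsj⟩))
    have hcard : u.card = ((S k a i).filter (fun s => s < j)).card + 1 := by
      rw [hsplit, Finset.card_insert_of_notMem (by simp)]
    have h1 := stairA HG j (by omega) haj
    have h2 := Finset.card_le_card (lt_mono (u := T k b i) (le_of_lt hjx))
    omega
  · simp [Finset.not_nonempty_iff_eq_empty.1 hne]

/-- suffix staircase: #a-occurrences from x on ≤ #b-occurrences from x on + 1 -/
lemma suffix_le (HG : GapCond k a b i) (x : ℕ) :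
    ((S k a i).filter (fun s => x ≤ s)).card ≤ ((T k b i).filter (fun s => x ≤ s)).card + 1 := by
  by_cases hne : ((S k a i).filter (fun s => x ≤ s)).Nonempty
  · set u := (S k a i).filter (fun s => x ≤ s) with hu
    have hjmem := u.min'_mem hne
    set j := u.min' hne with hj
    have hmin : ∀ s ∈ u, j ≤ s := fun s hs => u.min'_le s hs
    rw [hu, mem_filter, mem_S] at hjmem
    obtain ⟨⟨hjk, haj⟩, hjx⟩ := hjmem
    have hsplit : u = insert j ((S k a i).filter (fun s => j < s)) := by
      rw [hu]
      exact eq_insert_min (mem_S.2 ⟨hjk, haj⟩) hjx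
        (fun s hs hsj => hmin s (by rw [hu, mem_filter]; exact ⟨hs, hsj⟩))
    have hcard : u.card = ((S k a i).filter (fun s => j < s)).card + 1 := by
      rw [hsplit, Finset.card_insert_of_notMem (by simp)]
    have h1 := stairA' HG (k + 1) j (by omega) (by omega) haj
    have h2 := Finset.card_le_card (le_mono (u := T k b i) hjx)
    omega
  · simp [Finset.not_nonempty_iff_eq_empty.1 hne]

/-- splitting a filter into < x and ≥ x parts -/
lemma filter_split (u : Finset ℕ) (x : ℕ) :
    (u.filter (fun s => s < x)).card + (u.filter (fun s => x ≤ s)).card = u.card := by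
  rw [show (u.filter (fun s => x ≤ s)) = (u.filter (fun s => ¬ s < x)) from by
    apply Finset.filter_congr; intro s _; constructor <;> (intro; omega)]
  exact Finset.card_filter_add_card_filter_not _

/-- from the count condition: #b-occurrences below x ≤ #a-occurrences below x -/
lemma prefix_ge (HG : GapCond k a b i) (Hc : (S k a i).card = (T k b i).card + 1) (x : ℕ) :
    ((T k b i).filter (fun s => s < x)).card ≤ ((S k a i).filter (fun s => s < x)).card := by
  have h1 := filter_split (S k a i) x
  have h2 := filter_split (T k b i) x
  have h3 := suffix_le HG x
  omega

/-- strictly below any b-occurrence, #a-occurrences ≤ #b-occurrences below it (inclusive) -/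
lemma prefix_le_of_bocc (HG : GapCond k a b i) {p : ℕ} (hp : p ∈ T k b i) :
    ((S k a i).filter (fun s => s < p + 1)).card
      ≤ ((T k b i).filter (fun s => s < p + 1)).card := by
  by_cases hne : ((S k a i).filter (fun s => s < p + 1)).Nonempty
  · set u := (S k a i).filter (fun s => s < p + 1) with hu
    have hjmem := u.max'_mem hne
    set j := u.max' hne with hj
    have hmax : ∀ s ∈ u, s ≤ j := fun s hs => u.le_max' s hs
    rw [hu, mem_filter, mem_S] at hjmem
    obtain ⟨⟨hjk, haj⟩, hjx⟩ := hjmem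
    have hsplit : u = insert j ((S k a i).filter (fun s => s < j)) := by
      rw [hu]
      exact eq_insert_max (mem_S.2 ⟨hjk, haj⟩) hjx
        (fun s hs hsj => hmax s (by rw [hu, mem_filter]; exact ⟨hs, hsj⟩))
    have hcard : u.card = ((S k a i).filter (fun s => s < j)).card + 1 := by
      rw [hsplit, Finset.card_insert_of_notMem (by simp)]
    have h1 := stairA HG j (by omega) haj
    have h2 : ((T k b i).filter (fun s => s < j)).card + 1
        ≤ ((T k b i).filter (fun s => s < p + 1)).card :=
      card_succ_le (lt_mono (by omega))
        (by rw [mem_filter]; exact ⟨hp, by omega⟩)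
        (by rw [mem_filter]; push_neg; intro _; omega)
    omega
  · rw [Finset.not_nonempty_iff_eq_empty.1 hne]; simp

/-- a strict increase of the prefix count yields an occurrence in the window -/
lemma exists_occ (x y : ℕ)
    (h : ((S k a i).filter (fun s => s < x)).card < ((S k a i).filter (fun s => s < y)).card) :
    ∃ s, x ≤ s ∧ s < y ∧ s ≤ k + 1 ∧ a s = i := by
  by_contra hcon
  push_neg at hcon
  refine absurd (Finset.card_le_card ?_) (not_le.2 h)
  intro s hs
  rw [mem_filter, mem_S] at hs ⊢
  obtain ⟨⟨hsk, has⟩, hsy⟩ := hs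
  refine ⟨⟨hsk, has⟩, ?_⟩
  by_contra hsx
  exact (hcon s (by omega) hsy (by omega)) has

lemma S_filter_top : (S k a i).filter (fun s => s < k + 2) = S k a i := by
  apply Finset.filter_true_of_mem
  intro s hs
  exact (mem_S.1 hs).1

end InterlacingAux
namespace InterlacingAux2

open Finset

lemma card_filter_range_succ (P : ℕ → Prop) [DecidablePred P] (n : ℕ) :
    ((Finset.range (n + 1)).filter P).card
      = ((Finset.range n).filter P).card + (if P n then 1 else 0) := by
  rw [Finset.range_add_one, Finset.filter_insert]
  split_ifs with h
  · rw [Finset.card_insert_of_notMem (by simp)]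
  · rfl

lemma card_filter_range_eq_Icc (P : ℕ → Prop) [DecidablePred P] (n : ℕ) :
    ((Finset.range (n + 1)).filter P).card
      = (if P 0 then 1 else 0) + ((Finset.Icc 1 n).filter P).card := by
  have h : Finset.range (n + 1) = insert 0 (Finset.Icc 1 n) := by
    ext s
    simp only [Finset.mem_range, Finset.mem_insert, Finset.mem_Icc]
    omega
  rw [h, Finset.filter_insert]
  split_ifs with h0
  · rw [Finset.card_insert_of_notMem (by simp)]
    omega
  · omega

lemma card_filter_Icc_succ (P : ℕ → Prop) [DecidablePred P] (n : ℕ) :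
    ((Finset.Icc 1 (n + 1)).filter P).card
      = ((Finset.Icc 1 n).filter P).card + (if P (n + 1) then 1 else 0) := by
  have h : Finset.Icc 1 (n + 1) = insert (n + 1) (Finset.Icc 1 n) := by
    ext s
    simp only [Finset.mem_insert, Finset.mem_Icc]
    omega
  rw [h, Finset.filter_insert]
  split_ifs with h0
  · rw [Finset.card_insert_of_notMem (by simp)]
  · rfl

lemma card_filter_Icc_one (P : ℕ → Prop) [DecidablePred P] (n : ℕ) (hn : 1 ≤ n) :
    ((Finset.Icc 1 n).filter P).card
      = (if P 1 then 1 else 0) + ((Finset.Icc 2 n).filter P).card := by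
  have h : Finset.Icc 1 n = insert 1 (Finset.Icc 2 n) := by
    ext s
    simp only [Finset.mem_insert, Finset.mem_Icc]
    omega
  rw [h, Finset.filter_insert]
  split_ifs with h0
  · rw [Finset.card_insert_of_notMem (by simp)]
    omega
  · omega

lemma reindex (a : ℕ → ℕ) (i m : ℕ) :
    ((Finset.Icc 1 m).filter (fun p => a (p + 1) = i)).card
      = ((Finset.Icc 2 (m + 1)).filter (fun s => a s = i)).card := by
  rw [← Finset.card_image_of_injective
      ((Finset.Icc 1 m).filter (fun p => a (p + 1) = i))
      (show Function.Injective (fun p : ℕ => p + 1) from fun x y h => by simpa using h)]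
  congr 1
  ext s
  simp only [Finset.mem_image, Finset.mem_filter, Finset.mem_Icc]
  constructor
  · rintro ⟨p, ⟨⟨h1, h2⟩, h3⟩, rfl⟩
    exact ⟨⟨by omega, by omega⟩, h3⟩
  · rintro ⟨⟨h1, h2⟩, h3⟩
    exact ⟨s - 1, ⟨⟨by omega, by omega⟩, by rwa [show s - 1 + 1 = s from by omega]⟩, by omega⟩

end InterlacingAux2

set_option maxHeartbeats 1600000 in
/-- If `(a_0,…,a_(k+1))` and `(b_1,…,b_(k-1))` are interlacing with `k ≥ 2`, then
`a_0 ≠ a_1` and `a_k ≠ a_(k+1)`; moreover, letting `b_0` be the unique element of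
`{1,2,3} ∖ {a_0, a_1}` and `b_k` the unique element of `{1,2,3} ∖ {a_k, a_(k+1)}`,
the tuples `b' = (b_0, b_1, …, b_k)` and `a' = (a_2, …, a_(k-1))` are interlacing
(with `k` replaced by `k - 1`). -/
theorem interlacing_step (k : ℕ) (hk : 2 ≤ k) (a b : ℕ → ℕ)
    (ha : ∀ p, p ≤ k + 1 → a p ∈ Finset.Icc 1 3)
    (hb : ∀ p, 1 ≤ p → p ≤ k - 1 → b p ∈ Finset.Icc 1 3)
    (hab : InterlacingAB k a b) :
    a 0 ≠ a 1 ∧ a k ≠ a (k + 1) ∧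
    ∀ b0 bk : ℕ,
      b0 ∈ Finset.Icc 1 3 → b0 ≠ a 0 → b0 ≠ a 1 →
      bk ∈ Finset.Icc 1 3 → bk ≠ a k → bk ≠ a (k + 1) →
      InterlacingAB (k - 1)
        (fun p => if p = 0 then b0 else if p = k then bk else b p)
        (fun p => a (p + 1)) := by
  obtain ⟨m, rfl⟩ : ∃ m, k = m + 2 := ⟨k - 2, by omega⟩
  clear hk
  have h01 : a 0 ≠ a 1 := by
    intro h
    obtain ⟨r, hr1, hr2, hr3, hr4, hr5⟩ :=
      (hab (a 0) (ha 0 (by omega))).2 0 1 (by omega) (by omega) rfl h.symm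
        (fun r h1 h2 => absurd h2 (by omega))
    omega
  have hk2 : a (m + 2) ≠ a (m + 3) := by
    intro h
    obtain ⟨r, hr1, hr2, hr3, hr4, hr5⟩ :=
      (hab (a (m + 2)) (ha (m + 2) (by omega))).2 (m + 2) (m + 3) (by omega) (by omega) rfl h.symm
        (fun r h1 h2 => absurd h1 (by omega))
    omega
  refine ⟨h01, hk2, ?_⟩
  intro b0 bk hb0m hb0a0 hb0a1 hbkm hbka hbka1
  have hbka1' : bk ≠ a (m + 3) := hbka1
  intro i hi
  have HcS : (InterlacingAux.S (m + 2) a i).card = (InterlacingAux.T (m + 2) b i).card + 1 :=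
    (hab i hi).1
  have HG : InterlacingAux.GapCond (m + 2) a b i := (hab i hi).2
  refine ⟨?_, ?_⟩
  · -- count condition
    show ((Finset.range (m + 3)).filter
          (fun p => (if p = 0 then b0 else if p = m + 2 then bk else b p) = i)).card
        = ((Finset.Icc 1 m).filter (fun p => a (p + 1) = i)).card + 1
    have e1 : ((Finset.range (m + 4)).filter (fun s => a s = i)).card
        = ((Finset.range (m + 3)).filter (fun s => a s = i)).card
          + (if a (m + 3) = i then 1 else 0) :=
      InterlacingAux2.card_filter_range_succ _ (m + 3)
    have e2 : ((Finset.range (m + 3)).filter (fun s => a s = i)).card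
        = ((Finset.range (m + 2)).filter (fun s => a s = i)).card
          + (if a (m + 2) = i then 1 else 0) :=
      InterlacingAux2.card_filter_range_succ _ (m + 2)
    have e3 : ((Finset.range (m + 2)).filter (fun s => a s = i)).card
        = (if a 0 = i then 1 else 0)
          + ((Finset.Icc 1 (m + 1)).filter (fun s => a s = i)).card :=
      InterlacingAux2.card_filter_range_eq_Icc _ (m + 1)
    have e4 : ((Finset.Icc 1 (m + 1)).filter (fun s => a s = i)).card
        = (if a 1 = i then 1 else 0)
          + ((Finset.Icc 2 (m + 1)).filter (fun s => a s = i)).card :=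
      InterlacingAux2.card_filter_Icc_one _ (m + 1) (by omega)
    have g1 : ((Finset.Icc 1 m).filter (fun p => a (p + 1) = i)).card
        = ((Finset.Icc 2 (m + 1)).filter (fun s => a s = i)).card :=
      InterlacingAux2.reindex a i m
    have Hc : ((Finset.range (m + 4)).filter (fun s => a s = i)).card
        = ((Finset.Icc 1 (m + 1)).filter (fun s => b s = i)).card + 1 := HcS
    have f1 : ((Finset.range (m + 3)).filter
          (fun p => (if p = 0 then b0 else if p = m + 2 then bk else b p) = i)).card
        = (if b0 = i then 1 else 0)
          + ((Finset.Icc 1 (m + 2)).filter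
              (fun p => (if p = 0 then b0 else if p = m + 2 then bk else b p) = i)).card := by
      have h := InterlacingAux2.card_filter_range_eq_Icc
        (fun p => (if p = 0 then b0 else if p = m + 2 then bk else b p) = i) (m + 2)
      rw [if_pos rfl] at h
      exact h
    have f2 : ((Finset.Icc 1 (m + 2)).filter
          (fun p => (if p = 0 then b0 else if p = m + 2 then bk else b p) = i)).card
        = ((Finset.Icc 1 (m + 1)).filter
            (fun p => (if p = 0 then b0 else if p = m + 2 then bk else b p) = i)).card
          + (if (if (m + 2 : ℕ) = 0 then b0 else if (m + 2 : ℕ) = m + 2 then bk else b (m + 2)) = i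
              then 1 else 0) :=
      InterlacingAux2.card_filter_Icc_succ _ (m + 1)
    have hcollapse : (if (m + 2 : ℕ) = 0 then b0 else if (m + 2 : ℕ) = m + 2 then bk
        else b (m + 2)) = bk := by
      rw [if_neg (by omega), if_pos rfl]
    rw [hcollapse] at f2
    have f3 : ((Finset.Icc 1 (m + 1)).filter
          (fun p => (if p = 0 then b0 else if p = m + 2 then bk else b p) = i)).card
        = ((Finset.Icc 1 (m + 1)).filter (fun p => b p = i)).card := by
      apply congrArg
      apply Finset.filter_congr
      intro s hs
      rw [Finset.mem_Icc] at hs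
      rw [if_neg (by omega), if_neg (by omega)]
    have hb0R := Finset.mem_Icc.1 hb0m
    have hbkR := Finset.mem_Icc.1 hbkm
    have ha0R := Finset.mem_Icc.1 (ha 0 (by omega))
    have ha1R := Finset.mem_Icc.1 (ha 1 (by omega))
    have ham2R := Finset.mem_Icc.1 (ha (m + 2) (by omega))
    have ham3R := Finset.mem_Icc.1 (ha (m + 3) (by omega))
    have hiR := Finset.mem_Icc.1 hi
    have ind1 : (if b0 = i then 1 else 0) + (if a 0 = i then 1 else 0)
        + (if a 1 = i then 1 else 0) = 1 := by
      split_ifs <;> omega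
    have ind2 : (if bk = i then 1 else 0) + (if a (m + 2) = i then 1 else 0)
        + (if a (m + 3) = i then 1 else 0) = 1 := by
      split_ifs <;> omega
    split_ifs at e1 e2 e3 e4 f1 f2 ind1 ind2 <;> omega
  · -- gap condition
    show ∀ p q, p < q → q ≤ m + 2 →
        (if p = 0 then b0 else if p = m + 2 then bk else b p) = i →
        (if q = 0 then b0 else if q = m + 2 then bk else b q) = i →
        (∀ r, p < r → r < q → (if r = 0 then b0 else if r = m + 2 then bk else b r) ≠ i) →
        ∃ r, 1 ≤ r ∧ r ≤ m ∧ p ≤ r ∧ r < q ∧ a (r + 1) = i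
    intro p q hpq hq hbp hbq _hcons
    have htop : ((InterlacingAux.S (m + 2) a i).filter (fun s => s < m + 4)).card
        = (InterlacingAux.S (m + 2) a i).card := by
      apply congrArg
      apply Finset.filter_true_of_mem
      intro s hs
      have := (InterlacingAux.mem_S.1 hs).1
      omega
    rcases eq_or_ne p 0 with rfl | hp0 <;> rcases eq_or_ne q (m + 2) with rfl | hqk
    · -- p = 0, q = m + 2
      have hb0i : b0 = i := by rwa [if_pos rfl] at hbp
      have hbki : bk = i := by rwa [if_neg (by omega), if_pos rfl] at hbq
      have ha0 : a 0 ≠ i := fun h => hb0a0 (hb0i.trans h.symm)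
      have ha1 : a 1 ≠ i := fun h => hb0a1 (hb0i.trans h.symm)
      have ham2 : a (m + 2) ≠ i := fun h => hbka (hbki.trans h.symm)
      have ham3 : a (m + 3) ≠ i := fun h => hbka1' (hbki.trans h.symm)
      have hzero : ((InterlacingAux.S (m + 2) a i).filter (fun s => s < 2)).card = 0 := by
        rw [show (InterlacingAux.S (m + 2) a i).filter (fun s => s < 2) = ∅ from ?_,
          Finset.card_empty]
        rw [Finset.filter_eq_empty_iff]
        intro s hs hlt
        rw [InterlacingAux.mem_S] at hs
        have hcase : s = 0 ∨ s = 1 := by omega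
        rcases hcase with rfl | rfl
        · exact ha0 hs.2
        · exact ha1 hs.2
      obtain ⟨s, hs1, hs2, hs3, hs4⟩ :=
        InterlacingAux.exists_occ (k := m + 2) (a := a) (i := i) 2 (m + 4) (by omega)
      have hsm2 : s ≠ m + 2 := fun h => ham2 (h ▸ hs4)
      have hsm3 : s ≠ m + 3 := fun h => ham3 (h ▸ hs4)
      exact ⟨s - 1, by omega, by omega, by omega, by omega,
        by rwa [show s - 1 + 1 = s from by omega]⟩
    · -- p = 0, q < m + 2
      have hb0i : b0 = i := by rwa [if_pos rfl] at hbp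
      have hbqi : b q = i := by rwa [if_neg (by omega), if_neg hqk] at hbq
      have ha0 : a 0 ≠ i := fun h => hb0a0 (hb0i.trans h.symm)
      have ha1 : a 1 ≠ i := fun h => hb0a1 (hb0i.trans h.symm)
      have hqT : q ∈ InterlacingAux.T (m + 2) b i :=
        InterlacingAux.mem_T.2 ⟨⟨by omega, by omega⟩, hbqi⟩
      have hzero : ((InterlacingAux.S (m + 2) a i).filter (fun s => s < 2)).card = 0 := by
        rw [show (InterlacingAux.S (m + 2) a i).filter (fun s => s < 2) = ∅ from ?_,
          Finset.card_empty]
        rw [Finset.filter_eq_empty_iff]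
        intro s hs hlt
        rw [InterlacingAux.mem_S] at hs
        have hcase : s = 0 ∨ s = 1 := by omega
        rcases hcase with rfl | rfl
        · exact ha0 hs.2
        · exact ha1 hs.2
      have hpos : 0 < ((InterlacingAux.T (m + 2) b i).filter (fun s => s < q + 1)).card :=
        Finset.card_pos.2 ⟨q, Finset.mem_filter.2 ⟨hqT, by omega⟩⟩
      have hge := InterlacingAux.prefix_ge HG HcS (q + 1)
      obtain ⟨s, hs1, hs2, hs3, hs4⟩ :=
        InterlacingAux.exists_occ (k := m + 2) (a := a) (i := i) 2 (q + 1) (by omega)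
      exact ⟨s - 1, by omega, by omega, by omega, by omega,
        by rwa [show s - 1 + 1 = s from by omega]⟩
    · -- p ≥ 1, q = m + 2
      have hbpi : b p = i := by rwa [if_neg hp0, if_neg (by omega)] at hbp
      have hbki : bk = i := by rwa [if_neg (by omega), if_pos rfl] at hbq
      have ham2 : a (m + 2) ≠ i := fun h => hbka (hbki.trans h.symm)
      have ham3 : a (m + 3) ≠ i := fun h => hbka1' (hbki.trans h.symm)
      have hpT : p ∈ InterlacingAux.T (m + 2) b i :=
        InterlacingAux.mem_T.2 ⟨⟨by omega, by omega⟩, hbpi⟩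
      have hA := InterlacingAux.prefix_le_of_bocc HG hpT
      have hTle : ((InterlacingAux.T (m + 2) b i).filter (fun s => s < p + 1)).card
          ≤ (InterlacingAux.T (m + 2) b i).card :=
        Finset.card_le_card (Finset.filter_subset _ _)
      obtain ⟨s, hs1, hs2, hs3, hs4⟩ :=
        InterlacingAux.exists_occ (k := m + 2) (a := a) (i := i) (p + 1) (m + 4)
          (by omega)
      have hsm2 : s ≠ m + 2 := fun h => ham2 (h ▸ hs4)
      have hsm3 : s ≠ m + 3 := fun h => ham3 (h ▸ hs4)
      exact ⟨s - 1, by omega, by omega, by omega, by omega,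
        by rwa [show s - 1 + 1 = s from by omega]⟩
    · -- p ≥ 1, q ≤ m + 1
      have hbpi : b p = i := by rwa [if_neg hp0, if_neg (by omega)] at hbp
      have hbqi : b q = i := by rwa [if_neg (by omega), if_neg hqk] at hbq
      have hpT : p ∈ InterlacingAux.T (m + 2) b i :=
        InterlacingAux.mem_T.2 ⟨⟨by omega, by omega⟩, hbpi⟩
      have hqT : q ∈ InterlacingAux.T (m + 2) b i :=
        InterlacingAux.mem_T.2 ⟨⟨by omega, by omega⟩, hbqi⟩
      have hA := InterlacingAux.prefix_le_of_bocc HG hpT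
      have hB := InterlacingAux.prefix_ge HG HcS (q + 1)
      have hstep : ((InterlacingAux.T (m + 2) b i).filter (fun s => s < p + 1)).card + 1
          ≤ ((InterlacingAux.T (m + 2) b i).filter (fun s => s < q + 1)).card :=
        InterlacingAux.card_succ_le (InterlacingAux.lt_mono (by omega))
          (Finset.mem_filter.2 ⟨hqT, by omega⟩)
          (by rw [Finset.mem_filter]; push_neg; intro _; omega)
      obtain ⟨s, hs1, hs2, hs3, hs4⟩ :=
        InterlacingAux.exists_occ (k := m + 2) (a := a) (i := i) (p + 1) (q + 1)
          (by omega)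
      exact ⟨s - 1, by omega, by omega, by omega, by omega,
        by rwa [show s - 1 + 1 = s from by omega]⟩
end

section
/- For every n ≥ 1, the map 𝒫 is a bijection from the set 𝒞_n of proper vertex 4-colorings of Δ_n with base point colored 0 to the set 𝒫_n of 1/2/3-puzzles on Δ_n. -/
/-- The set of `1/2/3`-puzzles on `Δ_n`, normalized to `0` off the edge set. -/
def PuzzleFull (n : ℕ) : Set (ℕ → ℕ → ℕ → ℕ) :=
  {P | IsPuzzle123 n P ∧ ∀ d x y, ¬(d < 3 ∧ x + y < n) → P d x y = 0}

/-- The label that the map `𝒫` assigns to an edge whose endpoints have colors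
`c`, `c'` ∈ {0,1,2,3}: the unique nonzero color if one endpoint has color `0`,
and otherwise the unique element of `{1,2,3} ∖ {c, c'}`. -/
def edgeLabelC (c c' : ℕ) : ℕ :=
  if c = 0 then c' else if c' = 0 then c else 6 - c - c'

/-- The map `𝒫` from vertex `4`-colorings of `Δ_n` to edge labelings. -/
def PofC (n : ℕ) (C : ℕ × ℕ → ℕ) : ℕ → ℕ → ℕ → ℕ :=
  fun d x y =>
    if d < 3 ∧ x + y < n then
      if d = 0 then edgeLabelC (C (x, y)) (C (x + 1, y))
      else if d = 1 then edgeLabelC (C (x, y)) (C (x, y + 1))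
      else edgeLabelC (C (x + 1, y)) (C (x, y + 1))
    else 0

/-- Proper vertex `4`-colorings of `Δ_n` (colors `{0,1,2,3}`) with the base point
`(0,0)` colored `0`, normalized to `0` outside the vertex set. -/
def ColorFull (n : ℕ) : Set (ℕ × ℕ → ℕ) :=
  {C | (∀ x y, x + y ≤ n → C (x, y) < 4) ∧
       (∀ x y, x + y < n →
          C (x, y) ≠ C (x + 1, y) ∧ C (x, y) ≠ C (x, y + 1) ∧
          C (x + 1, y) ≠ C (x, y + 1)) ∧
       C (0, 0) = 0 ∧
       (∀ x y, ¬(x + y ≤ n) → C (x, y) = 0)}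

section Aux

lemma xor4 (a b c d : ℕ) : (a ^^^ b) ^^^ (c ^^^ d) = (a ^^^ c) ^^^ (b ^^^ d) := by
  simp only [Nat.xor_assoc]
  congr 1
  rw [← Nat.xor_assoc, Nat.xor_comm b c, Nat.xor_assoc]

lemma xor_swap3 (a b c : ℕ) : (a ^^^ b) ^^^ c = (a ^^^ c) ^^^ b := by
  rw [Nat.xor_assoc, Nat.xor_comm b c, ← Nat.xor_assoc]

lemma xor_lt4 {a b : ℕ} (ha : a < 4) (hb : b < 4) : a ^^^ b < 4 := by
  interval_cases a <;> interval_cases b <;> decide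

lemma tri_xor {a b c : ℕ} (ha1 : 1 ≤ a) (ha3 : a ≤ 3) (hb1 : 1 ≤ b) (hb3 : b ≤ 3)
    (hc1 : 1 ≤ c) (hc3 : c ≤ 3) (hab : a ≠ b) (hac : a ≠ c) (hbc : b ≠ c) : a ^^^ b = c := by
  interval_cases a <;> interval_cases b <;> interval_cases c <;> revert hab hac hbc <;> decide

lemma edgeLabelC_eq_xor {a b : ℕ} (ha : a < 4) (hb : b < 4) (hab : a ≠ b) :
    edgeLabelC a b = a ^^^ b := by
  interval_cases a <;> interval_cases b <;> revert hab <;> decide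

lemma edge_mem {a b : ℕ} (ha : a < 4) (hb : b < 4) (hab : a ≠ b) :
    edgeLabelC a b ∈ Finset.Icc 1 3 := by
  rw [Finset.mem_Icc]
  interval_cases a <;> interval_cases b <;> revert hab <;> decide

lemma edge_pairs {a b c : ℕ} (ha : a < 4) (hb : b < 4) (hc : c < 4)
    (hab : a ≠ b) (hac : a ≠ c) (hbc : b ≠ c) :
    edgeLabelC a c ≠ edgeLabelC b c ∧ edgeLabelC a c ≠ edgeLabelC a b ∧
      edgeLabelC b c ≠ edgeLabelC a b := by
  interval_cases a <;> interval_cases b <;> interval_cases c <;> revert hab hac hbc <;> decide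

lemma edge_pairs' {a b c : ℕ} (ha : a < 4) (hb : b < 4) (hc : c < 4)
    (hab : a ≠ b) (hac : a ≠ c) (hbc : b ≠ c) :
    edgeLabelC a b ≠ edgeLabelC b c ∧ edgeLabelC a b ≠ edgeLabelC a c ∧
      edgeLabelC b c ≠ edgeLabelC a c := by
  interval_cases a <;> interval_cases b <;> interval_cases c <;> revert hab hac hbc <;> decide

lemma xor_left_cancel' {a b c : ℕ} (h : a ^^^ b = a ^^^ c) : b = c := by
  have := congrArg (fun t => a ^^^ t) h
  simpa [xor_cancel_left] using this

lemma PofC0 {n : ℕ} {C : ℕ × ℕ → ℕ} {x y : ℕ} (h : x + y < n) :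
    PofC n C 0 x y = edgeLabelC (C (x, y)) (C (x + 1, y)) := by simp [PofC, h]

lemma PofC1 {n : ℕ} {C : ℕ × ℕ → ℕ} {x y : ℕ} (h : x + y < n) :
    PofC n C 1 x y = edgeLabelC (C (x, y)) (C (x, y + 1)) := by simp [PofC, h]

lemma PofC2 {n : ℕ} {C : ℕ × ℕ → ℕ} {x y : ℕ} (h : x + y < n) :
    PofC n C 2 x y = edgeLabelC (C (x + 1, y)) (C (x, y + 1)) := by simp [PofC, h]

/-- The coloring reconstructed from a puzzle by xor-ing labels along a path. -/
def rawC (P : ℕ → ℕ → ℕ → ℕ) : ℕ → ℕ → ℕ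
  | 0, 0 => 0
  | 0, y + 1 => rawC P 0 y ^^^ P 1 0 y
  | x + 1, y => rawC P x y ^^^ P 0 x y

lemma raw0 (P : ℕ → ℕ → ℕ → ℕ) (x y : ℕ) :
    rawC P x y ^^^ rawC P (x + 1) y = P 0 x y := by
  simp only [rawC]
  exact xor_cancel_left _ _

end Aux
section Aux2
variable {n : ℕ} {P : ℕ → ℕ → ℕ → ℕ}

lemma rawC_lt (hIcc : ∀ d x y, d < 3 → x + y < n → P d x y ∈ Finset.Icc 1 3) :
    ∀ x y, x + y ≤ n → rawC P x y < 4 := by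
  intro x
  induction x with
  | zero =>
    intro y
    induction y with
    | zero => intro _; simp [rawC]
    | succ y ih =>
      intro h
      have h1 : 0 + y < n := by omega
      have hl := (Finset.mem_Icc.1 (hIcc 1 0 y (by omega) h1)).2
      simp only [rawC]
      exact xor_lt4 (ih (by omega)) (by omega)
  | succ x ih =>
    intro y h
    have h1 : x + y < n := by omega
    have hl := (Finset.mem_Icc.1 (hIcc 0 x y (by omega) h1)).2
    simp only [rawC]
    exact xor_lt4 (ih y (by omega)) (by omega)

lemma raw1 (hIcc : ∀ d x y, d < 3 → x + y < n → P d x y ∈ Finset.Icc 1 3)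
    (hup : ∀ x y, x + y < n →
      P 1 x y ≠ P 2 x y ∧ P 1 x y ≠ P 0 x y ∧ P 2 x y ≠ P 0 x y)
    (hdown : ∀ x y, x + y + 1 < n →
      P 2 x y ≠ P 0 x (y + 1) ∧ P 2 x y ≠ P 1 (x + 1) y ∧ P 0 x (y + 1) ≠ P 1 (x + 1) y) :
    ∀ x y, x + y < n → rawC P x y ^^^ rawC P x (y + 1) = P 1 x y := by
  intro x
  induction x with
  | zero =>
    intro y h
    simp only [rawC]
    exact xor_cancel_left _ _
  | succ x ih =>
    intro y h
    have h1 : x + y < n := by omega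
    have h2 : x + (y + 1) < n := by omega
    have h3 : x + y + 1 < n := by omega
    have m1 := Finset.mem_Icc.1 (hIcc 1 x y (by omega) h1)
    have m0 := Finset.mem_Icc.1 (hIcc 0 x y (by omega) h1)
    have m2 := Finset.mem_Icc.1 (hIcc 2 x y (by omega) h1)
    have m0' := Finset.mem_Icc.1 (hIcc 0 x (y + 1) (by omega) h2)
    have m1' := Finset.mem_Icc.1 (hIcc 1 (x + 1) y (by omega) h)
    have hu := hup x y h1
    have hd := hdown x y h3
    have key : rawC P (x + 1) y ^^^ rawC P (x + 1) (y + 1)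
        = (rawC P x y ^^^ rawC P x (y + 1)) ^^^ (P 0 x y ^^^ P 0 x (y + 1)) := by
      simp only [rawC]; exact xor4 _ _ _ _
    rw [key, ih y h1, ← Nat.xor_assoc]
    have t1 : P 1 x y ^^^ P 0 x y = P 2 x y :=
      tri_xor m1.1 m1.2 m0.1 m0.2 m2.1 m2.2 hu.2.1 hu.1 (Ne.symm hu.2.2)
    rw [t1]
    exact tri_xor m2.1 m2.2 m0'.1 m0'.2 m1'.1 m1'.2 hd.1 hd.2.1 hd.2.2

lemma raw2 (hIcc : ∀ d x y, d < 3 → x + y < n → P d x y ∈ Finset.Icc 1 3)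
    (hup : ∀ x y, x + y < n →
      P 1 x y ≠ P 2 x y ∧ P 1 x y ≠ P 0 x y ∧ P 2 x y ≠ P 0 x y)
    (hdown : ∀ x y, x + y + 1 < n →
      P 2 x y ≠ P 0 x (y + 1) ∧ P 2 x y ≠ P 1 (x + 1) y ∧ P 0 x (y + 1) ≠ P 1 (x + 1) y) :
    ∀ x y, x + y < n → rawC P (x + 1) y ^^^ rawC P x (y + 1) = P 2 x y := by
  intro x y h
  have key : rawC P (x + 1) y ^^^ rawC P x (y + 1)
      = (rawC P x y ^^^ rawC P x (y + 1)) ^^^ P 0 x y := by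
    simp only [rawC]; exact xor_swap3 _ _ _
  rw [key, raw1 hIcc hup hdown x y h]
  have m1 := Finset.mem_Icc.1 (hIcc 1 x y (by omega) h)
  have m0 := Finset.mem_Icc.1 (hIcc 0 x y (by omega) h)
  have m2 := Finset.mem_Icc.1 (hIcc 2 x y (by omega) h)
  have hu := hup x y h
  exact tri_xor m1.1 m1.2 m0.1 m0.2 m2.1 m2.2 hu.2.1 hu.1 (Ne.symm hu.2.2)

end Aux2

/-- For every `n ≥ 1`, the map `𝒫` is a bijection from proper vertex `4`-colorings
of `Δ_n` with base point colored `0` to `1/2/3`-puzzles on `Δ_n`. -/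
theorem PofC_bijection (n : ℕ) (hn : 1 ≤ n) :
    Set.BijOn (PofC n) (ColorFull n) (PuzzleFull n) := by
  refine ⟨?_, ?_, ?_⟩
  · -- MapsTo
    intro C hC
    obtain ⟨hlt, hprop, hbase, hnorm⟩ := hC
    refine ⟨⟨?_, ?_, ?_⟩, ?_⟩
    · intro d x y hd hxy
      have ha := hlt x y (by omega)
      have hb := hlt (x + 1) y (by omega)
      have hc := hlt x (y + 1) (by omega)
      have hp := hprop x y hxy
      interval_cases d
      · rw [PofC0 hxy]; exact edge_mem ha hb hp.1
      · rw [PofC1 hxy]; exact edge_mem ha hc hp.2.1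
      · rw [PofC2 hxy]; exact edge_mem hb hc hp.2.2
    · intro x y hxy
      have ha := hlt x y (by omega)
      have hb := hlt (x + 1) y (by omega)
      have hc := hlt x (y + 1) (by omega)
      have hp := hprop x y hxy
      rw [PofC0 hxy, PofC1 hxy, PofC2 hxy]
      exact edge_pairs ha hb hc hp.1 hp.2.1 hp.2.2
    · intro x y hxy
      have hx1 : x + y < n := by omega
      have hx2 : x + (y + 1) < n := by omega
      have hx3 : (x + 1) + y < n := by omega
      have ha := hlt (x + 1) y (by omega)
      have hb := hlt x (y + 1) (by omega)
      have hc := hlt (x + 1) (y + 1) (by omega)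
      rw [PofC2 hx1, PofC0 hx2, PofC1 hx3]
      exact edge_pairs' ha hb hc (hprop x y hx1).2.2 (hprop (x + 1) y hx3).2.1
        (hprop x (y + 1) hx2).1
    · intro d x y h
      simp [PofC, h]
  · -- InjOn
    intro C hC C' hC' hEq
    obtain ⟨hlt, hprop, hbase, hnorm⟩ := hC
    obtain ⟨hlt', hprop', hbase', hnorm'⟩ := hC'
    have e0 : ∀ x y, x + y < n → C (x, y) = C' (x, y) → C (x + 1, y) = C' (x + 1, y) := by
      intro x y h heq
      have h1 := congrFun (congrFun (congrFun hEq 0) x) y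
      rw [PofC0 h, PofC0 h,
        edgeLabelC_eq_xor (hlt x y (by omega)) (hlt (x + 1) y (by omega)) (hprop x y h).1,
        edgeLabelC_eq_xor (hlt' x y (by omega)) (hlt' (x + 1) y (by omega)) (hprop' x y h).1,
        heq] at h1
      exact xor_left_cancel' h1
    have e1 : ∀ x y, x + y < n → C (x, y) = C' (x, y) → C (x, y + 1) = C' (x, y + 1) := by
      intro x y h heq
      have h1 := congrFun (congrFun (congrFun hEq 1) x) y
      rw [PofC1 h, PofC1 h,
        edgeLabelC_eq_xor (hlt x y (by omega)) (hlt x (y + 1) (by omega)) (hprop x y h).2.1,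
        edgeLabelC_eq_xor (hlt' x y (by omega)) (hlt' x (y + 1) (by omega)) (hprop' x y h).2.1,
        heq] at h1
      exact xor_left_cancel' h1
    have col : ∀ y, y ≤ n → C (0, y) = C' (0, y) := by
      intro y
      induction y with
      | zero => intro _; rw [hbase, hbase']
      | succ y ih =>
        intro h
        exact e1 0 y (by omega) (ih (by omega))
    have main : ∀ x y, x + y ≤ n → C (x, y) = C' (x, y) := by
      intro x
      induction x with
      | zero => intro y h; exact col y (by omega)
      | succ x ih =>
        intro y h
        exact e0 x y (by omega) (ih y (by omega))
    funext p
    obtain ⟨x, y⟩ := p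
    by_cases h : x + y ≤ n
    · exact main x y h
    · rw [hnorm x y h, hnorm' x y h]
  · -- SurjOn
    intro P hP
    obtain ⟨⟨hIcc, hup, hdown⟩, hnormP⟩ := hP
    set C : ℕ × ℕ → ℕ := fun p => if p.1 + p.2 ≤ n then rawC P p.1 p.2 else 0 with hCdef
    have hCval : ∀ x y, x + y ≤ n → C (x, y) = rawC P x y := by
      intro x y h; simp [hCdef, h]
    have ne0 : ∀ x y, x + y < n → C (x, y) ≠ C (x + 1, y) := by
      intro x y h heq
      rw [hCval x y (by omega), hCval (x + 1) y (by omega)] at heq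
      have := raw0 P x y
      rw [← heq, Nat.xor_self] at this
      have := (Finset.mem_Icc.1 (hIcc 0 x y (by omega) h)).1
      omega
    have ne1 : ∀ x y, x + y < n → C (x, y) ≠ C (x, y + 1) := by
      intro x y h heq
      rw [hCval x y (by omega), hCval x (y + 1) (by omega)] at heq
      have := raw1 hIcc hup hdown x y h
      rw [← heq, Nat.xor_self] at this
      have := (Finset.mem_Icc.1 (hIcc 1 x y (by omega) h)).1
      omega
    have ne2 : ∀ x y, x + y < n → C (x + 1, y) ≠ C (x, y + 1) := by
      intro x y h heq
      rw [hCval (x + 1) y (by omega), hCval x (y + 1) (by omega)] at heq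
      have := raw2 hIcc hup hdown x y h
      rw [← heq, Nat.xor_self] at this
      have := (Finset.mem_Icc.1 (hIcc 2 x y (by omega) h)).1
      omega
    have hCmem : C ∈ ColorFull n := by
      refine ⟨?_, ?_, ?_, ?_⟩
      · intro x y h
        rw [hCval x y h]
        exact rawC_lt hIcc x y h
      · intro x y h
        exact ⟨ne0 x y h, ne1 x y h, ne2 x y h⟩
      · rw [hCval 0 0 (by omega)]; simp [rawC]
      · intro x y h; simp [hCdef, h]
    refine ⟨C, hCmem, ?_⟩
    funext d x y
    by_cases hcond : d < 3 ∧ x + y < n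
    · obtain ⟨hd, hxy⟩ := hcond
      have hlt4 := rawC_lt hIcc
      interval_cases d
      · rw [PofC0 hxy, hCval x y (by omega), hCval (x + 1) y (by omega),
          edgeLabelC_eq_xor (hlt4 x y (by omega)) (hlt4 (x + 1) y (by omega)) ?hne]
        · exact raw0 P x y
        case hne =>
          intro heq
          have := raw0 P x y
          rw [heq, Nat.xor_self] at this
          have := (Finset.mem_Icc.1 (hIcc 0 x y (by omega) hxy)).1
          omega
      · rw [PofC1 hxy, hCval x y (by omega), hCval x (y + 1) (by omega),
          edgeLabelC_eq_xor (hlt4 x y (by omega)) (hlt4 x (y + 1) (by omega)) ?hne1]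
        · exact raw1 hIcc hup hdown x y hxy
        case hne1 =>
          intro heq
          have := raw1 hIcc hup hdown x y hxy
          rw [heq, Nat.xor_self] at this
          have := (Finset.mem_Icc.1 (hIcc 1 x y (by omega) hxy)).1
          omega
      · rw [PofC2 hxy, hCval (x + 1) y (by omega), hCval x (y + 1) (by omega),
          edgeLabelC_eq_xor (hlt4 (x + 1) y (by omega)) (hlt4 x (y + 1) (by omega)) ?hne2]
        · exact raw2 hIcc hup hdown x y hxy
        case hne2 =>
          intro heq
          have := raw2 hIcc hup hdown x y hxy
          rw [heq, Nat.xor_self] at this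
          have := (Finset.mem_Icc.1 (hIcc 2 x y (by omega) hxy)).1
          omega
    · rw [hnormP d x y hcond]
      simp [PofC, hcond]
end

section
/- For every n ≥ 1 and every edge labeling D ∈ 𝒟_n of the square grid graph □_n, the array 𝒟'(D) is an interlacing triangular array of rank 4 and height n. -/
/-- Edges of the square grid `□_n`: `(0, x, y)` is the horizontal edge
`{(x,y),(x+1,y)}` (for `x < n`, `y ≤ n`) and `(1, x, y)` is the vertical edge
`{(x,y),(x,y+1)}` (for `x ≤ n`, `y < n`).  `D ∈ 𝒟_n` iff every edge of `□_n`
is labeled in `{1,2,3,4}`; every main-diagonal face has four pairwise distinct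
edge labels; and every off-diagonal face (south `D 0 x y`, north `D 0 x (y+1)`,
west `D 1 x y`, east `D 1 (x+1) y`) uses exactly two distinct labels, either with
west = south and north = east, or with north = south and west = east. -/
def IsSquareLab (n : ℕ) (D : ℕ → ℕ → ℕ → ℕ) : Prop :=
  (∀ x y, x < n → y ≤ n → D 0 x y ∈ Finset.Icc 1 4) ∧
  (∀ x y, x ≤ n → y < n → D 1 x y ∈ Finset.Icc 1 4) ∧
  (∀ x, x < n →
      (D 0 x x ≠ D 0 x (x + 1) ∧ D 0 x x ≠ D 1 x x ∧ D 0 x x ≠ D 1 (x + 1) x ∧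
       D 0 x (x + 1) ≠ D 1 x x ∧ D 0 x (x + 1) ≠ D 1 (x + 1) x ∧
       D 1 x x ≠ D 1 (x + 1) x)) ∧
  (∀ x y, x < n → y < n → x ≠ y →
      ((D 1 x y = D 0 x y ∧ D 0 x (y + 1) = D 1 (x + 1) y ∧ D 1 x y ≠ D 0 x (y + 1)) ∨
       (D 0 x (y + 1) = D 0 x y ∧ D 1 x y = D 1 (x + 1) y ∧ D 0 x y ≠ D 1 x y)))

/-- The map `𝒟'`: the `k`-th row of `𝒟'(D)` reads the boundary of the copy of
`□_k` inside `□_n` clockwise from the base point `(0,0)`: the left side bottom to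
top (`T^(1)`), the top side left to right (`T^(2)`), the right side top to bottom
(`T^(3)`), and the bottom side right to left (`T^(4)`). -/
def TofD (n : ℕ) (D : ℕ → ℕ → ℕ → ℕ) : ℕ → ℕ → ℕ → ℕ :=
  fun i j k =>
    if 1 ≤ j ∧ j ≤ k ∧ k ≤ n then
      if i = 1 then D 1 0 (j - 1)
      else if i = 2 then D 0 (j - 1) k
      else if i = 3 then D 1 k (k - j)
      else if i = 4 then D 0 (k - j) 0
      else 0
    else 0


/-- Elbow face condition at `(x, kk)`. -/
def ElbF (D : ℕ → ℕ → ℕ → ℕ) (kk x : ℕ) : Prop :=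
  D 1 x kk = D 0 x kk ∧ D 0 x (kk + 1) = D 1 (x + 1) kk ∧ D 1 x kk ≠ D 0 x (kk + 1)

/-- Cross face condition at `(x, kk)`. -/
def CrsF (D : ℕ → ℕ → ℕ → ℕ) (kk x : ℕ) : Prop :=
  D 0 x (kk + 1) = D 0 x kk ∧ D 1 x kk = D 1 (x + 1) kk ∧ D 0 x kk ≠ D 1 x kk

/-- Transposed grid labeling. -/
def gridTr (D : ℕ → ℕ → ℕ → ℕ) : ℕ → ℕ → ℕ → ℕ := fun e x y => D (1 - e) y x

/-- Pipe exit: follow the pipe entering face `x` of row `kk` from the west, eastwards. -/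
def pexit (D : ℕ → ℕ → ℕ → ℕ) (kk x : ℕ) : ℕ :=
  if h : kk ≤ x then kk
  else if D 1 x kk = D 0 x kk then x else pexit D kk (x + 1)
termination_by kk - x
decreasing_by omega

lemma pexit_bounds (D : ℕ → ℕ → ℕ → ℕ) (kk : ℕ) :
    ∀ d x, kk - x ≤ d → x ≤ kk → x ≤ pexit D kk x ∧ pexit D kk x ≤ kk := by
  intro d
  induction d with
  | zero =>
    intro x hd hx
    have hx' : kk ≤ x := by omega
    rw [pexit, dif_pos hx']
    omega
  | succ d ih =>
    intro x hd hx
    rw [pexit]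
    split_ifs with h1 h2
    · omega
    · omega
    · have := ih (x + 1) (by omega) (by omega)
      omega

lemma pexit_exit (D : ℕ → ℕ → ℕ → ℕ) (kk : ℕ)
    (HF : ∀ t, t < kk → ElbF D kk t ∨ CrsF D kk t) :
    ∀ d x, kk - x ≤ d → pexit D kk x < kk → D 0 (pexit D kk x) kk = D 1 x kk := by
  intro d
  induction d with
  | zero =>
    intro x hd hlt
    rw [pexit, dif_pos (by omega : kk ≤ x)] at hlt
    omega
  | succ d ih =>
    intro x hd hlt
    rw [pexit] at hlt ⊢
    split_ifs at hlt ⊢ with h1 h2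
    · omega
    · exact h2.symm
    · rcases HF x (by omega) with he | hc
      · exact absurd he.1 h2
      · rw [hc.2.1]
        exact ih (x + 1) (by omega) hlt

lemma pexit_corner (D : ℕ → ℕ → ℕ → ℕ) (kk : ℕ)
    (HF : ∀ t, t < kk → ElbF D kk t ∨ CrsF D kk t) :
    ∀ d x, kk - x ≤ d → x ≤ kk → pexit D kk x = kk → D 1 kk kk = D 1 x kk := by
  intro d
  induction d with
  | zero =>
    intro x hd hx heq
    have hx' : x = kk := by omega
    rw [hx']
  | succ d ih =>
    intro x hd hx heq
    rw [pexit] at heq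
    split_ifs at heq with h1 h2
    · have : x = kk := by omega
      rw [this]
    · omega
    · rcases HF x (by omega) with he | hc
      · exact absurd he.1 h2
      · rw [hc.2.1]
        exact ih (x + 1) (by omega) (by omega) heq

lemma pexit_coll (D : ℕ → ℕ → ℕ → ℕ) (kk : ℕ)
    (HF : ∀ t, t < kk → ElbF D kk t ∨ CrsF D kk t) :
    ∀ d x, kk - x ≤ d → ∀ t, x ≤ t → t < kk → D 0 t (kk + 1) = D 1 x kk →
      pexit D kk x < t := by
  intro d
  induction d with
  | zero => intro x hd t hxt ht hN; omega
  | succ d ih =>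
    intro x hd t hxt ht hN
    rw [pexit]
    split_ifs with h1 h2
    · omega
    · -- elbow-type branch condition holds at x
      rcases Nat.eq_or_lt_of_le hxt with rfl | hlt
      · rcases HF x (by omega) with he | hc
        · exact absurd hN.symm he.2.2
        · exact absurd h2.symm hc.2.2
      · exact hlt
    · rcases Nat.eq_or_lt_of_le hxt with rfl | hlt
      · rcases HF x (by omega) with he | hc
        · exact absurd he.1 h2
        · exact absurd (hc.1.symm.trans hN) hc.2.2
      · rcases HF x (by omega) with he | hc
        · exact absurd he.1 h2
        · exact ih (x + 1) (by omega) t (by omega) ht (hN.trans hc.2.1)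

lemma strip_count (D : ℕ → ℕ → ℕ → ℕ) (kk a : ℕ)
    (HF : ∀ t, t < kk → ElbF D kk t ∨ CrsF D kk t) :
    ∀ d x, kk - x ≤ d → x ≤ kk →
      ((∑ t ∈ Finset.Ico x kk, if D 0 t kk = a then 1 else 0) +
        (if D 1 kk kk = a then 1 else 0) : ℕ)
      = (∑ t ∈ Finset.Ico x kk, if D 0 t (kk + 1) = a then 1 else 0) +
        (if D 1 x kk = a then 1 else 0) := by
  intro d
  induction d with
  | zero =>
    intro x hd hx
    have hx' : x = kk := by omega
    subst hx'
    simp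
  | succ d ih =>
    intro x hd hx
    rcases Nat.eq_or_lt_of_le hx with rfl | hlt
    · simp
    · rw [Finset.sum_eq_sum_Ico_succ_bot hlt, Finset.sum_eq_sum_Ico_succ_bot hlt]
      have H := ih (x + 1) (by omega) (by omega)
      rcases HF x hlt with ⟨e1, e2, _⟩ | ⟨c1, c2, _⟩
      · rw [e1, e2]
        omega
      · rw [c1, c2]
        omega



lemma TofD_eval1 (n : ℕ) (D : ℕ → ℕ → ℕ → ℕ) (j k : ℕ) (h1 : 1 ≤ j) (h2 : j ≤ k)
    (h3 : k ≤ n) : TofD n D 1 j k = D 1 0 (j - 1) := by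
  simp [TofD, h1, h2, h3]

lemma TofD_eval2 (n : ℕ) (D : ℕ → ℕ → ℕ → ℕ) (j k : ℕ) (h1 : 1 ≤ j) (h2 : j ≤ k)
    (h3 : k ≤ n) : TofD n D 2 j k = D 0 (j - 1) k := by
  norm_num [TofD, h1, h2, h3]

lemma TofD_eval3 (n : ℕ) (D : ℕ → ℕ → ℕ → ℕ) (j k : ℕ) (h1 : 1 ≤ j) (h2 : j ≤ k)
    (h3 : k ≤ n) : TofD n D 3 j k = D 1 k (k - j) := by
  norm_num [TofD, h1, h2, h3]

lemma TofD_eval4 (n : ℕ) (D : ℕ → ℕ → ℕ → ℕ) (j k : ℕ) (h1 : 1 ≤ j) (h2 : j ≤ k)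
    (h3 : k ≤ n) : TofD n D 4 j k = D 0 (k - j) 0 := by
  norm_num [TofD, h1, h2, h3]

lemma row_sum (n : ℕ) (D : ℕ → ℕ → ℕ → ℕ) (a k : ℕ) (h1 : 1 ≤ k) (hn : k ≤ n) :
    ((Finset.Icc 1 4 ×ˢ Finset.Icc 1 k).filter (fun p => TofD n D p.1 p.2 k = a)).card
    = (∑ t ∈ Finset.range k, if D 1 0 t = a then 1 else 0) +
      (∑ t ∈ Finset.range k, if D 0 t k = a then 1 else 0) +
      (∑ t ∈ Finset.range k, if D 1 k t = a then 1 else 0) +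
      (∑ t ∈ Finset.range k, if D 0 t 0 = a then 1 else 0) := by
  rw [Finset.card_filter, Finset.sum_product]
  have h4 : (Finset.Icc 1 4 : Finset ℕ) = {1, 2, 3, 4} := rfl
  rw [h4, Finset.sum_insert (by decide), Finset.sum_insert (by decide),
    Finset.sum_insert (by decide), Finset.sum_singleton]
  have e1 : (∑ j ∈ Finset.Icc 1 k, if TofD n D 1 j k = a then 1 else 0)
      = ∑ t ∈ Finset.range k, if D 1 0 t = a then 1 else 0 := by
    rw [← Finset.Ico_add_one_right_eq_Icc, Finset.sum_Ico_eq_sum_range]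
    refine Finset.sum_congr rfl fun t ht => ?_
    simp only [Finset.mem_range] at ht
    rw [TofD_eval1 n D (1 + t) k (by omega) (by omega) hn, show 1 + t - 1 = t by omega]
  have e2 : (∑ j ∈ Finset.Icc 1 k, if TofD n D 2 j k = a then 1 else 0)
      = ∑ t ∈ Finset.range k, if D 0 t k = a then 1 else 0 := by
    rw [← Finset.Ico_add_one_right_eq_Icc, Finset.sum_Ico_eq_sum_range]
    refine Finset.sum_congr rfl fun t ht => ?_
    simp only [Finset.mem_range] at ht
    rw [TofD_eval2 n D (1 + t) k (by omega) (by omega) hn, show 1 + t - 1 = t by omega]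
  have e3 : (∑ j ∈ Finset.Icc 1 k, if TofD n D 3 j k = a then 1 else 0)
      = ∑ t ∈ Finset.range k, if D 1 k t = a then 1 else 0 := by
    rw [← Finset.Ico_add_one_right_eq_Icc, Finset.sum_Ico_eq_sum_range]
    rw [← Finset.sum_range_reflect (fun t => if D 1 k t = a then 1 else 0) k]
    refine Finset.sum_congr rfl fun t ht => ?_
    simp only [Finset.mem_range] at ht
    rw [TofD_eval3 n D (1 + t) k (by omega) (by omega) hn, show k - (1 + t) = k - 1 - t by omega]
  have e4 : (∑ j ∈ Finset.Icc 1 k, if TofD n D 4 j k = a then 1 else 0)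
      = ∑ t ∈ Finset.range k, if D 0 t 0 = a then 1 else 0 := by
    rw [← Finset.Ico_add_one_right_eq_Icc, Finset.sum_Ico_eq_sum_range]
    rw [← Finset.sum_range_reflect (fun t => if D 0 t 0 = a then 1 else 0) k]
    refine Finset.sum_congr rfl fun t ht => ?_
    simp only [Finset.mem_range] at ht
    rw [TofD_eval4 n D (1 + t) k (by omega) (by omega) hn, show k - (1 + t) = k - 1 - t by omega]
  rw [e1, e2, e3, e4]
  ring

lemma row_zero (n : ℕ) (D : ℕ → ℕ → ℕ → ℕ) (a : ℕ) :
    ((Finset.Icc 1 4 ×ˢ Finset.Icc 1 0).filter (fun p => TofD n D p.1 p.2 0 = a)).card = 0 := by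
  simp

lemma row_step (n : ℕ) (D : ℕ → ℕ → ℕ → ℕ)
    (hDh : ∀ x y, x < n → y ≤ n → D 0 x y ∈ Finset.Icc 1 4)
    (hDv : ∀ x y, x ≤ n → y < n → D 1 x y ∈ Finset.Icc 1 4)
    (hDdiag : ∀ x, x < n →
      (D 0 x x ≠ D 0 x (x + 1) ∧ D 0 x x ≠ D 1 x x ∧ D 0 x x ≠ D 1 (x + 1) x ∧
       D 0 x (x + 1) ≠ D 1 x x ∧ D 0 x (x + 1) ≠ D 1 (x + 1) x ∧
       D 1 x x ≠ D 1 (x + 1) x))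
    (hDoff : ∀ x y, x < n → y < n → x ≠ y →
      ((D 1 x y = D 0 x y ∧ D 0 x (y + 1) = D 1 (x + 1) y ∧ D 1 x y ≠ D 0 x (y + 1)) ∨
       (D 0 x (y + 1) = D 0 x y ∧ D 1 x y = D 1 (x + 1) y ∧ D 0 x y ≠ D 1 x y)))
    (a kk : ℕ) (hkk : kk < n) (ha1 : 1 ≤ a) (ha4 : a ≤ 4) :
    ((Finset.Icc 1 4 ×ˢ Finset.Icc 1 (kk + 1)).filter
        (fun p => TofD n D p.1 p.2 (kk + 1) = a)).card
    = ((Finset.Icc 1 4 ×ˢ Finset.Icc 1 kk).filter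
        (fun p => TofD n D p.1 p.2 kk = a)).card + 1 := by
  have HFt : ∀ t, t < kk → ElbF D kk t ∨ CrsF D kk t :=
    fun t ht => hDoff t kk (by omega) hkk (by omega)
  have HFr : ∀ t, t < kk → ElbF (gridTr D) kk t ∨ CrsF (gridTr D) kk t := by
    intro t ht
    rcases hDoff kk t hkk (by omega) (by omega) with ⟨h1, h2, h3⟩ | ⟨c1, c2, c3⟩
    · exact Or.inl ⟨h1.symm, h2.symm, by
        show D 0 kk t ≠ D 1 (kk + 1) t
        rw [← h1, ← h2]; exact h3⟩
    · exact Or.inr ⟨c2.symm, c1.symm, fun h => c3 (Eq.symm (h : D 1 kk t = D 0 kk t))⟩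
  have hrow1 := row_sum n D a (kk + 1) (by omega) (by omega)
  have hrow0 : ((Finset.Icc 1 4 ×ˢ Finset.Icc 1 kk).filter
        (fun p => TofD n D p.1 p.2 kk = a)).card
      = (∑ t ∈ Finset.range kk, if D 1 0 t = a then 1 else 0) +
        (∑ t ∈ Finset.range kk, if D 0 t kk = a then 1 else 0) +
        (∑ t ∈ Finset.range kk, if D 1 kk t = a then 1 else 0) +
        (∑ t ∈ Finset.range kk, if D 0 t 0 = a then 1 else 0) := by
    rcases Nat.eq_zero_or_pos kk with rfl | hpos
    · simp
    · exact row_sum n D a kk hpos (by omega)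
  have eq1 := Finset.sum_range_succ (fun t => if D 1 0 t = a then 1 else 0) kk
  have eq2 := Finset.sum_range_succ (fun t => if D 0 t (kk + 1) = a then 1 else 0) kk
  have eq3 := Finset.sum_range_succ (fun t => if D 1 (kk + 1) t = a then 1 else 0) kk
  have eq4 := Finset.sum_range_succ (fun t => if D 0 t 0 = a then 1 else 0) kk
  have hstrip : ((∑ t ∈ Finset.range kk, if D 0 t kk = a then 1 else 0) +
        (if D 1 kk kk = a then 1 else 0) : ℕ)
      = (∑ t ∈ Finset.range kk, if D 0 t (kk + 1) = a then 1 else 0) +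
        (if D 1 0 kk = a then 1 else 0) := by
    rw [Finset.range_eq_Ico]
    exact strip_count D kk a HFt kk 0 (by omega) (by omega)
  have hstripT : ((∑ t ∈ Finset.range kk, if D 1 kk t = a then 1 else 0) +
        (if D 0 kk kk = a then 1 else 0) : ℕ)
      = (∑ t ∈ Finset.range kk, if D 1 (kk + 1) t = a then 1 else 0) +
        (if D 0 kk 0 = a then 1 else 0) := by
    rw [Finset.range_eq_Ico]
    exact strip_count (gridTr D) kk a HFr kk 0 (by omega) (by omega)
  have hm1 := hDh kk kk hkk (by omega)
  have hm2 := hDh kk (kk + 1) hkk (by omega)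
  have hm3 := hDv kk kk (by omega) hkk
  have hm4 := hDv (kk + 1) kk (by omega) hkk
  simp only [Finset.mem_Icc] at hm1 hm2 hm3 hm4
  obtain ⟨d1, d2, d3, d4, d5, d6⟩ := hDdiag kk hkk
  have hcor : ((if D 1 kk kk = a then 1 else 0) + (if D 0 kk kk = a then 1 else 0) +
      (if D 0 kk (kk + 1) = a then 1 else 0) + (if D 1 (kk + 1) kk = a then 1 else 0) : ℕ)
      = 1 := by
    split_ifs <;> omega
  omega


lemma hc_lt_iff (n i j i' j' k : ℕ) :
    Hc n i j k < Hc n i' j' k ↔ i * n + j < i' * n + j' := by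
  unfold Hc
  have h1 : ((i * n + j : ℕ) : ℤ) = (i : ℤ) * (n : ℤ) + (j : ℤ) := by push_cast; ring
  have h2 : ((i' * n + j' : ℕ) : ℤ) = (i' : ℤ) * (n : ℤ) + (j' : ℤ) := by push_cast; ring
  rw [← h1, ← h2]
  omega

lemma hc_succ_lt_iff (n i j i'' j'' kk : ℕ) :
    Hc n i j (kk + 1) < Hc n i'' j'' kk ↔ i * n + j ≤ i'' * n + j'' := by
  unfold Hc
  have h1 : ((i * n + j : ℕ) : ℤ) = (i : ℤ) * (n : ℤ) + (j : ℤ) := by push_cast; ring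
  have h2 : ((i'' * n + j'' : ℕ) : ℤ) = (i'' : ℤ) * (n : ℤ) + (j'' : ℤ) := by push_cast; ring
  rw [← h1, ← h2]
  omega

lemma hc_lt_succ_iff (n i'' j'' i' j' kk : ℕ) :
    Hc n i'' j'' kk < Hc n i' j' (kk + 1) ↔ i'' * n + j'' < i' * n + j' := by
  unfold Hc
  have h1 : ((i'' * n + j'' : ℕ) : ℤ) = (i'' : ℤ) * (n : ℤ) + (j'' : ℤ) := by push_cast; ring
  have h2 : ((i' * n + j' : ℕ) : ℤ) = (i' : ℤ) * (n : ℤ) + (j' : ℤ) := by push_cast; ring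
  rw [← h1, ← h2]
  omega

lemma wit_ok (n kk i j i' j' i'' j'' : ℕ) (D : ℕ → ℕ → ℕ → ℕ)
    (h1 : 1 ≤ i'') (h2 : i'' ≤ 4) (h3 : 1 ≤ j'') (h4 : j'' ≤ kk)
    (hT : TofD n D i'' j'' kk = TofD n D i j (kk + 1))
    (hle : i * n + j ≤ i'' * n + j'') (hlt : i'' * n + j'' < i' * n + j') :
    ∃ a b, 1 ≤ a ∧ a ≤ 4 ∧ 1 ≤ b ∧ b ≤ (kk + 1) - 1 ∧
      TofD n D a b ((kk + 1) - 1) = TofD n D i j (kk + 1) ∧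
      Hc n i j (kk + 1) < Hc n a b ((kk + 1) - 1) ∧
      Hc n a b ((kk + 1) - 1) < Hc n i' j' (kk + 1) := by
  refine ⟨i'', j'', h1, h2, h3, by simpa using h4, by simpa using hT, ?_, ?_⟩
  · simpa [Nat.add_sub_cancel] using (hc_succ_lt_iff n i j i'' j'' kk).mpr hle
  · simpa [Nat.add_sub_cancel] using (hc_lt_succ_iff n i'' j'' i' j' kk).mpr hlt

lemma eps_top (D : ℕ → ℕ → ℕ → ℕ) (kk a : ℕ)
    (HFt : ∀ t, t < kk → ElbF D kk t ∨ CrsF D kk t)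
    (x : ℕ) (hx : x ≤ kk) (ha : D 1 x kk = a) :
    (∃ x', x ≤ x' ∧ x' < kk ∧ D 0 x' kk = a) ∨ D 1 kk kk = a := by
  by_cases h : pexit D kk x = kk
  · exact Or.inr ((pexit_corner D kk HFt (kk - x) x le_rfl hx h).trans ha)
  · have hb := pexit_bounds D kk (kk - x) x le_rfl hx
    have he := pexit_exit D kk HFt (kk - x) x le_rfl (by omega)
    exact Or.inl ⟨pexit D kk x, hb.1, by omega, he.trans ha⟩

lemma eps_top_coll (D : ℕ → ℕ → ℕ → ℕ) (kk a : ℕ)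
    (HFt : ∀ t, t < kk → ElbF D kk t ∨ CrsF D kk t)
    (x t : ℕ) (hxt : x ≤ t) (ht : t < kk) (hN : D 0 t (kk + 1) = a)
    (ha : D 1 x kk = a) : ∃ x', x ≤ x' ∧ x' < t ∧ D 0 x' kk = a := by
  have hco := pexit_coll D kk HFt (kk - x) x le_rfl t hxt ht (hN.trans ha.symm)
  have hb := pexit_bounds D kk (kk - x) x le_rfl (by omega)
  have he := pexit_exit D kk HFt (kk - x) x le_rfl (by omega)
  exact ⟨pexit D kk x, hb.1, hco, he.trans ha⟩

lemma lam_right (D : ℕ → ℕ → ℕ → ℕ) (kk a : ℕ)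
    (HFr : ∀ t, t < kk → ElbF (gridTr D) kk t ∨ CrsF (gridTr D) kk t)
    (y : ℕ) (hy : y < kk) (ha : D 1 (kk + 1) y = a) (hsa : D 0 kk kk ≠ a) :
    ∃ y', y' < kk ∧ y ≤ y' ∧ D 1 kk y' = a := by
  rcases HFr y hy with ⟨e1, e2, e3⟩ | ⟨c1, c2, c3⟩
  · have hstart : D 0 kk (y + 1) = a := (Eq.symm (e2 : D 1 (kk + 1) y = D 0 kk (y + 1))).trans ha
    by_cases h : pexit (gridTr D) kk (y + 1) = kk
    · have := pexit_corner (gridTr D) kk HFr (kk - (y + 1)) (y + 1) le_rfl (by omega) h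
      exact absurd ((this : D 0 kk kk = D 0 kk (y + 1)).trans hstart) hsa
    · have hb := pexit_bounds (gridTr D) kk (kk - (y + 1)) (y + 1) le_rfl (by omega)
      have he := pexit_exit (gridTr D) kk HFr (kk - (y + 1)) (y + 1) le_rfl (by omega)
      exact ⟨pexit (gridTr D) kk (y + 1), by omega, by omega,
        (he : D 1 kk _ = D 0 kk (y + 1)).trans hstart⟩
  · exact ⟨y, hy, le_rfl, (c1 : D 1 (kk + 1) y = D 1 kk y).symm.trans ha⟩

lemma lam_right_coll (D : ℕ → ℕ → ℕ → ℕ) (kk a : ℕ)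
    (HFr : ∀ t, t < kk → ElbF (gridTr D) kk t ∨ CrsF (gridTr D) kk t)
    (y y₀ : ℕ) (hy : y < kk) (hyy : y < y₀) (hy₀ : y₀ < kk)
    (ha : D 1 (kk + 1) y = a) (ha₀ : D 1 (kk + 1) y₀ = a) :
    ∃ y', y' < y₀ ∧ y ≤ y' ∧ D 1 kk y' = a := by
  rcases HFr y hy with ⟨e1, e2, e3⟩ | ⟨c1, c2, c3⟩
  · have hstart : D 0 kk (y + 1) = a := (Eq.symm (e2 : D 1 (kk + 1) y = D 0 kk (y + 1))).trans ha
    have hco := pexit_coll (gridTr D) kk HFr (kk - (y + 1)) (y + 1) le_rfl y₀ (by omega) hy₀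
      (show gridTr D 0 y₀ (kk + 1) = gridTr D 1 (y + 1) kk from
        (show D 1 (kk + 1) y₀ = D 0 kk (y + 1) from ha₀.trans hstart.symm))
    have hb := pexit_bounds (gridTr D) kk (kk - (y + 1)) (y + 1) le_rfl (by omega)
    have he := pexit_exit (gridTr D) kk HFr (kk - (y + 1)) (y + 1) le_rfl (by omega)
    exact ⟨pexit (gridTr D) kk (y + 1), hco, by omega,
      (he : D 1 kk _ = D 0 kk (y + 1)).trans hstart⟩
  · exact ⟨y, hyy, le_rfl, (c1 : D 1 (kk + 1) y = D 1 kk y).symm.trans ha⟩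

lemma lam_v0 (D : ℕ → ℕ → ℕ → ℕ) (kk a : ℕ)
    (HFr : ∀ t, t < kk → ElbF (gridTr D) kk t ∨ CrsF (gridTr D) kk t)
    (ha : D 0 kk 0 = a) (hsa : D 0 kk kk ≠ a) :
    ∃ y', y' < kk ∧ D 1 kk y' = a := by
  by_cases h : pexit (gridTr D) kk 0 = kk
  · have := pexit_corner (gridTr D) kk HFr kk 0 (by omega) (by omega) h
    exact absurd ((this : D 0 kk kk = D 0 kk 0).trans ha) hsa
  · have hb := pexit_bounds (gridTr D) kk kk 0 (by omega) (by omega)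
    have he := pexit_exit (gridTr D) kk HFr kk 0 (by omega) (by omega)
    exact ⟨pexit (gridTr D) kk 0, by omega, (he : D 1 kk _ = D 0 kk 0).trans ha⟩

lemma lam_v0_coll (D : ℕ → ℕ → ℕ → ℕ) (kk a : ℕ)
    (HFr : ∀ t, t < kk → ElbF (gridTr D) kk t ∨ CrsF (gridTr D) kk t)
    (y₀ : ℕ) (hy₀ : y₀ < kk) (ha₀ : D 1 (kk + 1) y₀ = a) (ha : D 0 kk 0 = a) :
    ∃ y', y' < y₀ ∧ D 1 kk y' = a := by
  have hco := pexit_coll (gridTr D) kk HFr kk 0 (by omega) y₀ (by omega) hy₀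
    (show gridTr D 0 y₀ (kk + 1) = gridTr D 1 0 kk from
      (show D 1 (kk + 1) y₀ = D 0 kk 0 from ha₀.trans ha.symm))
  have hb := pexit_bounds (gridTr D) kk kk 0 (by omega) (by omega)
  have he := pexit_exit (gridTr D) kk HFr kk 0 (by omega) (by omega)
  exact ⟨pexit (gridTr D) kk 0, hco, (he : D 1 kk _ = D 0 kk 0).trans ha⟩

/-- For every `n ≥ 1` and every admissible edge labeling `D ∈ 𝒟_n` of the square grid
`□_n`, the array `𝒟'(D)` is an interlacing triangular array of rank `4` and height `n`. -/
theorem TofD_isITA (n : ℕ) (hn : 1 ≤ n) (D : ℕ → ℕ → ℕ → ℕ)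
    (hD : IsSquareLab n D) : IsITA 4 n (TofD n D) := by
  obtain ⟨hDh, hDv, hDdiag, hDoff⟩ := hD
  refine ⟨?_, ?_, ?_⟩
  · -- entries lie in {1,...,4}
    intro i j k hi1 hi4 hj1 hjk hkn
    interval_cases i
    · rw [TofD_eval1 n D j k hj1 hjk hkn]
      exact hDv 0 (j - 1) (by omega) (by omega)
    · rw [TofD_eval2 n D j k hj1 hjk hkn]
      exact hDh (j - 1) k (by omega) hkn
    · rw [TofD_eval3 n D j k hj1 hjk hkn]
      exact hDv k (k - j) hkn (by omega)
    · rw [TofD_eval4 n D j k hj1 hjk hkn]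
      exact hDh (k - j) 0 (by omega) (by omega)
  · -- counting
    intro k
    induction k with
    | zero => intro h; omega
    | succ kk ih =>
      intro _ hkn a ha
      simp only [Finset.mem_Icc] at ha
      have hstep := row_step n D hDh hDv hDdiag hDoff a kk (by omega) ha.1 ha.2
      rcases Nat.eq_zero_or_pos kk with rfl | hpos
      · rw [hstep, row_zero n D a]
      · rw [hstep, ih (by omega) (by omega) a (Finset.mem_Icc.mpr ⟨ha.1, ha.2⟩)]
  · -- interlacing
    intro k hk1 hkn i j i' j' hi1 hi4 hj1 hjk hi'1 hi'4 hj'1 hj'k hTeq hHc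
    obtain ⟨kk, rfl⟩ : ∃ kk, k = kk + 1 := ⟨k - 1, by omega⟩
    have hkk : kk < n := by omega
    have HFt : ∀ t, t < kk → ElbF D kk t ∨ CrsF D kk t :=
      fun t ht => hDoff t kk (by omega) hkk (by omega)
    have HFr : ∀ t, t < kk → ElbF (gridTr D) kk t ∨ CrsF (gridTr D) kk t := by
      intro t ht
      rcases hDoff kk t hkk (by omega) (by omega) with ⟨h1, h2, h3⟩ | ⟨c1, c2, c3⟩
      · exact Or.inl ⟨h1.symm, h2.symm, by
          show D 0 kk t ≠ D 1 (kk + 1) t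
          rw [← h1, ← h2]; exact h3⟩
      · exact Or.inr ⟨c2.symm, c1.symm, fun h => c3 (Eq.symm (h : D 1 kk t = D 0 kk t))⟩
    obtain ⟨d1, d2, d3, d4, d5, d6⟩ := hDdiag kk hkk
    have hpos : i * n + j < i' * n + j' := (hc_lt_iff n i j i' j' (kk + 1)).mp hHc
    interval_cases i <;> interval_cases i'
    · -- (1,1)
      rw [TofD_eval1 n D j (kk+1) hj1 hjk hkn, TofD_eval1 n D j' (kk+1) hj'1 hj'k hkn] at hTeq
      exact wit_ok n kk 1 j 1 j' 1 j D (by omega) (by omega) hj1 (by omega)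
        (by rw [TofD_eval1 n D j kk hj1 (by omega) (by omega),
              TofD_eval1 n D j (kk+1) hj1 hjk hkn])
        (by omega) (by omega)
    · -- (1,2)
      rw [TofD_eval1 n D j (kk+1) hj1 hjk hkn, TofD_eval2 n D j' (kk+1) hj'1 hj'k hkn] at hTeq
      by_cases hjkk : j ≤ kk
      · exact wit_ok n kk 1 j 2 j' 1 j D (by omega) (by omega) hj1 hjkk
          (by rw [TofD_eval1 n D j kk hj1 hjkk (by omega),
                TofD_eval1 n D j (kk+1) hj1 hjk hkn])
          (by omega) (by omega)
      · obtain rfl : j = kk + 1 := by omega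
        rw [Nat.add_sub_cancel] at hTeq
        by_cases hj'kk : j' ≤ kk
        · obtain ⟨x', hx1, hx2, hx3⟩ := eps_top_coll D kk (D 1 0 kk) HFt 0 (j' - 1)
            (by omega) (by omega) hTeq.symm rfl
          exact wit_ok n kk 1 (kk+1) 2 j' 2 (x'+1) D (by omega) (by omega) (by omega) (by omega)
            (by rw [TofD_eval2 n D (x'+1) kk (by omega) (by omega) (by omega),
                  TofD_eval1 n D (kk+1) (kk+1) (by omega) (by omega) hkn,
                  Nat.add_sub_cancel, Nat.add_sub_cancel]
                exact hx3)
            (by omega) (by omega)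
        · obtain rfl : j' = kk + 1 := by omega
          rcases eps_top D kk (D 1 0 kk) HFt 0 (by omega) rfl with ⟨x', hx1, hx2, hx3⟩ | hcor
          · exact wit_ok n kk 1 (kk+1) 2 (kk+1) 2 (x'+1) D (by omega) (by omega) (by omega) (by omega)
              (by rw [TofD_eval2 n D (x'+1) kk (by omega) (by omega) (by omega),
                    TofD_eval1 n D (kk+1) (kk+1) (by omega) (by omega) hkn,
                    Nat.add_sub_cancel, Nat.add_sub_cancel]
                  exact hx3)
              (by omega) (by omega)
          · rw [Nat.add_sub_cancel] at hTeq
            exact absurd (hcor.trans hTeq) (Ne.symm d4)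
    · -- (1,3)
      rw [TofD_eval1 n D j (kk+1) hj1 hjk hkn, TofD_eval3 n D j' (kk+1) hj'1 hj'k hkn] at hTeq
      by_cases hjkk : j ≤ kk
      · exact wit_ok n kk 1 j 3 j' 1 j D (by omega) (by omega) hj1 hjkk
          (by rw [TofD_eval1 n D j kk hj1 hjkk (by omega),
                TofD_eval1 n D j (kk+1) hj1 hjk hkn])
          (by omega) (by omega)
      · obtain rfl : j = kk + 1 := by omega
        rw [Nat.add_sub_cancel] at hTeq
        rcases eps_top D kk (D 1 0 kk) HFt 0 (by omega) rfl with ⟨x', hx1, hx2, hx3⟩ | hcor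
        · exact wit_ok n kk 1 (kk+1) 3 j' 2 (x'+1) D (by omega) (by omega) (by omega) (by omega)
            (by rw [TofD_eval2 n D (x'+1) kk (by omega) (by omega) (by omega),
                  TofD_eval1 n D (kk+1) (kk+1) (by omega) (by omega) hkn,
                  Nat.add_sub_cancel, Nat.add_sub_cancel]
                exact hx3)
            (by omega) (by omega)
        · by_cases hj'1' : j' = 1
          · subst hj'1'
            rw [Nat.add_sub_cancel] at hTeq
            exact absurd (hcor.trans hTeq) d6
          · obtain ⟨y', hy1, hy2, hy3⟩ := lam_right D kk (D 1 0 kk) HFr (kk + 1 - j')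
              (by omega) hTeq.symm (fun hs => d2 (hs.trans hcor.symm))
            exact wit_ok n kk 1 (kk+1) 3 j' 3 (kk - y') D (by omega) (by omega) (by omega) (by omega)
              (by rw [TofD_eval3 n D (kk - y') kk (by omega) (by omega) (by omega),
                    TofD_eval1 n D (kk+1) (kk+1) (by omega) (by omega) hkn,
                    Nat.add_sub_cancel, show kk - (kk - y') = y' by omega]
                  exact hy3)
              (by omega) (by omega)
    · -- (1,4)
      rw [TofD_eval1 n D j (kk+1) hj1 hjk hkn, TofD_eval4 n D j' (kk+1) hj'1 hj'k hkn] at hTeq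
      by_cases hj'2 : 2 ≤ j'
      · exact wit_ok n kk 1 j 4 j' 4 (j' - 1) D (by omega) (by omega) (by omega) (by omega)
          (by rw [TofD_eval4 n D (j'-1) kk (by omega) (by omega) (by omega),
                TofD_eval1 n D j (kk+1) hj1 hjk hkn, show kk - (j' - 1) = kk + 1 - j' by omega]
              exact hTeq.symm)
          (by omega) (by omega)
      · obtain rfl : j' = 1 := by omega
        rw [Nat.add_sub_cancel] at hTeq
        by_cases hjkk : j ≤ kk
        · exact wit_ok n kk 1 j 4 1 1 j D (by omega) (by omega) hj1 hjkk
            (by rw [TofD_eval1 n D j kk hj1 hjkk (by omega),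
                  TofD_eval1 n D j (kk+1) hj1 hjk hkn])
            (by omega) (by omega)
        · obtain rfl : j = kk + 1 := by omega
          rw [Nat.add_sub_cancel] at hTeq
          rcases eps_top D kk (D 1 0 kk) HFt 0 (by omega) rfl with ⟨x', hx1, hx2, hx3⟩ | hcor
          · exact wit_ok n kk 1 (kk+1) 4 1 2 (x'+1) D (by omega) (by omega) (by omega) (by omega)
              (by rw [TofD_eval2 n D (x'+1) kk (by omega) (by omega) (by omega),
                    TofD_eval1 n D (kk+1) (kk+1) (by omega) (by omega) hkn,
                    Nat.add_sub_cancel, Nat.add_sub_cancel]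
                  exact hx3)
              (by omega) (by omega)
          · obtain ⟨y', hy1, hy3⟩ := lam_v0 D kk (D 1 0 kk) HFr hTeq.symm
              (fun hs => d2 (hs.trans hcor.symm))
            exact wit_ok n kk 1 (kk+1) 4 1 3 (kk - y') D (by omega) (by omega) (by omega) (by omega)
              (by rw [TofD_eval3 n D (kk - y') kk (by omega) (by omega) (by omega),
                    TofD_eval1 n D (kk+1) (kk+1) (by omega) (by omega) hkn,
                    Nat.add_sub_cancel, show kk - (kk - y') = y' by omega]
                  exact hy3)
              (by omega) (by omega)
    · -- (2,1)
      exact absurd hpos (by omega)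
    · -- (2,2)
      rw [TofD_eval2 n D j (kk+1) hj1 hjk hkn, TofD_eval2 n D j' (kk+1) hj'1 hj'k hkn] at hTeq
      have hjkk : j ≤ kk := by omega
      rcases HFt (j - 1) (by omega) with ⟨e1, e2, e3⟩ | ⟨c1, c2, c3⟩
      · rw [show j - 1 + 1 = j by omega] at e2
        by_cases hj'kk : j' ≤ kk
        · obtain ⟨x', hx1, hx2, hx3⟩ := eps_top_coll D kk (D 0 (j-1) (kk+1)) HFt j (j' - 1)
            (by omega) (by omega) hTeq.symm e2.symm
          exact wit_ok n kk 2 j 2 j' 2 (x'+1) D (by omega) (by omega) (by omega) (by omega)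
            (by rw [TofD_eval2 n D (x'+1) kk (by omega) (by omega) (by omega),
                  TofD_eval2 n D j (kk+1) hj1 hjk hkn, Nat.add_sub_cancel]
                exact hx3)
            (by omega) (by omega)
        · obtain rfl : j' = kk + 1 := by omega
          rcases eps_top D kk (D 0 (j-1) (kk+1)) HFt j (by omega) e2.symm with ⟨x', hx1, hx2, hx3⟩ | hcor
          · exact wit_ok n kk 2 j 2 (kk+1) 2 (x'+1) D (by omega) (by omega) (by omega) (by omega)
              (by rw [TofD_eval2 n D (x'+1) kk (by omega) (by omega) (by omega),
                    TofD_eval2 n D j (kk+1) hj1 hjk hkn, Nat.add_sub_cancel]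
                  exact hx3)
              (by omega) (by omega)
          · rw [Nat.add_sub_cancel] at hTeq
            exact absurd (hcor.trans hTeq) (Ne.symm d4)
      · exact wit_ok n kk 2 j 2 j' 2 j D (by omega) (by omega) hj1 hjkk
          (by rw [TofD_eval2 n D j kk hj1 hjkk (by omega),
                TofD_eval2 n D j (kk+1) hj1 hjk hkn]
              exact c1.symm)
          (by omega) (by omega)
    · -- (2,3)
      rw [TofD_eval2 n D j (kk+1) hj1 hjk hkn, TofD_eval3 n D j' (kk+1) hj'1 hj'k hkn] at hTeq
      by_cases hjkk : j ≤ kk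
      · rcases HFt (j - 1) (by omega) with ⟨e1, e2, e3⟩ | ⟨c1, c2, c3⟩
        · rw [show j - 1 + 1 = j by omega] at e2
          rcases eps_top D kk (D 0 (j-1) (kk+1)) HFt j (by omega) e2.symm with ⟨x', hx1, hx2, hx3⟩ | hcor
          · exact wit_ok n kk 2 j 3 j' 2 (x'+1) D (by omega) (by omega) (by omega) (by omega)
              (by rw [TofD_eval2 n D (x'+1) kk (by omega) (by omega) (by omega),
                    TofD_eval2 n D j (kk+1) hj1 hjk hkn, Nat.add_sub_cancel]
                  exact hx3)
              (by omega) (by omega)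
          · by_cases hj'1' : j' = 1
            · subst hj'1'
              rw [Nat.add_sub_cancel] at hTeq
              exact absurd (hcor.trans hTeq) d6
            · obtain ⟨y', hy1, hy2, hy3⟩ := lam_right D kk (D 0 (j-1) (kk+1)) HFr (kk + 1 - j')
                (by omega) hTeq.symm (fun hs => d2 (hs.trans hcor.symm))
              exact wit_ok n kk 2 j 3 j' 3 (kk - y') D (by omega) (by omega) (by omega) (by omega)
                (by rw [TofD_eval3 n D (kk - y') kk (by omega) (by omega) (by omega),
                      TofD_eval2 n D j (kk+1) hj1 hjk hkn, show kk - (kk - y') = y' by omega]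
                    exact hy3)
                (by omega) (by omega)
        · exact wit_ok n kk 2 j 3 j' 2 j D (by omega) (by omega) hj1 hjkk
            (by rw [TofD_eval2 n D j kk hj1 hjkk (by omega),
                  TofD_eval2 n D j (kk+1) hj1 hjk hkn]
                exact c1.symm)
            (by omega) (by omega)
      · obtain rfl : j = kk + 1 := by omega
        rw [Nat.add_sub_cancel] at hTeq
        by_cases hj'1' : j' = 1
        · subst hj'1'
          rw [Nat.add_sub_cancel] at hTeq
          exact absurd hTeq d5
        · obtain ⟨y', hy1, hy2, hy3⟩ := lam_right D kk (D 0 kk (kk+1)) HFr (kk + 1 - j')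
            (by omega) hTeq.symm d1
          exact wit_ok n kk 2 (kk+1) 3 j' 3 (kk - y') D (by omega) (by omega) (by omega) (by omega)
            (by rw [TofD_eval3 n D (kk - y') kk (by omega) (by omega) (by omega),
                  TofD_eval2 n D (kk+1) (kk+1) (by omega) (by omega) hkn,
                  Nat.add_sub_cancel, show kk - (kk - y') = y' by omega]
                exact hy3)
            (by omega) (by omega)
    · -- (2,4)
      rw [TofD_eval2 n D j (kk+1) hj1 hjk hkn, TofD_eval4 n D j' (kk+1) hj'1 hj'k hkn] at hTeq
      by_cases hj'2 : 2 ≤ j'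
      · exact wit_ok n kk 2 j 4 j' 4 (j' - 1) D (by omega) (by omega) (by omega) (by omega)
          (by rw [TofD_eval4 n D (j'-1) kk (by omega) (by omega) (by omega),
                TofD_eval2 n D j (kk+1) hj1 hjk hkn, show kk - (j' - 1) = kk + 1 - j' by omega]
              exact hTeq.symm)
          (by omega) (by omega)
      · obtain rfl : j' = 1 := by omega
        rw [Nat.add_sub_cancel] at hTeq
        by_cases hjkk : j ≤ kk
        · rcases HFt (j - 1) (by omega) with ⟨e1, e2, e3⟩ | ⟨c1, c2, c3⟩
          · rw [show j - 1 + 1 = j by omega] at e2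
            rcases eps_top D kk (D 0 (j-1) (kk+1)) HFt j (by omega) e2.symm with ⟨x', hx1, hx2, hx3⟩ | hcor
            · exact wit_ok n kk 2 j 4 1 2 (x'+1) D (by omega) (by omega) (by omega) (by omega)
                (by rw [TofD_eval2 n D (x'+1) kk (by omega) (by omega) (by omega),
                      TofD_eval2 n D j (kk+1) hj1 hjk hkn, Nat.add_sub_cancel]
                    exact hx3)
                (by omega) (by omega)
            · obtain ⟨y', hy1, hy3⟩ := lam_v0 D kk (D 0 (j-1) (kk+1)) HFr hTeq.symm
                (fun hs => d2 (hs.trans hcor.symm))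
              exact wit_ok n kk 2 j 4 1 3 (kk - y') D (by omega) (by omega) (by omega) (by omega)
                (by rw [TofD_eval3 n D (kk - y') kk (by omega) (by omega) (by omega),
                      TofD_eval2 n D j (kk+1) hj1 hjk hkn, show kk - (kk - y') = y' by omega]
                    exact hy3)
                (by omega) (by omega)
          · exact wit_ok n kk 2 j 4 1 2 j D (by omega) (by omega) hj1 hjkk
              (by rw [TofD_eval2 n D j kk hj1 hjkk (by omega),
                    TofD_eval2 n D j (kk+1) hj1 hjk hkn]
                  exact c1.symm)
              (by omega) (by omega)
        · obtain rfl : j = kk + 1 := by omega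
          rw [Nat.add_sub_cancel] at hTeq
          obtain ⟨y', hy1, hy3⟩ := lam_v0 D kk (D 0 kk (kk+1)) HFr hTeq.symm d1
          exact wit_ok n kk 2 (kk+1) 4 1 3 (kk - y') D (by omega) (by omega) (by omega) (by omega)
            (by rw [TofD_eval3 n D (kk - y') kk (by omega) (by omega) (by omega),
                  TofD_eval2 n D (kk+1) (kk+1) (by omega) (by omega) hkn,
                  Nat.add_sub_cancel, show kk - (kk - y') = y' by omega]
                exact hy3)
            (by omega) (by omega)
    · -- (3,1)
      exact absurd hpos (by omega)
    · -- (3,2)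
      exact absurd hpos (by omega)
    · -- (3,3)
      rw [TofD_eval3 n D j (kk+1) hj1 hjk hkn, TofD_eval3 n D j' (kk+1) hj'1 hj'k hkn] at hTeq
      have hj'2 : 2 ≤ j' := by omega
      by_cases hj1' : j = 1
      · subst hj1'
        rw [Nat.add_sub_cancel] at hTeq
        obtain ⟨y', hy1, hy2, hy3⟩ := lam_right D kk (D 1 (kk+1) kk) HFr (kk + 1 - j')
          (by omega) hTeq.symm d3
        exact wit_ok n kk 3 1 3 j' 3 (kk - y') D (by omega) (by omega) (by omega) (by omega)
          (by rw [TofD_eval3 n D (kk - y') kk (by omega) (by omega) (by omega),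
                TofD_eval3 n D 1 (kk+1) (by omega) (by omega) hkn,
                Nat.add_sub_cancel, show kk - (kk - y') = y' by omega]
              exact hy3)
          (by omega) (by omega)
      · obtain ⟨y', hy1, hy2, hy3⟩ := lam_right_coll D kk (D 1 (kk+1) (kk+1-j)) HFr
          (kk + 1 - j') (kk + 1 - j) (by omega) (by omega) (by omega) hTeq.symm rfl
        exact wit_ok n kk 3 j 3 j' 3 (kk - y') D (by omega) (by omega) (by omega) (by omega)
          (by rw [TofD_eval3 n D (kk - y') kk (by omega) (by omega) (by omega),
                TofD_eval3 n D j (kk+1) hj1 hjk hkn, show kk - (kk - y') = y' by omega]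
              exact hy3)
          (by omega) (by omega)
    · -- (3,4)
      rw [TofD_eval3 n D j (kk+1) hj1 hjk hkn, TofD_eval4 n D j' (kk+1) hj'1 hj'k hkn] at hTeq
      by_cases hj'2 : 2 ≤ j'
      · exact wit_ok n kk 3 j 4 j' 4 (j' - 1) D (by omega) (by omega) (by omega) (by omega)
          (by rw [TofD_eval4 n D (j'-1) kk (by omega) (by omega) (by omega),
                TofD_eval3 n D j (kk+1) hj1 hjk hkn, show kk - (j' - 1) = kk + 1 - j' by omega]
              exact hTeq.symm)
          (by omega) (by omega)
      · obtain rfl : j' = 1 := by omega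
        rw [Nat.add_sub_cancel] at hTeq
        by_cases hj1' : j = 1
        · subst hj1'
          rw [Nat.add_sub_cancel] at hTeq
          obtain ⟨y', hy1, hy3⟩ := lam_v0 D kk (D 1 (kk+1) kk) HFr hTeq.symm d3
          exact wit_ok n kk 3 1 4 1 3 (kk - y') D (by omega) (by omega) (by omega) (by omega)
            (by rw [TofD_eval3 n D (kk - y') kk (by omega) (by omega) (by omega),
                  TofD_eval3 n D 1 (kk+1) (by omega) (by omega) hkn,
                  Nat.add_sub_cancel, show kk - (kk - y') = y' by omega]
                exact hy3)
            (by omega) (by omega)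
        · obtain ⟨y', hy1, hy3⟩ := lam_v0_coll D kk (D 1 (kk+1) (kk+1-j)) HFr (kk + 1 - j)
            (by omega) rfl hTeq.symm
          exact wit_ok n kk 3 j 4 1 3 (kk - y') D (by omega) (by omega) (by omega) (by omega)
            (by rw [TofD_eval3 n D (kk - y') kk (by omega) (by omega) (by omega),
                  TofD_eval3 n D j (kk+1) hj1 hjk hkn, show kk - (kk - y') = y' by omega]
                exact hy3)
            (by omega) (by omega)
    · -- (4,1)
      exact absurd hpos (by omega)
    · -- (4,2)
      exact absurd hpos (by omega)
    · -- (4,3)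
      exact absurd hpos (by omega)
    · -- (4,4)
      rw [TofD_eval4 n D j (kk+1) hj1 hjk hkn, TofD_eval4 n D j' (kk+1) hj'1 hj'k hkn] at hTeq
      have hj'2 : 2 ≤ j' := by omega
      exact wit_ok n kk 4 j 4 j' 4 (j' - 1) D (by omega) (by omega) (by omega) (by omega)
        (by rw [TofD_eval4 n D (j'-1) kk (by omega) (by omega) (by omega),
              TofD_eval4 n D j (kk+1) hj1 hjk hkn, show kk - (j' - 1) = kk + 1 - j' by omega]
            exact hTeq.symm)
        (by omega) (by omega)
end

section
/- Let T be an interlacing triangular array of rank m and height n, and fix p ∈ {1,…,n}. Then the entries T^{(1)}_{p,k} take a single constant value for all k with p ≤ k ≤ n, and the entries T^{(m)}_{k−p+1,k} take a single constant value for all k with p ≤ k ≤ n. -/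
/-- Interlacing counting lemma: if between any two elements of `Q` there is an
element of `P`, then for any `q ∈ Q` there are at least as many elements of `P`
below `q` as elements of `Q` below `q`. -/
lemma count_lt_le (P Q : Finset ℤ)
    (hbtw : ∀ x ∈ Q, ∀ y ∈ Q, x < y → ∃ z ∈ P, x < z ∧ z < y) :
    ∀ q ∈ Q, (Q.filter (· < q)).card ≤ (P.filter (· < q)).card := by
  have key : ∀ N : ℕ, ∀ q ∈ Q, (Q.filter (· < q)).card ≤ N →
      (Q.filter (· < q)).card ≤ (P.filter (· < q)).card := by
    intro N
    induction N with
    | zero => intro q hq h; exact h.trans (Nat.zero_le _)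
    | succ N ih =>
      intro q hq h
      rcases Finset.eq_empty_or_nonempty (Q.filter (· < q)) with he | hne
      · simp [he]
      · obtain ⟨hyQ, hyq⟩ := Finset.mem_filter.mp ((Q.filter (· < q)).max'_mem hne)
        have hyle : ∀ x ∈ Q.filter (· < q), x ≤ (Q.filter (· < q)).max' hne :=
          fun x hx => Finset.le_max' _ x hx
        set y := (Q.filter (· < q)).max' hne with hy
        obtain ⟨z, hzP, hyz, hzq⟩ := hbtw y hyQ q hq hyq
        have hQy : Q.filter (· < y) = (Q.filter (· < q)).erase y := by
          ext x
          simp only [Finset.mem_filter, Finset.mem_erase]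
          constructor
          · rintro ⟨hxQ, hxy⟩
            exact ⟨ne_of_lt hxy, hxQ, hxy.trans hyq⟩
          · rintro ⟨hne2, hxQ, hxq⟩
            refine ⟨hxQ, lt_of_le_of_ne ?_ hne2⟩
            exact hyle x (Finset.mem_filter.mpr ⟨hxQ, hxq⟩)
        have hmem : y ∈ Q.filter (· < q) := Finset.mem_filter.mpr ⟨hyQ, hyq⟩
        have hcard : (Q.filter (· < y)).card + 1 = (Q.filter (· < q)).card := by
          rw [hQy, Finset.card_erase_of_mem hmem]
          have := Finset.card_pos.mpr ⟨y, hmem⟩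
          omega
        have h1 := ih y hyQ (by omega)
        have h2 : insert z (P.filter (· < y)) ⊆ P.filter (· < q) := by
          intro x hx
          rcases Finset.mem_insert.mp hx with rfl | hx
          · exact Finset.mem_filter.mpr ⟨hzP, hzq⟩
          · rw [Finset.mem_filter] at hx ⊢
            exact ⟨hx.1, hx.2.trans hyq⟩
        have h3 : z ∉ P.filter (· < y) := by
          simp only [Finset.mem_filter]
          rintro ⟨-, hzy⟩; exact absurd hzy (not_lt.mpr hyz.le)
        have h4 := Finset.card_le_card h2
        rw [Finset.card_insert_of_notMem h3] at h4
        omega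
  intro q hq; exact key _ q hq le_rfl

lemma count_gt_le (P Q : Finset ℤ)
    (hbtw : ∀ x ∈ Q, ∀ y ∈ Q, x < y → ∃ z ∈ P, x < z ∧ z < y) :
    ∀ q ∈ Q, (Q.filter (q < ·)).card ≤ (P.filter (q < ·)).card := by
  have key : ∀ N : ℕ, ∀ q ∈ Q, (Q.filter (q < ·)).card ≤ N →
      (Q.filter (q < ·)).card ≤ (P.filter (q < ·)).card := by
    intro N
    induction N with
    | zero => intro q hq h; exact h.trans (Nat.zero_le _)
    | succ N ih =>
      intro q hq h
      rcases Finset.eq_empty_or_nonempty (Q.filter (q < ·)) with he | hne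
      · simp [he]
      · obtain ⟨hyQ, hyq⟩ := Finset.mem_filter.mp ((Q.filter (q < ·)).min'_mem hne)
        have hyle : ∀ x ∈ Q.filter (q < ·), (Q.filter (q < ·)).min' hne ≤ x :=
          fun x hx => Finset.min'_le _ x hx
        set y := (Q.filter (q < ·)).min' hne with hy
        obtain ⟨z, hzP, hqz, hzy⟩ := hbtw q hq y hyQ hyq
        have hQy : Q.filter (y < ·) = (Q.filter (q < ·)).erase y := by
          ext x
          simp only [Finset.mem_filter, Finset.mem_erase]
          constructor
          · rintro ⟨hxQ, hxy⟩
            exact ⟨(ne_of_lt hxy).symm, hxQ, hyq.trans hxy⟩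
          · rintro ⟨hne2, hxQ, hxq⟩
            refine ⟨hxQ, lt_of_le_of_ne ?_ (Ne.symm hne2)⟩
            exact hyle x (Finset.mem_filter.mpr ⟨hxQ, hxq⟩)
        have hmem : y ∈ Q.filter (q < ·) := Finset.mem_filter.mpr ⟨hyQ, hyq⟩
        have hcard : (Q.filter (y < ·)).card + 1 = (Q.filter (q < ·)).card := by
          rw [hQy, Finset.card_erase_of_mem hmem]
          have := Finset.card_pos.mpr ⟨y, hmem⟩
          omega
        have h1 := ih y hyQ (by omega)
        have h2 : insert z (P.filter (y < ·)) ⊆ P.filter (q < ·) := by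
          intro x hx
          rcases Finset.mem_insert.mp hx with rfl | hx
          · exact Finset.mem_filter.mpr ⟨hzP, hqz⟩
          · rw [Finset.mem_filter] at hx ⊢
            exact ⟨hx.1, hqz.trans (hzy.trans hx.2)⟩
        have h3 : z ∉ P.filter (y < ·) := by
          simp only [Finset.mem_filter]
          rintro ⟨-, hzy'⟩; exact absurd hzy' (not_lt.mpr hzy.le)
        have h4 := Finset.card_le_card h2
        rw [Finset.card_insert_of_notMem h3] at h4
        omega
  intro q hq; exact key _ q hq le_rfl

lemma count_eq (P Q : Finset ℤ)
    (hbtw : ∀ x ∈ Q, ∀ y ∈ Q, x < y → ∃ z ∈ P, x < z ∧ z < y)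
    (hdisj : ∀ x ∈ P, x ∉ Q) (hcard : P.card + 1 = Q.card) :
    ∀ q ∈ Q, (P.filter (· < q)).card = (Q.filter (· < q)).card := by
  intro q hq
  have a1 := count_lt_le P Q hbtw q hq
  have a2 := count_gt_le P Q hbtw q hq
  have hqP : q ∉ P := fun h => hdisj q h hq
  have hPsplit : (P.filter (· < q)).card + (P.filter (q < ·)).card ≤ P.card := by
    rw [← Finset.card_union_of_disjoint]
    · exact Finset.card_le_card (Finset.union_subset (Finset.filter_subset _ _)
        (Finset.filter_subset _ _))
    · rw [Finset.disjoint_left]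
      intro x hx hx'
      rw [Finset.mem_filter] at hx hx'
      exact absurd (hx.2.trans hx'.2) (lt_irrefl x)
  have hQsplit : (Q.filter (· < q)).card + (Q.filter (q < ·)).card + 1 = Q.card := by
    have he : Q.filter (· < q) ∪ Q.filter (q < ·) = Q.erase q := by
      ext x
      simp only [Finset.mem_union, Finset.mem_filter, Finset.mem_erase]
      constructor
      · rintro (⟨h1, h2⟩ | ⟨h1, h2⟩)
        · exact ⟨ne_of_lt h2, h1⟩
        · exact ⟨(ne_of_lt h2).symm, h1⟩
      · rintro ⟨h1, h2⟩
        rcases lt_trichotomy x q with h | h | h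
        · exact Or.inl ⟨h2, h⟩
        · exact absurd h h1
        · exact Or.inr ⟨h2, h⟩
    have hd : Disjoint (Q.filter (· < q)) (Q.filter (q < ·)) := by
      rw [Finset.disjoint_left]
      intro x hx hx'
      rw [Finset.mem_filter] at hx hx'
      exact absurd (hx.2.trans hx'.2) (lt_irrefl x)
    have := Finset.card_union_of_disjoint hd
    rw [he, Finset.card_erase_of_mem hq] at this
    have := Finset.card_pos.mpr ⟨q, hq⟩
    omega
  omega

lemma count_lt_strict (P Q : Finset ℤ)
    (hbtw : ∀ x ∈ Q, ∀ y ∈ Q, x < y → ∃ z ∈ P, x < z ∧ z < y)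
    (hdisj : ∀ x ∈ P, x ∉ Q) (hcard : P.card + 1 = Q.card) :
    ∀ w ∈ P, (P.filter (· < w)).card < (Q.filter (· < w)).card := by
  intro w hw
  by_contra hcon
  push_neg at hcon
  -- Q has elements above w
  have hwQ : w ∉ Q := hdisj w hw
  have hs : (P.filter (· < w)).card ≤ P.card - 1 := by
    have hsub : P.filter (· < w) ⊆ P.erase w := by
      intro x hx
      rw [Finset.mem_filter] at hx
      exact Finset.mem_erase.mpr ⟨ne_of_lt hx.2, hx.1⟩
    have := Finset.card_le_card hsub
    rw [Finset.card_erase_of_mem hw] at this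
    exact this
  have hQw : (Q.filter (· < w)).card + (Q.filter (w < ·)).card = Q.card := by
    have he : Q.filter (· < w) ∪ Q.filter (w < ·) = Q := by
      ext x
      simp only [Finset.mem_union, Finset.mem_filter]
      constructor
      · rintro (⟨h1, -⟩ | ⟨h1, -⟩) <;> exact h1
      · intro hx
        rcases lt_trichotomy x w with h | h | h
        · exact Or.inl ⟨hx, h⟩
        · exact absurd (h ▸ hx) hwQ
        · exact Or.inr ⟨hx, h⟩
    have hd : Disjoint (Q.filter (· < w)) (Q.filter (w < ·)) := by
      rw [Finset.disjoint_left]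
      intro x hx hx'
      rw [Finset.mem_filter] at hx hx'
      exact absurd (hx.2.trans hx'.2) (lt_irrefl x)
    rw [← Finset.card_union_of_disjoint hd, he]
  have hne : (Q.filter (w < ·)).Nonempty := by
    rw [← Finset.card_pos]
    have hPpos := Finset.card_pos.mpr ⟨w, hw⟩
    omega
  obtain ⟨hqQ, hwq⟩ := Finset.mem_filter.mp ((Q.filter (w < ·)).min'_mem hne)
  have hqle : ∀ x ∈ Q.filter (w < ·), (Q.filter (w < ·)).min' hne ≤ x :=
    fun x hx => Finset.min'_le _ x hx
  set q := (Q.filter (w < ·)).min' hne with hqdef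
  have hQq : Q.filter (· < q) = Q.filter (· < w) := by
    ext x
    simp only [Finset.mem_filter]
    constructor
    · rintro ⟨hxQ, hxq⟩
      refine ⟨hxQ, ?_⟩
      rcases lt_trichotomy x w with h | h | h
      · exact h
      · exact absurd (h ▸ hxQ) hwQ
      · exact absurd hxq (not_lt.mpr (hqle x (Finset.mem_filter.mpr ⟨hxQ, h⟩)))
    · rintro ⟨hxQ, hxw⟩
      exact ⟨hxQ, hxw.trans hwq⟩
  have hPq : insert w (P.filter (· < w)) ⊆ P.filter (· < q) := by
    intro x hx
    rcases Finset.mem_insert.mp hx with rfl | hx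
    · exact Finset.mem_filter.mpr ⟨hw, hwq⟩
    · rw [Finset.mem_filter] at hx ⊢
      exact ⟨hx.1, hx.2.trans hwq⟩
  have hwP : w ∉ P.filter (· < w) := by
    simp only [Finset.mem_filter]
    rintro ⟨-, h⟩; exact absurd h (lt_irrefl w)
  have h5 := Finset.card_le_card hPq
  rw [Finset.card_insert_of_notMem hwP] at h5
  have h6 := count_eq P Q hbtw hdisj hcard q hqQ
  rw [hQq] at h6
  omega

lemma hc_eq_nat {n i j i' j' k : ℕ} (h : Hc n i j k = Hc n i' j' k) :
    i * n + j = i' * n + j' := by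
  have : ((i * n + j : ℕ) : ℤ) = ((i' * n + j' : ℕ) : ℤ) := by
    push_cast
    unfold Hc at h
    linarith
  exact_mod_cast this

lemma nat_pair_inj {n i j i' j' : ℕ} (hj : 1 ≤ j) (hjn : j ≤ n) (hj' : 1 ≤ j')
    (hjn' : j' ≤ n) (h : i * n + j = i' * n + j') : i = i' ∧ j = j' := by
  rcases Nat.lt_trichotomy i i' with hlt | heq | hgt
  · exfalso
    have h2 : (i + 1) * n ≤ i' * n := Nat.mul_le_mul_right n (by omega)
    rw [add_mul, one_mul] at h2
    have := hj'
    linarith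
  · subst heq
    omega
  · exfalso
    have h2 : (i' + 1) * n ≤ i * n := Nat.mul_le_mul_right n (by omega)
    rw [add_mul, one_mul] at h2
    linarith

lemma hc_lt_same_iff {n i j p k : ℕ} :
    Hc n i j k < Hc n 1 p k ↔ i * n + j < n + p := by
  rw [show n + p = 1 * n + p by ring, ← @Nat.cast_lt ℤ]
  unfold Hc
  push_cast
  constructor <;> intro h <;> linarith

lemma hc_cross_lt_iff {n i j p k : ℕ} :
    Hc n i j (k + 1) < Hc n 1 p k ↔ i * n + j ≤ n + p := by
  unfold Hc
  constructor
  · intro h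
    have h2 : ((i * n + j : ℕ) : ℤ) < ((n + p : ℕ) : ℤ) + 1 := by
      push_cast at h ⊢
      linarith
    have h3 : (i * n + j : ℕ) < (n + p) + 1 := by exact_mod_cast h2
    omega
  · intro h
    have h2 : ((i * n + j : ℕ) : ℤ) ≤ ((n + p : ℕ) : ℤ) := by exact_mod_cast h
    push_cast at h2 ⊢
    linarith

lemma row_lt_iff {n i j p : ℕ} (hi : 1 ≤ i) (hj : 1 ≤ j) (hpn : p ≤ n) :
    i * n + j < n + p ↔ i = 1 ∧ j < p := by
  constructor
  · intro h
    have hi1 : i = 1 := by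
      by_contra hne
      have h2 : 2 * n ≤ i * n := Nat.mul_le_mul_right n (by omega)
      omega
    subst hi1
    omega
  · rintro ⟨rfl, h⟩
    omega

lemma row_le_iff {n i j p : ℕ} (hi : 1 ≤ i) (hj : 1 ≤ j) (hpn : p ≤ n) :
    i * n + j ≤ n + p ↔ i = 1 ∧ j ≤ p := by
  constructor
  · intro h
    have hi1 : i = 1 := by
      by_contra hne
      have h2 : 2 * n ≤ i * n := Nat.mul_le_mul_right n (by omega)
      omega
    subst hi1
    omega
  · rintro ⟨rfl, h⟩
    omega

lemma hc_parity {n i j k i' j' : ℕ} (h : Hc n i j k = Hc n i' j' (k + 1)) : False := by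
  unfold Hc at h
  have h2 : (2 : ℤ) * (((i : ℤ) * n + j) - ((i' : ℤ) * n + j')) = -1 := by
    push_cast at h
    linarith
  have h3 : (2 : ℤ) ∣ -1 := ⟨_, h2.symm⟩
  norm_num at h3

lemma hc_reflect {m n i j r : ℕ} (him : i ≤ m + 1) (hjr : j ≤ r + 1) :
    Hc n (m + 1 - i) (r + 1 - j) r = 2 * (m : ℤ) * n + 2 - Hc n i j r := by
  unfold Hc
  have e1 : ((m + 1 - i : ℕ) : ℤ) = (m : ℤ) + 1 - i := by
    push_cast [Nat.cast_sub him]; ring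
  have e2 : ((r + 1 - j : ℕ) : ℤ) = (r : ℤ) + 1 - j := by
    push_cast [Nat.cast_sub hjr]; ring
  rw [e1, e2]
  ring

lemma step_lemma (m n : ℕ) (hm : 1 ≤ m) (T : ℕ → ℕ → ℕ → ℕ) (hT : IsITA m n T)
    (k : ℕ) (hk1 : 1 ≤ k) (hkn : k + 1 ≤ n) :
    ∀ p, 1 ≤ p → p ≤ k → T 1 p (k + 1) = T 1 p k := by
  obtain ⟨hEntry, hCount, hInter⟩ := hT
  intro p
  induction p using Nat.strong_induction_on with
  | _ p ih =>
    intro hp1 hpk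
    have hpn : p ≤ n := by omega
    set b := T 1 p k with hb
    have hbIcc : b ∈ Finset.Icc 1 m := hEntry 1 p k le_rfl hm hp1 hpk (by omega)
    -- the multiset of positions of b in rows k and k+1
    set S : ℕ → Finset (ℕ × ℕ) := fun r =>
      (Finset.Icc 1 m ×ˢ Finset.Icc 1 r).filter (fun pr => T pr.1 pr.2 r = b) with hS
    set P : Finset ℤ := (S k).image (fun pr => Hc n pr.1 pr.2 k) with hP
    set Q : Finset ℤ := (S (k + 1)).image (fun pr => Hc n pr.1 pr.2 (k + 1)) with hQ
    -- injectivity of Hc on each row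
    have hinj : ∀ r : ℕ, r ≤ n → Set.InjOn (fun pr : ℕ × ℕ => Hc n pr.1 pr.2 r) (S r) := by
      intro r hrn pr hpr pr' hpr' heq
      simp only [hS, Finset.coe_filter, Set.mem_setOf_eq, Finset.mem_product,
        Finset.mem_Icc] at hpr hpr'
      have h1 := hc_eq_nat heq
      have h2 := nat_pair_inj (n := n) hpr.1.2.1 (by omega) hpr'.1.2.1 (by omega) h1
      exact Prod.ext h2.1 h2.2
    have hmemS : ∀ r (pr : ℕ × ℕ), pr ∈ S r ↔
        (1 ≤ pr.1 ∧ pr.1 ≤ m) ∧ (1 ≤ pr.2 ∧ pr.2 ≤ r) ∧ T pr.1 pr.2 r = b := by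
      intro r pr
      simp only [hS, Finset.mem_filter, Finset.mem_product, Finset.mem_Icc]
      tauto
    have hPcard : P.card = k := by
      rw [hP, Finset.card_image_of_injOn (hinj k (by omega))]
      exact hCount k hk1 (by omega) b hbIcc
    have hQcard : Q.card = k + 1 := by
      rw [hQ, Finset.card_image_of_injOn (hinj (k + 1) hkn)]
      exact hCount (k + 1) (by omega) hkn b hbIcc
    -- interlacing betweenness
    have hbtw : ∀ x ∈ Q, ∀ y ∈ Q, x < y → ∃ z ∈ P, x < z ∧ z < y := by
      intro x hx y hy hxy
      rw [hQ, Finset.mem_image] at hx hy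
      obtain ⟨pr, hpr, rfl⟩ := hx
      obtain ⟨pr', hpr', rfl⟩ := hy
      rw [hmemS] at hpr hpr'
      obtain ⟨⟨hi1, hi2⟩, ⟨hj1, hj2⟩, hv⟩ := hpr
      obtain ⟨⟨hi1', hi2'⟩, ⟨hj1', hj2'⟩, hv'⟩ := hpr'
      obtain ⟨i'', j'', h1, h2, h3, h4, h5, h6, h7⟩ :=
        hInter (k + 1) (by omega) hkn pr.1 pr.2 pr'.1 pr'.2
          hi1 hi2 hj1 hj2 hi1' hi2' hj1' hj2' (hv.trans hv'.symm) hxy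
      have hk1' : k + 1 - 1 = k := by omega
      rw [hk1'] at h4 h5 h6 h7
      refine ⟨Hc n i'' j'' k, ?_, h6, h7⟩
      rw [hP, Finset.mem_image]
      exact ⟨(i'', j''), (hmemS k (i'', j'')).mpr ⟨⟨h1, h2⟩, ⟨h3, h4⟩, h5.trans hv⟩, rfl⟩
    -- disjointness by parity
    have hdisj : ∀ x ∈ P, x ∉ Q := by
      intro x hxP hxQ
      rw [hP, Finset.mem_image] at hxP
      rw [hQ, Finset.mem_image] at hxQ
      obtain ⟨pr, -, h1⟩ := hxP
      obtain ⟨pr', -, h2⟩ := hxQ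
      exact hc_parity (h1.trans h2.symm)
    set w : ℤ := Hc n 1 p k with hw
    have hwP : w ∈ P := by
      rw [hP, Finset.mem_image]
      exact ⟨(1, p), (hmemS k (1, p)).mpr ⟨⟨le_rfl, hm⟩, ⟨hp1, hpk⟩, rfl⟩, rfl⟩
    -- identify the filtered sets
    have hPf : P.filter (· < w) =
        ((Finset.Icc 1 (p - 1)).filter (fun j => T 1 j k = b)).image
          (fun j => Hc n 1 j k) := by
      ext x
      simp only [Finset.mem_filter, Finset.mem_image, Finset.mem_Icc, hP]
      constructor
      · rintro ⟨⟨pr, hpr, rfl⟩, hlt⟩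
        rw [hmemS] at hpr
        obtain ⟨⟨hi1, hi2⟩, ⟨hj1, hj2⟩, hv⟩ := hpr
        have := (row_lt_iff hi1 hj1 hpn).mp (hc_lt_same_iff.mp hlt)
        obtain ⟨he1, he2⟩ := this
        refine ⟨pr.2, ⟨⟨hj1, by omega⟩, ?_⟩, ?_⟩
        · rw [he1] at hv; exact hv
        · rw [he1]
      · rintro ⟨j, ⟨⟨hj1, hj2⟩, hv⟩, rfl⟩
        refine ⟨⟨(1, j), (hmemS k (1, j)).mpr ⟨⟨le_rfl, hm⟩, ⟨hj1, by omega⟩, hv⟩, rfl⟩, ?_⟩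
        exact hc_lt_same_iff.mpr ((row_lt_iff le_rfl hj1 hpn).mpr ⟨rfl, by omega⟩)
    have hQf : Q.filter (· < w) =
        ((Finset.Icc 1 p).filter (fun j => T 1 j (k + 1) = b)).image
          (fun j => Hc n 1 j (k + 1)) := by
      ext x
      simp only [Finset.mem_filter, Finset.mem_image, Finset.mem_Icc, hQ]
      constructor
      · rintro ⟨⟨pr, hpr, rfl⟩, hlt⟩
        rw [hmemS] at hpr
        obtain ⟨⟨hi1, hi2⟩, ⟨hj1, hj2⟩, hv⟩ := hpr
        have := (row_le_iff hi1 hj1 hpn).mp (hc_cross_lt_iff.mp hlt)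
        obtain ⟨he1, he2⟩ := this
        refine ⟨pr.2, ⟨⟨hj1, he2⟩, ?_⟩, ?_⟩
        · rw [he1] at hv; exact hv
        · rw [he1]
      · rintro ⟨j, ⟨⟨hj1, hj2⟩, hv⟩, rfl⟩
        refine ⟨⟨(1, j), (hmemS (k + 1) (1, j)).mpr ⟨⟨le_rfl, hm⟩, ⟨hj1, by omega⟩, hv⟩, rfl⟩, ?_⟩
        exact hc_cross_lt_iff.mpr ((row_le_iff le_rfl hj1 hpn).mpr ⟨rfl, hj2⟩)
    -- cardinalities of the filtered sets
    have hinj1 : ∀ (r : ℕ) (A : Finset ℕ), Set.InjOn (fun j => Hc n 1 j r) A := by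
      intro r A j hj j' hj' heq
      have h1 := hc_eq_nat heq
      omega
    have hscard : (P.filter (· < w)).card =
        ((Finset.Icc 1 (p - 1)).filter (fun j => T 1 j k = b)).card := by
      rw [hPf, Finset.card_image_of_injOn (hinj1 k _)]
    have htcard : (Q.filter (· < w)).card =
        ((Finset.Icc 1 p).filter (fun j => T 1 j (k + 1) = b)).card := by
      rw [hQf, Finset.card_image_of_injOn (hinj1 (k + 1) _)]
    have hmain := count_lt_strict P Q hbtw hdisj (by omega) w hwP
    rw [hscard, htcard] at hmain
    -- use the induction hypothesis on indices < p
    have hicc : Finset.Icc 1 p = insert p (Finset.Icc 1 (p - 1)) := by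
      ext x
      simp only [Finset.mem_Icc, Finset.mem_insert]
      omega
    have hcongr : (Finset.Icc 1 (p - 1)).filter (fun j => T 1 j (k + 1) = b) =
        (Finset.Icc 1 (p - 1)).filter (fun j => T 1 j k = b) := by
      apply Finset.filter_congr
      intro j hj
      rw [Finset.mem_Icc] at hj
      rw [ih j (by omega) hj.1 (by omega)]
    by_contra hcon
    rw [hicc, Finset.filter_insert] at hmain
    rw [if_neg hcon, hcongr] at hmain
    omega

lemma left_const (m n : ℕ) (hm : 1 ≤ m) (T : ℕ → ℕ → ℕ → ℕ) (hT : IsITA m n T)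
    (p : ℕ) (hp : 1 ≤ p) :
    ∀ k k', p ≤ k → k ≤ n → p ≤ k' → k' ≤ n → T 1 p k = T 1 p k' := by
  have base : ∀ k, p ≤ k → k ≤ n → T 1 p k = T 1 p p := by
    intro k
    induction k with
    | zero => intro h1 h2; omega
    | succ k ihk =>
      intro h1 h2
      rcases Nat.lt_or_ge k p with h | h
      · have : p = k + 1 := by omega
        rw [this]
      · rw [step_lemma m n hm T hT k (by omega) h2 p hp h]
        exact ihk h (by omega)
  intro k k' h1 h2 h3 h4
  rw [base k h1 h2, base k' h3 h4]

lemma isITA_reflect (m n : ℕ) (T : ℕ → ℕ → ℕ → ℕ) (hT : IsITA m n T) :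
    IsITA m n (fun i j k => T (m + 1 - i) (k + 1 - j) k) := by
  obtain ⟨hEntry, hCount, hInter⟩ := hT
  refine ⟨?_, ?_, ?_⟩
  · intro i j k hi1 hi2 hj1 hj2 hkn
    exact hEntry (m + 1 - i) (k + 1 - j) k (by omega) (by omega) (by omega) (by omega) hkn
  · intro k hk1 hkn a ha
    have hb : ((Finset.Icc 1 m ×ˢ Finset.Icc 1 k).filter
          (fun pr => T (m + 1 - pr.1) (k + 1 - pr.2) k = a)).card =
        ((Finset.Icc 1 m ×ˢ Finset.Icc 1 k).filter (fun pr => T pr.1 pr.2 k = a)).card := by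
      apply Finset.card_bij' (i := fun pr _ => ((m + 1 - pr.1, k + 1 - pr.2) : ℕ × ℕ))
        (j := fun pr _ => ((m + 1 - pr.1, k + 1 - pr.2) : ℕ × ℕ))
      · intro pr hpr
        simp only [Finset.mem_filter, Finset.mem_product, Finset.mem_Icc] at hpr ⊢
        exact ⟨⟨by omega, by omega⟩, hpr.2⟩
      · intro pr hpr
        simp only [Finset.mem_filter, Finset.mem_product, Finset.mem_Icc] at hpr ⊢
        refine ⟨⟨by omega, by omega⟩, ?_⟩
        have e1 : m + 1 - (m + 1 - pr.1) = pr.1 := by omega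
        have e2 : k + 1 - (k + 1 - pr.2) = pr.2 := by omega
        rw [e1, e2]
        exact hpr.2
      · intro pr hpr
        simp only [Finset.mem_filter, Finset.mem_product, Finset.mem_Icc] at hpr
        have e1 : m + 1 - (m + 1 - pr.1) = pr.1 := by omega
        have e2 : k + 1 - (k + 1 - pr.2) = pr.2 := by omega
        simp [e1, e2]
      · intro pr hpr
        simp only [Finset.mem_filter, Finset.mem_product, Finset.mem_Icc] at hpr
        have e1 : m + 1 - (m + 1 - pr.1) = pr.1 := by omega
        have e2 : k + 1 - (k + 1 - pr.2) = pr.2 := by omega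
        simp [e1, e2]
    rw [hb]
    exact hCount k hk1 hkn a ha
  · intro k hk1 hkn i j i' j' hi1 hi2 hj1 hj2 hi1' hi2' hj1' hj2' hTeq hHlt
    simp only at hTeq
    have hr1 : Hc n (m + 1 - i) (k + 1 - j) k = 2 * (m : ℤ) * n + 2 - Hc n i j k :=
      hc_reflect (by omega) (by omega)
    have hr2 : Hc n (m + 1 - i') (k + 1 - j') k = 2 * (m : ℤ) * n + 2 - Hc n i' j' k :=
      hc_reflect (by omega) (by omega)
    have hlt' : Hc n (m + 1 - i') (k + 1 - j') k < Hc n (m + 1 - i) (k + 1 - j) k := by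
      rw [hr1, hr2]; linarith
    obtain ⟨i'', j'', h1, h2, h3, h4, h5, h6, h7⟩ :=
      hInter k hk1 hkn (m + 1 - i') (k + 1 - j') (m + 1 - i) (k + 1 - j)
        (by omega) (by omega) (by omega) (by omega) (by omega) (by omega) (by omega) (by omega)
        hTeq.symm hlt'
    have hk2 : 2 ≤ k := by omega
    refine ⟨m + 1 - i'', k - j'', by omega, by omega, by omega, by omega, ?_, ?_, ?_⟩
    · simp only
      have e1 : m + 1 - (m + 1 - i'') = i'' := by omega
      have e2 : k - 1 + 1 - (k - j'') = j'' := by omega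
      rw [e1, e2, h5, hTeq]
    · have e3 : k - j'' = (k - 1) + 1 - j'' := by omega
      have hr3 : Hc n (m + 1 - i'') ((k - 1) + 1 - j'') (k - 1) =
          2 * (m : ℤ) * n + 2 - Hc n i'' j'' (k - 1) := hc_reflect (by omega) (by omega)
      rw [e3, hr3]
      linarith [h7, hr1.symm]
      -- Hc i j k < 2mn+2 - Hc i'' j'' (k-1)
    · have e3 : k - j'' = (k - 1) + 1 - j'' := by omega
      have hr3 : Hc n (m + 1 - i'') ((k - 1) + 1 - j'') (k - 1) =
          2 * (m : ℤ) * n + 2 - Hc n i'' j'' (k - 1) := hc_reflect (by omega) (by omega)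
      rw [e3, hr3]
      linarith [h6, hr2.symm]


/-- In an interlacing triangular array of rank `m` and height `n`, for any fixed
`p ∈ {1,…,n}` the entries `T^(1)_(p,k)` take a single constant value for
`p ≤ k ≤ n`, and the entries `T^(m)_(k-p+1,k)` take a single constant value for
`p ≤ k ≤ n`. -/
theorem side_triangles_constant (m n : ℕ) (hm : 1 ≤ m) (T : ℕ → ℕ → ℕ → ℕ)
    (hT : IsITA m n T) (p : ℕ) (hp : 1 ≤ p) (hpn : p ≤ n) :
    (∀ k k', p ≤ k → k ≤ n → p ≤ k' → k' ≤ n → T 1 p k = T 1 p k') ∧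
    (∀ k k', p ≤ k → k ≤ n → p ≤ k' → k' ≤ n →
        T m (k - p + 1) k = T m (k' - p + 1) k') := by
  constructor
  · exact left_const m n hm T hT p hp
  · intro k k' h1 h2 h3 h4
    have := left_const m n hm _ (isITA_reflect m n T hT) p hp k k' h1 h2 h3 h4
    have e1 : m + 1 - 1 = m := by omega
    have e2 : k + 1 - p = k - p + 1 := by omega
    have e3 : k' + 1 - p = k' - p + 1 := by omega
    rw [e1, e2, e3] at this
    exact this
end

section
/- Let n ≥ 1, let λ^{(1)} ∈ {2,3}^n, λ^{(2)} ∈ {1,2,3}^n, λ^{(3)} ∈ {1,3}^n, let P be a 1/2/3-puzzle on Δ_n with boundary conditions (λ^{(1)},λ^{(2)},λ^{(3)}), and let T = 𝒯(P). Then the following are equivalent: (b) no upward face of P has its left edge labeled 1, its right edge labeled 3, and its bottom edge labeled 2; (c) the triangle T^{(2)} contains no entry equal to 1 whose upper-left neighbor is 3, and no entry equal to 3 whose upper-left neighbor is 3 and whose upper-right neighbor is 2; (d) the triangle T^{(2)} contains no entry equal to 2 whose upper-right neighbor is 3, and no entry equal to 3 whose upper-left neighbor is 1 and whose upper-right neighbor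 is 3. -/
private lemma mem123 {a : ℕ} (h : a ∈ Finset.Icc 1 3) : 1 ≤ a ∧ a ≤ 3 := by
  simpa [Finset.mem_Icc] using h

private lemma c_to_bad (n : ℕ) (P : ℕ → ℕ → ℕ → ℕ) (hP : IsPuzzle123 n P)
    (x y : ℕ) (h : x + y + 1 < n)
    (hc : (P 2 x y = 1 ∧ P 2 x (y+1) = 3) ∨
          (P 2 x y = 3 ∧ P 2 x (y+1) = 3 ∧ P 2 (x+1) y = 2)) :
    ∃ a b, a + b < n ∧ P 1 a b = 1 ∧ P 2 a b = 3 ∧ P 0 a b = 2 := by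
  obtain ⟨hmem, hup, hdn⟩ := hP
  have d := hdn x y h
  have u1 := hup x (y+1) (by omega)
  have u2 := hup (x+1) y (by omega)
  have m1 := mem123 (hmem 1 x (y+1) (by norm_num) (by omega))
  have m0 := mem123 (hmem 0 x (y+1) (by norm_num) (by omega))
  have mf := mem123 (hmem 1 (x+1) y (by norm_num) (by omega))
  rcases hc with ⟨ha, hb⟩ | ⟨ha, hb, hc'⟩
  · exact ⟨x, y+1, by omega, by omega, hb, by omega⟩
  · exact ⟨x, y+1, by omega, by omega, hb, by omega⟩

private lemma d_to_bad (n : ℕ) (P : ℕ → ℕ → ℕ → ℕ) (hP : IsPuzzle123 n P)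
    (x y : ℕ) (h : x + y + 1 < n)
    (hc : (P 2 x y = 2 ∧ P 2 (x+1) y = 3) ∨
          (P 2 x y = 3 ∧ P 2 x (y+1) = 1 ∧ P 2 (x+1) y = 3)) :
    ∃ a b, a + b < n ∧ P 1 a b = 1 ∧ P 2 a b = 3 ∧ P 0 a b = 2 := by
  obtain ⟨hmem, hup, hdn⟩ := hP
  have d := hdn x y h
  have u1 := hup x (y+1) (by omega)
  have u2 := hup (x+1) y (by omega)
  have m0 := mem123 (hmem 0 x (y+1) (by norm_num) (by omega))
  have mf := mem123 (hmem 1 (x+1) y (by norm_num) (by omega))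
  have mB := mem123 (hmem 0 (x+1) y (by norm_num) (by omega))
  rcases hc with ⟨ha, hb⟩ | ⟨ha, hb, hc'⟩
  · exact ⟨x+1, y, by omega, by omega, hb, by omega⟩
  · exact ⟨x+1, y, by omega, by omega, hc', by omega⟩

private lemma bad_to_C (n : ℕ) (P : ℕ → ℕ → ℕ → ℕ) (hP : IsPuzzle123 n P)
    (lam : ℕ → ℕ → ℕ)
    (h3 : ∀ j, 1 ≤ j → j ≤ n → lam 3 j = 1 ∨ lam 3 j = 3)
    (hbd : ∀ j, 1 ≤ j → j ≤ n →
        P 1 0 (j - 1) = lam 1 j ∧ P 2 (j - 1) (n - j) = lam 2 j ∧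
        P 0 (n - j) 0 = lam 3 j) :
    ∀ y x, x + y < n → P 1 x y = 1 → P 2 x y = 3 → P 0 x y = 2 →
      ∃ a b, a + b + 1 < n ∧
        ((P 2 a b = 1 ∧ P 2 a (b+1) = 3) ∨
         (P 2 a b = 3 ∧ P 2 a (b+1) = 3 ∧ P 2 (a+1) b = 2)) := by
  obtain ⟨hmem, hup, hdn⟩ := hP
  intro y
  induction y with
  | zero =>
    intro x hx _ _ hB
    have hb := (hbd (n - x) (by omega) (by omega)).2.2
    have hx' : n - (n - x) = x := by omega
    rw [hx'] at hb
    rcases h3 (n - x) (by omega) (by omega) with h | h <;> omega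
  | succ y ih =>
    intro x hx hL hR hB
    have d := hdn x y (by omega)
    have u2 := hup (x+1) y (by omega)
    have m2 := mem123 (hmem 2 x y (by norm_num) (by omega))
    have mR := mem123 (hmem 2 (x+1) y (by norm_num) (by omega))
    have mf := mem123 (hmem 1 (x+1) y (by norm_num) (by omega))
    have mB := mem123 (hmem 0 (x+1) y (by norm_num) (by omega))
    have he : P 2 x y = 1 ∨ P 2 x y = 3 := by omega
    rcases he with he | he
    · exact ⟨x, y, by omega, Or.inl ⟨he, hR⟩⟩
    · have hf : P 1 (x+1) y = 1 := by omega
      have hRR : P 2 (x+1) y = 2 ∨ P 2 (x+1) y = 3 := by omega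
      rcases hRR with hRR | hRR
      · exact ⟨x, y, by omega, Or.inr ⟨he, hR, hRR⟩⟩
      · exact ih (x+1) (by omega) hf hRR (by omega)

private lemma bad_to_D (n : ℕ) (P : ℕ → ℕ → ℕ → ℕ) (hP : IsPuzzle123 n P)
    (lam : ℕ → ℕ → ℕ)
    (h1 : ∀ j, 1 ≤ j → j ≤ n → lam 1 j = 2 ∨ lam 1 j = 3)
    (hbd : ∀ j, 1 ≤ j → j ≤ n →
        P 1 0 (j - 1) = lam 1 j ∧ P 2 (j - 1) (n - j) = lam 2 j ∧
        P 0 (n - j) 0 = lam 3 j) :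
    ∀ x y, x + y < n → P 1 x y = 1 → P 2 x y = 3 → P 0 x y = 2 →
      ∃ a b, a + b + 1 < n ∧
        ((P 2 a b = 2 ∧ P 2 (a+1) b = 3) ∨
         (P 2 a b = 3 ∧ P 2 a (b+1) = 1 ∧ P 2 (a+1) b = 3)) := by
  obtain ⟨hmem, hup, hdn⟩ := hP
  intro x
  induction x with
  | zero =>
    intro y hx hL _ _
    have hb := (hbd (y+1) (by omega) (by omega)).1
    have hy : y + 1 - 1 = y := by omega
    rw [hy] at hb
    rcases h1 (y+1) (by omega) (by omega) with h | h <;> omega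
  | succ x ih =>
    intro y hx hL hR hB
    have d := hdn x y (by omega)
    have u1 := hup x (y+1) (by omega)
    have m2 := mem123 (hmem 2 x y (by norm_num) (by omega))
    have mc := mem123 (hmem 0 x (y+1) (by norm_num) (by omega))
    have mR := mem123 (hmem 2 x (y+1) (by norm_num) (by omega))
    have mL := mem123 (hmem 1 x (y+1) (by norm_num) (by omega))
    have he : P 2 x y = 2 ∨ P 2 x y = 3 := by omega
    rcases he with he | he
    · exact ⟨x, y, by omega, Or.inl ⟨he, hR⟩⟩
    · have hc : P 0 x (y+1) = 2 := by omega
      have hRR : P 2 x (y+1) = 1 ∨ P 2 x (y+1) = 3 := by omega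
      rcases hRR with hRR | hRR
      · exact ⟨x, y, by omega, Or.inr ⟨he, hRR, hR⟩⟩
      · exact ih (y+1) (by omega) (by omega) hRR hc

private lemma TofP2 (n : ℕ) (P : ℕ → ℕ → ℕ → ℕ) (j k : ℕ)
    (h1 : 1 ≤ j) (h2 : j ≤ k) (h3 : k ≤ n) :
    TofP n P 2 j k = P 2 (j - 1) (k - j) := by
  simp [TofP, h1, h2, h3]

private lemma tof_c1 (n : ℕ) (P : ℕ → ℕ → ℕ → ℕ) :
    (∃ j k, 2 ≤ k ∧ k ≤ n ∧ 1 ≤ j ∧ j ≤ k - 1 ∧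
        TofP n P 2 j (k - 1) = 1 ∧ TofP n P 2 j k = 3) ↔
    (∃ x y, x + y + 1 < n ∧ P 2 x y = 1 ∧ P 2 x (y+1) = 3) := by
  constructor
  · rintro ⟨j, k, hk2, hkn, hj1, hjk, hA, hB⟩
    rw [TofP2 n P j (k-1) hj1 (by omega) (by omega)] at hA
    rw [TofP2 n P j k hj1 (by omega) hkn] at hB
    refine ⟨j-1, k-1-j, by omega, hA, ?_⟩
    rw [show k-1-j+1 = k-j from by omega]; exact hB
  · rintro ⟨x, y, h, ha, hb⟩
    refine ⟨x+1, x+y+2, by omega, by omega, by omega, by omega, ?_, ?_⟩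
    · rw [TofP2 n P (x+1) (x+y+2-1) (by omega) (by omega) (by omega),
        show x+1-1 = x from by omega, show x+y+2-1-(x+1) = y from by omega]
      exact ha
    · rw [TofP2 n P (x+1) (x+y+2) (by omega) (by omega) (by omega),
        show x+1-1 = x from by omega, show x+y+2-(x+1) = y+1 from by omega]
      exact hb

private lemma tof_c2 (n : ℕ) (P : ℕ → ℕ → ℕ → ℕ) :
    (∃ j k, 2 ≤ k ∧ k ≤ n ∧ 1 ≤ j ∧ j ≤ k - 1 ∧
        TofP n P 2 j (k - 1) = 3 ∧ TofP n P 2 j k = 3 ∧ TofP n P 2 (j + 1) k = 2) ↔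
    (∃ x y, x + y + 1 < n ∧ P 2 x y = 3 ∧ P 2 x (y+1) = 3 ∧ P 2 (x+1) y = 2) := by
  constructor
  · rintro ⟨j, k, hk2, hkn, hj1, hjk, hA, hB, hC⟩
    rw [TofP2 n P j (k-1) hj1 (by omega) (by omega)] at hA
    rw [TofP2 n P j k hj1 (by omega) hkn] at hB
    rw [TofP2 n P (j+1) k (by omega) (by omega) hkn] at hC
    refine ⟨j-1, k-1-j, by omega, hA, ?_, ?_⟩
    · rw [show k-1-j+1 = k-j from by omega]; exact hB
    · rw [show j-1+1 = j+1-1 from by omega, show k-1-j = k-(j+1) from by omega]; exact hC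
  · rintro ⟨x, y, h, ha, hb, hc⟩
    refine ⟨x+1, x+y+2, by omega, by omega, by omega, by omega, ?_, ?_, ?_⟩
    · rw [TofP2 n P (x+1) (x+y+2-1) (by omega) (by omega) (by omega),
        show x+1-1 = x from by omega, show x+y+2-1-(x+1) = y from by omega]
      exact ha
    · rw [TofP2 n P (x+1) (x+y+2) (by omega) (by omega) (by omega),
        show x+1-1 = x from by omega, show x+y+2-(x+1) = y+1 from by omega]
      exact hb
    · rw [TofP2 n P (x+1+1) (x+y+2) (by omega) (by omega) (by omega),
        show x+1+1-1 = x+1 from by omega, show x+y+2-(x+1+1) = y from by omega]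
      exact hc

private lemma tof_d1 (n : ℕ) (P : ℕ → ℕ → ℕ → ℕ) :
    (∃ j k, 2 ≤ k ∧ k ≤ n ∧ 1 ≤ j ∧ j ≤ k - 1 ∧
        TofP n P 2 j (k - 1) = 2 ∧ TofP n P 2 (j + 1) k = 3) ↔
    (∃ x y, x + y + 1 < n ∧ P 2 x y = 2 ∧ P 2 (x+1) y = 3) := by
  constructor
  · rintro ⟨j, k, hk2, hkn, hj1, hjk, hA, hC⟩
    rw [TofP2 n P j (k-1) hj1 (by omega) (by omega)] at hA
    rw [TofP2 n P (j+1) k (by omega) (by omega) hkn] at hC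
    refine ⟨j-1, k-1-j, by omega, hA, ?_⟩
    rw [show j-1+1 = j+1-1 from by omega, show k-1-j = k-(j+1) from by omega]; exact hC
  · rintro ⟨x, y, h, ha, hc⟩
    refine ⟨x+1, x+y+2, by omega, by omega, by omega, by omega, ?_, ?_⟩
    · rw [TofP2 n P (x+1) (x+y+2-1) (by omega) (by omega) (by omega),
        show x+1-1 = x from by omega, show x+y+2-1-(x+1) = y from by omega]
      exact ha
    · rw [TofP2 n P (x+1+1) (x+y+2) (by omega) (by omega) (by omega),
        show x+1+1-1 = x+1 from by omega, show x+y+2-(x+1+1) = y from by omega]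
      exact hc

private lemma tof_d2 (n : ℕ) (P : ℕ → ℕ → ℕ → ℕ) :
    (∃ j k, 2 ≤ k ∧ k ≤ n ∧ 1 ≤ j ∧ j ≤ k - 1 ∧
        TofP n P 2 j (k - 1) = 3 ∧ TofP n P 2 j k = 1 ∧ TofP n P 2 (j + 1) k = 3) ↔
    (∃ x y, x + y + 1 < n ∧ P 2 x y = 3 ∧ P 2 x (y+1) = 1 ∧ P 2 (x+1) y = 3) := by
  constructor
  · rintro ⟨j, k, hk2, hkn, hj1, hjk, hA, hB, hC⟩
    rw [TofP2 n P j (k-1) hj1 (by omega) (by omega)] at hA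
    rw [TofP2 n P j k hj1 (by omega) hkn] at hB
    rw [TofP2 n P (j+1) k (by omega) (by omega) hkn] at hC
    refine ⟨j-1, k-1-j, by omega, hA, ?_, ?_⟩
    · rw [show k-1-j+1 = k-j from by omega]; exact hB
    · rw [show j-1+1 = j+1-1 from by omega, show k-1-j = k-(j+1) from by omega]; exact hC
  · rintro ⟨x, y, h, ha, hb, hc⟩
    refine ⟨x+1, x+y+2, by omega, by omega, by omega, by omega, ?_, ?_, ?_⟩
    · rw [TofP2 n P (x+1) (x+y+2-1) (by omega) (by omega) (by omega),
        show x+1-1 = x from by omega, show x+y+2-1-(x+1) = y from by omega]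
      exact ha
    · rw [TofP2 n P (x+1) (x+y+2) (by omega) (by omega) (by omega),
        show x+1-1 = x from by omega, show x+y+2-(x+1) = y+1 from by omega]
      exact hb
    · rw [TofP2 n P (x+1+1) (x+y+2) (by omega) (by omega) (by omega),
        show x+1+1-1 = x+1 from by omega, show x+y+2-(x+1+1) = y from by omega]
      exact hc

/-- Avoiding the upward `1/2/3` `K`-piece (left edge `1`, right edge `3`, bottom
edge `2`) is equivalent to the pattern avoidance conditions (c) and (d) in the middle
triangle `T^(2)` of `T = 𝒯(P)`. -/
theorem avoid_up_K_piece (n : ℕ) (hn : 1 ≤ n) (lam : ℕ → ℕ → ℕ)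
    (h1 : ∀ j, 1 ≤ j → j ≤ n → lam 1 j = 2 ∨ lam 1 j = 3)
    (h2 : ∀ j, 1 ≤ j → j ≤ n → lam 2 j ∈ Finset.Icc 1 3)
    (h3 : ∀ j, 1 ≤ j → j ≤ n → lam 3 j = 1 ∨ lam 3 j = 3)
    (P : ℕ → ℕ → ℕ → ℕ) (hP : IsPuzzle123 n P)
    (hbd : ∀ j, 1 ≤ j → j ≤ n →
        P 1 0 (j - 1) = lam 1 j ∧ P 2 (j - 1) (n - j) = lam 2 j ∧
        P 0 (n - j) 0 = lam 3 j) :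
    ((¬ ∃ x y, x + y < n ∧ P 1 x y = 1 ∧ P 2 x y = 3 ∧ P 0 x y = 2) ↔
      ((¬ ∃ j k, 2 ≤ k ∧ k ≤ n ∧ 1 ≤ j ∧ j ≤ k - 1 ∧
          TofP n P 2 j (k - 1) = 1 ∧ TofP n P 2 j k = 3) ∧
       (¬ ∃ j k, 2 ≤ k ∧ k ≤ n ∧ 1 ≤ j ∧ j ≤ k - 1 ∧
          TofP n P 2 j (k - 1) = 3 ∧ TofP n P 2 j k = 3 ∧ TofP n P 2 (j + 1) k = 2))) ∧
    ((¬ ∃ x y, x + y < n ∧ P 1 x y = 1 ∧ P 2 x y = 3 ∧ P 0 x y = 2) ↔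
      ((¬ ∃ j k, 2 ≤ k ∧ k ≤ n ∧ 1 ≤ j ∧ j ≤ k - 1 ∧
          TofP n P 2 j (k - 1) = 2 ∧ TofP n P 2 (j + 1) k = 3) ∧
       (¬ ∃ j k, 2 ≤ k ∧ k ≤ n ∧ 1 ≤ j ∧ j ≤ k - 1 ∧
          TofP n P 2 j (k - 1) = 3 ∧ TofP n P 2 j k = 1 ∧ TofP n P 2 (j + 1) k = 3))) := by
  have hBadC : (∃ x y, x + y < n ∧ P 1 x y = 1 ∧ P 2 x y = 3 ∧ P 0 x y = 2) ↔
      ((∃ x y, x + y + 1 < n ∧ P 2 x y = 1 ∧ P 2 x (y+1) = 3) ∨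
       (∃ x y, x + y + 1 < n ∧ P 2 x y = 3 ∧ P 2 x (y+1) = 3 ∧ P 2 (x+1) y = 2)) := by
    constructor
    · rintro ⟨x, y, h, hL, hR, hB⟩
      obtain ⟨a, b, hab, hc | hc⟩ := bad_to_C n P hP lam h3 hbd y x h hL hR hB
      · exact Or.inl ⟨a, b, hab, hc⟩
      · exact Or.inr ⟨a, b, hab, hc⟩
    · rintro (⟨x, y, h, hc⟩ | ⟨x, y, h, hc⟩)
      · exact c_to_bad n P hP x y h (Or.inl hc)
      · exact c_to_bad n P hP x y h (Or.inr hc)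
  have hBadD : (∃ x y, x + y < n ∧ P 1 x y = 1 ∧ P 2 x y = 3 ∧ P 0 x y = 2) ↔
      ((∃ x y, x + y + 1 < n ∧ P 2 x y = 2 ∧ P 2 (x+1) y = 3) ∨
       (∃ x y, x + y + 1 < n ∧ P 2 x y = 3 ∧ P 2 x (y+1) = 1 ∧ P 2 (x+1) y = 3)) := by
    constructor
    · rintro ⟨x, y, h, hL, hR, hB⟩
      obtain ⟨a, b, hab, hc | hc⟩ := bad_to_D n P hP lam h1 hbd x y h hL hR hB
      · exact Or.inl ⟨a, b, hab, hc⟩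
      · exact Or.inr ⟨a, b, hab, hc⟩
    · rintro (⟨x, y, h, hc⟩ | ⟨x, y, h, hc⟩)
      · exact d_to_bad n P hP x y h (Or.inl hc)
      · exact d_to_bad n P hP x y h (Or.inr hc)
  constructor
  · rw [tof_c1, tof_c2, hBadC, not_or]
  · rw [tof_d1, tof_d2, hBadD, not_or]
end
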